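/- arXiv:1705.05709 — 10 statements merged into one kernel-verified Lean document; each statement's English description precedes it below -/
import Mathlib

section
/- Let n ≥ 1 and let S be a subsemigroup of the full transformation monoid T_n. Suppose X is a generating set for S such that rank(xyz) < rank(y) for all x, y, z ∈ X (where xyz denotes the composite: first apply x, then y, then z). Then S is ubiquitous, i.e., every two irredundant generating sets of S have the same cardinality (and hence every irredundant generating set is a smallest generating set). -/
/-- The rank of a transformation of `Fin n`: the size of its image. -/
def trank {n : ℕ} (f : Fin n → Fin n) : ℕ := (Finset.univ.image f).card

/-- The subsemigroup (of the full transformation monoid, with composition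
written left to right, so the product `f * g` is `g ∘ f`) generated by a set
of transformations. -/
inductive SgClosure {α : Type*} (X : Set (α → α)) : (α → α) → Prop
  | base {f : α → α} : f ∈ X → SgClosure X f
  | comp {f g : α → α} : SgClosure X f → SgClosure X g → SgClosure X (g ∘ f)

section Generic

variable {α : Type*}

lemma sg_le {X T : Set (α → α)} (h : ∀ g ∈ T, SgClosure X g) :
    ∀ {f}, SgClosure T f → SgClosure X f := by
  intro f hf
  induction hf with
  | base hb => exact h _ hb
  | comp hf hg ihf ihg => exact .comp ihf ihg

lemma sg_mono {X T : Set (α → α)} (h : X ⊆ T) {f} (hf : SgClosure X f) :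
    SgClosure T f :=
  sg_le (fun g hg => .base (h hg)) hf

lemma sg_last {X : Set (α → α)} {f} (hf : SgClosure X f) :
    ∃ u f₀, u ∈ X ∧ (f₀ = id ∨ SgClosure X f₀) ∧ f = u ∘ f₀ := by
  induction hf with
  | @base g hb => exact ⟨g, id, hb, .inl rfl, rfl⟩
  | @comp f g hf hg ihf ihg =>
    obtain ⟨u, g₀, hu, hg₀, rfl⟩ := ihg
    rcases hg₀ with rfl | hg₀
    · exact ⟨u, f, hu, .inr hf, rfl⟩
    · exact ⟨u, g₀ ∘ f, hu, .inr (.comp hf hg₀), rfl⟩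

lemma sg_first {X : Set (α → α)} {f} (hf : SgClosure X f) :
    ∃ v f₀, v ∈ X ∧ (f₀ = id ∨ SgClosure X f₀) ∧ f = f₀ ∘ v := by
  induction hf with
  | @base g hb => exact ⟨g, id, hb, .inl rfl, rfl⟩
  | @comp f g hf hg ihf ihg =>
    obtain ⟨v, f₀, hv, hf₀, rfl⟩ := ihf
    rcases hf₀ with rfl | hf₀
    · exact ⟨v, g, hv, .inr hg, rfl⟩
    · exact ⟨v, g ∘ f₀, hv, .inr (.comp hf₀ hg), rfl⟩

lemma gencompL (T : Set (α → α)) {a t : α → α}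
    (ha : a = id ∨ SgClosure T a) (ht : SgClosure T t) : SgClosure T (a ∘ t) := by
  rcases ha with rfl | ha
  · exact ht
  · exact .comp ht ha

lemma gencompR (T : Set (α → α)) {t a : α → α}
    (ht : SgClosure T t) (ha : a = id ∨ SgClosure T a) : SgClosure T (t ∘ a) := by
  rcases ha with rfl | ha
  · exact ht
  · exact .comp ha ht

lemma genS1comp (T : Set (α → α)) {a b : α → α}
    (ha : a = id ∨ SgClosure T a) (hb : b = id ∨ SgClosure T b) :
    b ∘ a = id ∨ SgClosure T (b ∘ a) := by
  rcases ha with rfl | ha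
  · rcases hb with rfl | hb
    · exact .inl rfl
    · exact .inr hb
  · rcases hb with rfl | hb
    · exact .inr ha
    · exact .inr (.comp ha hb)

end Generic

lemma trank_mid {n : ℕ} (a w b : Fin n → Fin n) : trank (b ∘ w ∘ a) ≤ trank w := by
  unfold trank
  have e1 : Finset.univ.image (b ∘ w ∘ a) = (Finset.univ.image (w ∘ a)).image b := by
    rw [Finset.image_image]
  have e2 : Finset.univ.image (w ∘ a) = (Finset.univ.image a).image w := by
    rw [Finset.image_image]
  rw [e1, e2]
  exact le_trans Finset.card_image_le
    (Finset.card_le_card (Finset.image_subset_image (Finset.subset_univ _)))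

lemma trank_sandwich {n : ℕ} {X : Set (Fin n → Fin n)}
    (hrank : ∀ x ∈ X, ∀ y ∈ X, ∀ z ∈ X, trank (z ∘ y ∘ x) < trank y)
    {x f h : Fin n → Fin n} (hx : x ∈ X) (hf : SgClosure X f) (hh : SgClosure X h) :
    trank (h ∘ x ∘ f) < trank x := by
  obtain ⟨u, f₀, hu, hf₀, rfl⟩ := sg_last hf
  obtain ⟨v, h₀, hv, hh₀, rfl⟩ := sg_first hh
  have key : trank (v ∘ x ∘ u) < trank x := hrank u hu x hx v hv
  have e : (h₀ ∘ v) ∘ x ∘ (u ∘ f₀) = h₀ ∘ (v ∘ x ∘ u) ∘ f₀ := rfl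
  rw [e]
  exact lt_of_le_of_lt (trank_mid f₀ (v ∘ x ∘ u) h₀) key

lemma exchange {n : ℕ} {X U Z : Set (Fin n → Fin n)}
    (hrank : ∀ x ∈ X, ∀ y ∈ X, ∀ z ∈ X, trank (z ∘ y ∘ x) < trank y)
    (hUX : ∀ f, SgClosure U f ↔ SgClosure X f)
    (hZX : ∀ f, SgClosure Z f ↔ SgClosure X f)
    {y : Fin n → Fin n} (hyU : y ∈ U) (hyW : ¬ SgClosure (U \ {y}) y) :
    ∃ z ∈ Z, ∀ f, SgClosure ((U \ {y}) ∪ {z}) f ↔ SgClosure U f := by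
  have main : ∀ z ∈ Z, SgClosure ((U \ {y}) ∪ {z}) y →
      (∀ f, SgClosure ((U \ {y}) ∪ {z}) f ↔ SgClosure U f) := by
    intro z hz hyV f
    constructor
    · intro hf
      refine sg_le ?_ hf
      intro g hg
      rcases hg with hg | hg
      · exact .base hg.1
      · rcases hg with rfl
        exact (hUX _).mpr ((hZX _).mp (.base hz))
    · intro hf
      refine sg_le ?_ hf
      intro g hg
      by_cases hgy : g = y
      · subst hgy; exact hyV
      · exact .base (Or.inl ⟨hg, hgy⟩)
  suffices hsuff : ∃ z ∈ Z, SgClosure ((U \ {y}) ∪ {z}) y by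
    obtain ⟨z, hz, hyV⟩ := hsuff
    exact ⟨z, hz, main z hz hyV⟩
  by_contra hcon
  push_neg at hcon
  have hWU : ∀ {t}, SgClosure (U \ {y}) t → SgClosure U t :=
    fun ht => sg_mono Set.diff_subset ht
  have hyX : SgClosure X y := (hUX y).mp (.base hyU)
  -- dichotomy for U-words
  have lemA : ∀ g, SgClosure U g → SgClosure (U \ {y}) g ∨
      ∃ p q, (p = id ∨ SgClosure U p) ∧ (q = id ∨ SgClosure U q) ∧ g = q ∘ y ∘ p := by
    intro g hg
    induction hg with
    | @base g hb =>
      by_cases hgy : g = y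
      · subst hgy; exact .inr ⟨id, id, .inl rfl, .inl rfl, rfl⟩
      · exact .inl (.base ⟨hb, hgy⟩)
    | @comp f g hf hg ihf ihg =>
      rcases ihf with hfW | ⟨p, q, hp, hq, rfl⟩
      · rcases ihg with hgW | ⟨p, q, hp, hq, rfl⟩
        · exact .inl (.comp hfW hgW)
        · exact .inr ⟨p ∘ f, q, .inr (gencompL U hp (hWU hfW)), hq, rfl⟩
      · exact .inr ⟨p, g ∘ q, hp, .inr (gencompR U hg hq), rfl⟩
  -- tightness
  have lemB : ∀ f h, SgClosure U f → SgClosure U h → trank (h ∘ y ∘ f) < trank y := by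
    have lemQ : ∀ g, SgClosure X g → SgClosure (U \ {y}) g ∨
        ∃ x a b, x ∈ X ∧ (a = id ∨ SgClosure X a) ∧ (b = id ∨ SgClosure X b) ∧
          g = b ∘ x ∘ a ∧ trank x ≤ trank y := by
      intro g hg
      induction hg with
      | @base g hb =>
        by_cases hgW : SgClosure (U \ {y}) g
        · exact .inl hgW
        · rcases lemA g ((hUX g).mpr (.base hb)) with h | ⟨p, q, hp, hq, hge⟩
          · exact absurd h hgW
          · refine .inr ⟨g, id, id, hb, .inl rfl, .inl rfl, rfl, ?_⟩
            rw [hge]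
            exact trank_mid p y q
      | @comp f g hf hg ihf ihg =>
        rcases ihf with hfW | ⟨x, a, b, hx, ha, hb, rfl, hle⟩
        · rcases ihg with hgW | ⟨x, a, b, hx, ha, hb, rfl, hle⟩
          · exact .inl (.comp hfW hgW)
          · exact .inr ⟨x, a ∘ f, b, hx,
              .inr (gencompL X ha ((hUX f).mp (hWU hfW))), hb, rfl, hle⟩
        · exact .inr ⟨x, a, g ∘ b, hx, ha, .inr (gencompR X hg hb), rfl, hle⟩
    intro f h hf hh
    rcases lemQ y hyX with hW | ⟨x, a, b, hx, ha, hb, hey, hle⟩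
    · exact absurd hW hyW
    · have h1 : h ∘ y ∘ f = (h ∘ b) ∘ x ∘ (a ∘ f) := by rw [hey]; rfl
      rw [h1]
      have hfX : SgClosure X (a ∘ f) := gencompL X ha ((hUX f).mp hf)
      have hhX : SgClosure X (h ∘ b) := gencompR X ((hUX h).mp hh) hb
      exact lt_of_lt_of_le (trank_sandwich hrank hx hfX hhX) hle
  -- main induction over Z-words
  have lemG : ∀ g, SgClosure Z g →
      SgClosure (U \ {y}) g ∨
      (∃ z p q, z ∈ Z ∧ ¬ SgClosure (U \ {y}) z ∧
        (p = id ∨ SgClosure (U \ {y}) p) ∧ (q = id ∨ SgClosure (U \ {y}) q) ∧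
        g = q ∘ z ∘ p) ∨
      (∃ P M Q, (P = id ∨ SgClosure U P) ∧ (M = id ∨ SgClosure U M) ∧
        (Q = id ∨ SgClosure U Q) ∧ g = Q ∘ y ∘ M ∘ y ∘ P) := by
    intro g hg
    induction hg with
    | @base g hb =>
      by_cases hW : SgClosure (U \ {y}) g
      · exact .inl hW
      · exact .inr (.inl ⟨g, id, id, hb, hW, .inl rfl, .inl rfl, rfl⟩)
    | @comp f g hf hg ihf ihg =>
      have hfU : SgClosure U f := (hUX f).mpr ((hZX f).mp hf)
      have hgU : SgClosure U g := (hUX g).mpr ((hZX g).mp hg)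
      rcases ihf with hfW | ⟨z₁, p₁, q₁, hz₁, hzW₁, hp₁, hq₁, rfl⟩ |
          ⟨P, M, Q, hP, hM, hQ, rfl⟩
      · rcases ihg with hgW | ⟨z, p, q, hz, hzW, hp, hq, rfl⟩ |
            ⟨P, M, Q, hP, hM, hQ, rfl⟩
        · exact .inl (.comp hfW hgW)
        · exact .inr (.inl ⟨z, p ∘ f, q, hz, hzW,
            .inr (gencompL (U \ {y}) hp hfW), hq, rfl⟩)
        · exact .inr (.inr ⟨P ∘ f, M, Q, genS1comp U (.inr hfU) hP, hM, hQ, rfl⟩)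
      · rcases ihg with hgW | ⟨z₂, p₂, q₂, hz₂, hzW₂, hp₂, hq₂, rfl⟩ |
            ⟨P, M, Q, hP, hM, hQ, rfl⟩
        · exact .inr (.inl ⟨z₁, p₁, g ∘ q₁, hz₁, hzW₁, hp₁,
            .inr (gencompR (U \ {y}) hgW hq₁), rfl⟩)
        · -- one ∘ one → two
          have hz₁U : SgClosure U z₁ := (hUX z₁).mpr ((hZX z₁).mp (.base hz₁))
          have hz₂U : SgClosure U z₂ := (hUX z₂).mpr ((hZX z₂).mp (.base hz₂))
          rcases lemA z₁ hz₁U with h | ⟨P₁, Q₁, hP₁, hQ₁, rfl⟩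
          · exact absurd h hzW₁
          rcases lemA z₂ hz₂U with h | ⟨P₂, Q₂, hP₂, hQ₂, rfl⟩
          · exact absurd h hzW₂
          have hp₁' : p₁ = id ∨ SgClosure U p₁ := hp₁.imp id (fun hw => hWU hw)
          have hq₁' : q₁ = id ∨ SgClosure U q₁ := hq₁.imp id (fun hw => hWU hw)
          have hp₂' : p₂ = id ∨ SgClosure U p₂ := hp₂.imp id (fun hw => hWU hw)
          have hq₂' : q₂ = id ∨ SgClosure U q₂ := hq₂.imp id (fun hw => hWU hw)
          refine .inr (.inr ⟨P₁ ∘ p₁, P₂ ∘ p₂ ∘ q₁ ∘ Q₁, q₂ ∘ Q₂, ?_, ?_, ?_, rfl⟩)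
          · exact genS1comp U hp₁' hP₁
          · exact genS1comp U (genS1comp U (genS1comp U hQ₁ hq₁') hp₂') hP₂
          · exact genS1comp U hQ₂ hq₂'
        · exact .inr (.inr ⟨P ∘ (q₁ ∘ z₁ ∘ p₁), M, Q,
            genS1comp U (.inr hfU) hP, hM, hQ, rfl⟩)
      · exact .inr (.inr ⟨P, M, g ∘ Q, hP, hM, genS1comp U hQ (.inr hgU), rfl⟩)
  rcases lemG y ((hZX y).mpr hyX) with hW | ⟨z, p, q, hz, hzW, hp, hq, hey⟩ |
      ⟨P, M, Q, hP, hM, hQ, hey⟩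
  · exact hyW hW
  · -- one-form : y is generated from (U \ {y}) ∪ {z}
    apply hcon z hz
    have hzV : SgClosure ((U \ {y}) ∪ {z}) z := .base (Or.inr rfl)
    have step1 : SgClosure ((U \ {y}) ∪ {z}) (z ∘ p) := by
      rcases hp with rfl | hp
      · exact hzV
      · exact .comp (sg_mono Set.subset_union_left hp) hzV
    have step2 : SgClosure ((U \ {y}) ∪ {z}) (q ∘ z ∘ p) := by
      rcases hq with rfl | hq
      · exact step1
      · exact .comp step1 (sg_mono Set.subset_union_left hq)
    have hres : SgClosure (U \ {y} ∪ {z}) (q ∘ z ∘ p) := step2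
    rwa [← hey] at hres
  · -- two-form : contradiction with tightness
    have hyU' : SgClosure U y := .base hyU
    obtain ⟨f, h, hfU, hhU, hfe⟩ :
        ∃ f h, SgClosure U f ∧ SgClosure U h ∧ y = h ∘ y ∘ f := by
      rcases hQ with rfl | hQ
      · rcases hP with rfl | hP
        · -- y = y ∘ M ∘ y
          have e : y = y ∘ M ∘ y := by simpa using hey
          refine ⟨M ∘ y, y ∘ M, gencompL U hM hyU', gencompR U hyU' hM, ?_⟩
          have e' : ∀ t, y t = y (M (y t)) := fun t => congrFun e t
          funext t
          show y t = y (M (y (M (y t))))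
          rw [← e' (M (y t)), ← e' t]
        · -- y = y ∘ M ∘ y ∘ P
          have e : y = y ∘ M ∘ y ∘ P := by simpa using hey
          exact ⟨P, y ∘ M, hP, gencompR U hyU' hM, e⟩
      · exact ⟨M ∘ y ∘ P, Q, gencompL U hM (gencompR U hyU' hP), hQ, hey⟩
    have hlt := lemB f h hfU hhU
    rw [← hfe] at hlt
    exact absurd hlt (lt_irrefl _)

lemma steinitz {n : ℕ} {X Y₂ : Set (Fin n → Fin n)}
    (hrank : ∀ x ∈ X, ∀ y ∈ X, ∀ z ∈ X, trank (z ∘ y ∘ x) < trank y)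
    (hY₂ : ∀ f, SgClosure Y₂ f ↔ SgClosure X f) :
    ∀ d (U : Set (Fin n → Fin n)), (U \ Y₂).ncard = d →
      (∀ f, SgClosure U f ↔ SgClosure X f) →
      ∃ U', U' ⊆ Y₂ ∧ (∀ f, SgClosure U' f ↔ SgClosure X f) ∧ U'.ncard ≤ U.ncard := by
  intro d
  induction d with
  | zero =>
    intro U hU0 hUX
    have hsub : U ⊆ Y₂ := by
      have h0 : U \ Y₂ = ∅ := (Set.ncard_eq_zero (Set.toFinite _)).mp hU0
      rwa [Set.diff_eq_empty] at h0
    exact ⟨U, hsub, hUX, le_rfl⟩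
  | succ k ih =>
    intro U hUk hUX
    have hne : (U \ Y₂).Nonempty := by
      rw [Set.nonempty_iff_ne_empty]
      intro h
      rw [h] at hUk
      simp [Set.ncard_empty] at hUk
    obtain ⟨y, hy⟩ := hne
    have hyU : y ∈ U := hy.1
    have hkey : ((U \ {y}) \ Y₂).ncard = k := by
      have e : (U \ {y}) \ Y₂ = (U \ Y₂) \ {y} := by rw [Set.diff_diff_comm]
      rw [e, Set.ncard_diff_singleton_of_mem hy, hUk]
      omega
    by_cases hred : ∀ f, SgClosure (U \ {y}) f ↔ SgClosure X f
    · obtain ⟨U', h1, h2, h3⟩ := ih (U \ {y}) hkey hred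
      exact ⟨U', h1, h2, h3.trans (Set.ncard_le_ncard Set.diff_subset (Set.toFinite _))⟩
    · have hyW : ¬ SgClosure (U \ {y}) y := by
        intro hW
        apply hred
        intro f
        constructor
        · intro hf
          exact (hUX f).mp (sg_mono Set.diff_subset hf)
        · intro hf
          refine sg_le ?_ ((hUX f).mpr hf)
          intro g hg
          by_cases hgy : g = y
          · subst hgy; exact hW
          · exact .base ⟨hg, hgy⟩
      obtain ⟨z, hzY₂, hzV⟩ := exchange hrank hUX hY₂ hyU hyW
      have hU₂X : ∀ f, SgClosure ((U \ {y}) ∪ {z}) f ↔ SgClosure X f :=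
        fun f => (hzV f).trans (hUX f)
      have hU₂k : (((U \ {y}) ∪ {z}) \ Y₂).ncard = k := by
        have e : ((U \ {y}) ∪ {z}) \ Y₂ = (U \ {y}) \ Y₂ := by
          rw [Set.union_diff_distrib]
          have e2 : ({z} : Set (Fin n → Fin n)) \ Y₂ = ∅ :=
            Set.diff_eq_empty.mpr (Set.singleton_subset_iff.mpr hzY₂)
          rw [e2, Set.union_empty]
        rw [e, hkey]
      obtain ⟨U', h1, h2, h3⟩ := ih ((U \ {y}) ∪ {z}) hU₂k hU₂X
      refine ⟨U', h1, h2, h3.trans ?_⟩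
      calc ((U \ {y}) ∪ {z}).ncard = (insert z (U \ {y})).ncard := by
            rw [Set.union_singleton]
        _ ≤ (U \ {y}).ncard + 1 := Set.ncard_insert_le _ _
        _ ≤ U.ncard := le_of_eq (Set.ncard_diff_singleton_add_one hyU)

/-- If `S ≤ T_n` has a generating set `X` with `rank (xyz) < rank y` for all
`x, y, z ∈ X` (products composed left to right), then `S` is ubiquitous: any
two irredundant generating sets of `S` have the same cardinality. -/
theorem stmt_0 {n : ℕ} (hn : 1 ≤ n) (S : Set (Fin n → Fin n))
    (hS : ∀ f ∈ S, ∀ g ∈ S, g ∘ f ∈ S)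
    (X : Set (Fin n → Fin n)) (hXgen : {f | SgClosure X f} = S)
    (hrank : ∀ x ∈ X, ∀ y ∈ X, ∀ z ∈ X, trank (z ∘ y ∘ x) < trank y)
    (Y₁ Y₂ : Set (Fin n → Fin n))
    (hY₁gen : {f | SgClosure Y₁ f} = S)
    (hY₁irr : ∀ Z, Z ⊂ Y₁ → {f | SgClosure Z f} ≠ S)
    (hY₂gen : {f | SgClosure Y₂ f} = S)
    (hY₂irr : ∀ Z, Z ⊂ Y₂ → {f | SgClosure Z f} ≠ S) :
    Y₁.ncard = Y₂.ncard := by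
  subst hXgen
  have h1 : ∀ f, SgClosure Y₁ f ↔ SgClosure X f := fun f => Set.ext_iff.mp hY₁gen f
  have h2 : ∀ f, SgClosure Y₂ f ↔ SgClosure X f := fun f => Set.ext_iff.mp hY₂gen f
  have key : ∀ (A B : Set (Fin n → Fin n)),
      (∀ f, SgClosure A f ↔ SgClosure X f) →
      (∀ f, SgClosure B f ↔ SgClosure X f) →
      (∀ Z, Z ⊂ B → {f | SgClosure Z f} ≠ {f | SgClosure X f}) →
      B.ncard ≤ A.ncard := by
    intro A B hA hB hBirr
    obtain ⟨U', hsub, hgen, hle⟩ := steinitz hrank hB (A \ B).ncard A rfl hA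
    have hUB : U' = B := by
      by_contra hne
      exact hBirr U' (HasSubset.Subset.ssubset_of_ne hsub hne)
        (Set.ext fun f => hgen f)
    rw [← hUB]
    exact hle
  exact le_antisymm (key Y₂ Y₁ h2 h1 hY₁irr) (key Y₁ Y₂ h1 h2 hY₂irr)
end

section
/- Let n, r ∈ ℕ with 1 ≤ r ≤ n. Then the sum, over all partitions {A_1,…,A_r} of {1,…,n} into r nonempty parts, of the product |A_1|·|A_2|⋯|A_r| equals C(n,r)·r^{n−r}, where C(n,r) is the binomial coefficient. -/
open scoped Classical

/-- `𝒜` is a partition of (all of) `α` into `r` nonempty parts. -/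
def isPartitionInto {α : Type*} (𝒜 : Finset (Finset α)) (r : ℕ) : Prop :=
  𝒜.card = r ∧ (∀ A ∈ 𝒜, A.Nonempty) ∧
    (∀ A ∈ 𝒜, ∀ B ∈ 𝒜, A ≠ B → Disjoint A B) ∧ (∀ x : α, ∃ A ∈ 𝒜, x ∈ A)

namespace Stmt3Aux

open Finset

variable {n : ℕ}

/-- `g` is constant on each part of `𝒜` and maps each part into itself. -/
def Compat (𝒜 : Finset (Finset (Fin n))) (g : Fin n → Fin n) : Prop :=
  (∀ A ∈ 𝒜, ∀ x ∈ A, g x ∈ A) ∧ (∀ A ∈ 𝒜, ∀ x ∈ A, ∀ y ∈ A, g x = g y)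

lemma existsUnique_part {𝒜 : Finset (Finset (Fin n))} {r : ℕ}
    (h : isPartitionInto 𝒜 r) (x : Fin n) : ∃! A, A ∈ 𝒜 ∧ x ∈ A := by
  obtain ⟨A, hA, hx⟩ := h.2.2.2 x
  refine ⟨A, ⟨hA, hx⟩, ?_⟩
  rintro B ⟨hB, hxB⟩
  by_contra hne
  exact (Finset.disjoint_left.mp (h.2.2.1 B hB A hA hne) hxB) hx

noncomputable def partOf {𝒜 : Finset (Finset (Fin n))} {r : ℕ}
    (h : isPartitionInto 𝒜 r) (x : Fin n) : Finset (Fin n) :=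
  Finset.choose (x ∈ ·) 𝒜 (existsUnique_part h x)

lemma partOf_mem {𝒜 : Finset (Finset (Fin n))} {r : ℕ}
    (h : isPartitionInto 𝒜 r) (x : Fin n) : partOf h x ∈ 𝒜 :=
  Finset.choose_mem _ _ _

lemma mem_partOf {𝒜 : Finset (Finset (Fin n))} {r : ℕ}
    (h : isPartitionInto 𝒜 r) (x : Fin n) : x ∈ partOf h x := by
  unfold partOf
  exact Finset.choose_property (x ∈ ·) 𝒜 (existsUnique_part h x)

lemma partOf_eq {𝒜 : Finset (Finset (Fin n))} {r : ℕ}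
    (h : isPartitionInto 𝒜 r) {A : Finset (Fin n)} {x : Fin n}
    (hA : A ∈ 𝒜) (hx : x ∈ A) : partOf h x = A :=
  ((existsUnique_part h x).unique ⟨partOf_mem h x, mem_partOf h x⟩ ⟨hA, hx⟩)

lemma part_eq {𝒜 : Finset (Finset (Fin n))} {r : ℕ} (h : isPartitionInto 𝒜 r)
    {g : Fin n → Fin n} (hg : Compat 𝒜 g) {A : Finset (Fin n)} (hA : A ∈ 𝒜)
    {x₀ : Fin n} (hx : x₀ ∈ A) :
    A = univ.filter (fun y => g y = g x₀) := by
  ext y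
  simp only [mem_filter, mem_univ, true_and]
  constructor
  · exact fun hy => hg.2 A hA y hy x₀ hx
  · intro hy
    obtain ⟨B, hB, hyB⟩ := h.2.2.2 y
    have hgyB : g y ∈ B := hg.1 B hB y hyB
    have hgxA : g x₀ ∈ A := hg.1 A hA x₀ hx
    have hAB : A = B := by
      by_contra hne
      exact (Finset.disjoint_left.mp (h.2.2.1 A hA B hB hne) hgxA) (hy ▸ hgyB)
    exact hAB ▸ hyB

lemma partition_unique {𝒜 ℬ : Finset (Finset (Fin n))} {r : ℕ}
    (h𝒜 : isPartitionInto 𝒜 r) (hℬ : isPartitionInto ℬ r) {g : Fin n → Fin n}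
    (hg𝒜 : Compat 𝒜 g) (hgℬ : Compat ℬ g) : 𝒜 = ℬ := by
  have key : ∀ (𝒞 𝒟 : Finset (Finset (Fin n))), isPartitionInto 𝒞 r →
      isPartitionInto 𝒟 r → Compat 𝒞 g → Compat 𝒟 g → 𝒞 ⊆ 𝒟 := by
    intro 𝒞 𝒟 hc hd c1 c2 A hA
    obtain ⟨x₀, hx₀⟩ := hc.2.1 A hA
    obtain ⟨B, hB, hx₀B⟩ := hd.2.2.2 x₀
    have : A = B := (part_eq hc c1 hA hx₀).trans (part_eq hd c2 hB hx₀B).symm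
    exact this ▸ hB
  exact subset_antisymm (key _ _ h𝒜 hℬ hg𝒜 hgℬ) (key _ _ hℬ h𝒜 hgℬ hg𝒜)

lemma prod_card_eq {𝒜 : Finset (Finset (Fin n))} {r : ℕ}
    (h : isPartitionInto 𝒜 r) :
    ∏ A ∈ 𝒜, A.card = (univ.filter fun g : Fin n → Fin n => Compat 𝒜 g).card := by
  rw [← Finset.card_pi]
  refine Finset.card_bij (fun t ht => fun x => t (partOf h x) (partOf_mem h x))
    ?_ ?_ ?_
  · -- maps into the filter
    intro t ht
    have hmem := Finset.mem_pi.mp ht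
    refine mem_filter.mpr ⟨mem_univ _, ?_, ?_⟩
    · intro A hA x hx
      have e : partOf h x = A := partOf_eq h hA hx
      subst e
      exact hmem _ _
    · intro A hA x hx y hy
      have ex : partOf h x = A := partOf_eq h hA hx
      have ey : partOf h y = A := partOf_eq h hA hy
      have tcongr : ∀ (B C : Finset (Fin n)) (hB : B ∈ 𝒜) (hC : C ∈ 𝒜),
          B = C → t B hB = t C hC := by
        rintro B C hB hC rfl; rfl
      show t (partOf h x) (partOf_mem h x) = t (partOf h y) (partOf_mem h y)
      exact tcongr _ _ _ _ (ex.trans ey.symm)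
  · -- injective
    intro t₁ ht₁ t₂ ht₂ heq
    have tcongr : ∀ (t : (a : Finset (Fin n)) → a ∈ 𝒜 → Fin n)
        (B C : Finset (Fin n)) (hB : B ∈ 𝒜) (hC : C ∈ 𝒜),
        B = C → t B hB = t C hC := by
      rintro t B C hB hC rfl; rfl
    funext A hA
    have hx : t₁ A hA ∈ A := Finset.mem_pi.mp ht₁ A hA
    have e : partOf h (t₁ A hA) = A := partOf_eq h hA hx
    have hx2 : t₁ (partOf h (t₁ A hA)) (partOf_mem h (t₁ A hA))
        = t₂ (partOf h (t₁ A hA)) (partOf_mem h (t₁ A hA)) := congrFun heq (t₁ A hA)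
    calc t₁ A hA = t₁ (partOf h (t₁ A hA)) (partOf_mem h (t₁ A hA)) :=
          tcongr t₁ _ _ _ _ e.symm
      _ = t₂ (partOf h (t₁ A hA)) (partOf_mem h (t₁ A hA)) := hx2
      _ = t₂ A hA := tcongr t₂ _ _ _ _ e
  · -- surjective
    intro g hg
    have hgc : Compat 𝒜 g := (mem_filter.mp hg).2
    refine ⟨fun A hA => g (h.2.1 A hA).choose, ?_, ?_⟩
    · refine Finset.mem_pi.mpr ?_
      intro A hA
      exact hgc.1 A hA _ (h.2.1 A hA).choose_spec
    · funext x
      have hPm : partOf h x ∈ 𝒜 := partOf_mem h x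
      have hc : (h.2.1 (partOf h x) hPm).choose ∈ partOf h x :=
        (h.2.1 (partOf h x) hPm).choose_spec
      exact hgc.2 (partOf h x) hPm _ hc x (mem_partOf h x)

lemma compat_gives_S {𝒜 : Finset (Finset (Fin n))} {r : ℕ} {g : Fin n → Fin n}
    (h : isPartitionInto 𝒜 r) (hg : Compat 𝒜 g) :
    ∃ S : Finset (Fin n), S.card = r ∧ (∀ x, g x ∈ S) ∧ (∀ x ∈ S, g x = x) := by
  refine ⟨univ.image g, ?_, fun x => Finset.mem_image_of_mem g (mem_univ x), ?_⟩
  · have : 𝒜.card = (univ.image g).card := by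
      refine Finset.card_bij (fun A hA => g (h.2.1 A hA).choose) ?_ ?_ ?_
      · intro A hA
        exact Finset.mem_image_of_mem g (mem_univ _)
      · intro A hA B hB heq
        have hA1 : g (h.2.1 A hA).choose ∈ A := hg.1 A hA _ (h.2.1 A hA).choose_spec
        have hB1 : g (h.2.1 B hB).choose ∈ B := hg.1 B hB _ (h.2.1 B hB).choose_spec
        have heq' : g (h.2.1 A hA).choose = g (h.2.1 B hB).choose := heq
        rw [← heq'] at hB1
        by_contra hne
        exact (Finset.disjoint_left.mp (h.2.2.1 A hA B hB hne) hA1) hB1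
      · intro y hy
        obtain ⟨x, _, rfl⟩ := Finset.mem_image.mp hy
        obtain ⟨A, hA, hxA⟩ := h.2.2.2 x
        exact ⟨A, hA, hg.2 A hA _ (h.2.1 A hA).choose_spec x hxA⟩
    rw [← this, h.1]
  · intro x hx
    obtain ⟨y, _, rfl⟩ := Finset.mem_image.mp hx
    obtain ⟨B, hB, hyB⟩ := h.2.2.2 y
    have hgyB : g y ∈ B := hg.1 B hB y hyB
    exact hg.2 B hB _ hgyB y hyB

lemma S_gives_compat {r : ℕ} {S : Finset (Fin n)} (hS : S.card = r)
    {g : Fin n → Fin n} (hg1 : ∀ x, g x ∈ S) (hg2 : ∀ x ∈ S, g x = x) :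
    ∃ 𝒜, isPartitionInto 𝒜 r ∧ Compat 𝒜 g := by
  set 𝒜 := S.image (fun s => univ.filter (fun y => g y = s)) with h𝒜
  have hmemfib : ∀ s ∈ S, s ∈ univ.filter (fun y => g y = s) := by
    intro s hs
    exact mem_filter.mpr ⟨mem_univ _, hg2 s hs⟩
  have hinj : Set.InjOn (fun s => univ.filter (fun y => g y = s)) S := by
    intro s hs s' hs' heq
    have heq' : univ.filter (fun y => g y = s) = univ.filter (fun y => g y = s') := heq
    have hmem := hmemfib s hs
    rw [heq'] at hmem
    have hgs : g s = s' := (mem_filter.mp hmem).2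
    rw [hg2 s hs] at hgs
    exact hgs
  have hpart : isPartitionInto 𝒜 r := by
    refine ⟨?_, ?_, ?_, ?_⟩
    · rw [h𝒜, Finset.card_image_of_injOn hinj, hS]
    · intro A hA
      obtain ⟨s, hs, rfl⟩ := Finset.mem_image.mp hA
      exact ⟨s, hmemfib s hs⟩
    · intro A hA B hB hne
      obtain ⟨s, hs, rfl⟩ := Finset.mem_image.mp hA
      obtain ⟨s', hs', rfl⟩ := Finset.mem_image.mp hB
      rw [Finset.disjoint_left]
      intro y hy hy'
      have e1 : g y = s := (mem_filter.mp hy).2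
      have e2 : g y = s' := (mem_filter.mp hy').2
      exact hne (by rw [show s = s' from e1 ▸ e2])
    · intro x
      refine ⟨univ.filter (fun y => g y = g x), ?_, ?_⟩
      · exact Finset.mem_image_of_mem _ (hg1 x)
      · exact mem_filter.mpr ⟨mem_univ _, rfl⟩
  refine ⟨𝒜, hpart, ?_, ?_⟩
  · intro A hA x hx
    obtain ⟨s, hs, rfl⟩ := Finset.mem_image.mp hA
    have e : g x = s := (mem_filter.mp hx).2
    refine mem_filter.mpr ⟨mem_univ _, ?_⟩
    rw [e, hg2 s hs]
  · intro A hA x hx y hy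
    obtain ⟨s, hs, rfl⟩ := Finset.mem_image.mp hA
    rw [(mem_filter.mp hx).2, (mem_filter.mp hy).2]

lemma image_eq_of_id {S : Finset (Fin n)} {g : Fin n → Fin n}
    (hg1 : ∀ x, g x ∈ S) (hg2 : ∀ x ∈ S, g x = x) : S = univ.image g := by
  ext s
  constructor
  · intro hs
    exact Finset.mem_image.mpr ⟨s, mem_univ _, hg2 s hs⟩
  · intro hs
    obtain ⟨y, _, rfl⟩ := Finset.mem_image.mp hs
    exact hg1 y

lemma card_FS {r : ℕ} (_hS' : r ≤ n) {S : Finset (Fin n)} (hS : S.card = r) :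
    (univ.filter fun g : Fin n → Fin n =>
      (∀ x, g x ∈ S) ∧ ∀ x ∈ S, g x = x).card = r ^ (n - r) := by
  have hset : (univ.filter fun g : Fin n → Fin n =>
      (∀ x, g x ∈ S) ∧ ∀ x ∈ S, g x = x)
      = Fintype.piFinset (fun x => if x ∈ S then ({x} : Finset (Fin n)) else S) := by
    ext g
    simp only [mem_filter, mem_univ, true_and, Fintype.mem_piFinset]
    constructor
    · rintro ⟨hg1, hg2⟩ x
      by_cases hx : x ∈ S
      · simp [hx, hg2 x hx]
      · simp [hx, hg1 x]
    · intro hg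
      constructor
      · intro x
        have := hg x
        by_cases hx : x ∈ S
        · simp only [hx, if_true, Finset.mem_singleton] at this
          rw [this]; exact hx
        · simpa [hx] using this
      · intro x hx
        have := hg x
        simpa [hx] using this
  rw [hset, Fintype.card_piFinset]
  rw [← Finset.prod_mul_prod_compl S
    (fun x => (if x ∈ S then ({x} : Finset (Fin n)) else S).card)]
  have h1 : ∏ x ∈ S, (if x ∈ S then ({x} : Finset (Fin n)) else S).card = 1 :=
    Finset.prod_eq_one (fun x hx => by simp [hx])
  have h2 : ∏ x ∈ Sᶜ, (if x ∈ S then ({x} : Finset (Fin n)) else S).card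
      = r ^ (n - r) := by
    rw [Finset.prod_congr rfl
      (fun x hx => by simp [Finset.mem_compl.mp hx, hS] : ∀ x ∈ Sᶜ,
        (if x ∈ S then ({x} : Finset (Fin n)) else S).card = r)]
    rw [Finset.prod_const, Finset.card_compl, hS, Fintype.card_fin]
  rw [h1, h2, one_mul]

end Stmt3Aux

/-- The sum over all partitions of `{1, …, n}` into `r` nonempty parts of the
product of the sizes of the parts is `C(n, r) · r ^ (n - r)`. -/
theorem stmt_3 (n r : ℕ) (h1 : 1 ≤ r) (h2 : r ≤ n) :
    ∑ 𝒜 ∈ Finset.univ.filter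
        (fun 𝒜 : Finset (Finset (Fin n)) => isPartitionInto 𝒜 r),
      ∏ A ∈ 𝒜, A.card = n.choose r * r ^ (n - r) := by
  classical
  open Finset Stmt3Aux in
  calc ∑ 𝒜 ∈ Finset.univ.filter
        (fun 𝒜 : Finset (Finset (Fin n)) => isPartitionInto 𝒜 r),
      ∏ A ∈ 𝒜, A.card
      = ∑ 𝒜 ∈ Finset.univ.filter
          (fun 𝒜 : Finset (Finset (Fin n)) => isPartitionInto 𝒜 r),
        (Finset.univ.filter fun g : Fin n → Fin n => Compat 𝒜 g).card := by
        refine Finset.sum_congr rfl (fun 𝒜 h𝒜 => ?_)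
        exact prod_card_eq (Finset.mem_filter.mp h𝒜).2
    _ = ((Finset.univ.filter
          (fun 𝒜 : Finset (Finset (Fin n)) => isPartitionInto 𝒜 r)).biUnion
          (fun 𝒜 => Finset.univ.filter fun g : Fin n → Fin n => Compat 𝒜 g)).card := by
        rw [Finset.card_biUnion]
        intro 𝒜 h𝒜 ℬ hℬ hne
        rw [Function.onFun, Finset.disjoint_left]
        intro g hg𝒜 hgℬ
        exact hne (partition_unique (Finset.mem_filter.mp h𝒜).2
          (Finset.mem_filter.mp hℬ).2 (Finset.mem_filter.mp hg𝒜).2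
          (Finset.mem_filter.mp hgℬ).2)
    _ = ((Finset.powersetCard r (Finset.univ : Finset (Fin n))).biUnion
          (fun S => Finset.univ.filter fun g : Fin n → Fin n =>
            (∀ x, g x ∈ S) ∧ ∀ x ∈ S, g x = x)).card := by
        congr 1
        ext g
        simp only [Finset.mem_biUnion, Finset.mem_filter, Finset.mem_univ, true_and,
          Finset.mem_powersetCard_univ]
        constructor
        · rintro ⟨𝒜, h𝒜, hg⟩
          exact compat_gives_S h𝒜 hg
        · rintro ⟨S, hScard, hg1, hg2⟩
          exact S_gives_compat hScard hg1 hg2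
    _ = ∑ S ∈ Finset.powersetCard r (Finset.univ : Finset (Fin n)),
          (Finset.univ.filter fun g : Fin n → Fin n =>
            (∀ x, g x ∈ S) ∧ ∀ x ∈ S, g x = x).card := by
        rw [Finset.card_biUnion]
        intro S hS T hT hne
        rw [Function.onFun, Finset.disjoint_left]
        intro g hgS hgT
        obtain ⟨hgS1, hgS2⟩ := (Finset.mem_filter.mp hgS).2
        obtain ⟨hgT1, hgT2⟩ := (Finset.mem_filter.mp hgT).2
        exact hne ((image_eq_of_id hgS1 hgS2).trans (image_eq_of_id hgT1 hgT2).symm)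
    _ = ∑ S ∈ Finset.powersetCard r (Finset.univ : Finset (Fin n)), r ^ (n - r) := by
        refine Finset.sum_congr rfl (fun S hS => ?_)
        exact card_FS h2 (Finset.mem_powersetCard_univ.mp hS)
    _ = n.choose r * r ^ (n - r) := by
        rw [Finset.sum_const, Finset.card_powersetCard, Finset.card_univ,
          Fintype.card_fin, smul_eq_mul]
end

section
/- Let n, r ∈ ℕ with 1 ≤ r ≤ n. Then the number of idempotent transformations f ∈ T_n (those satisfying f∘f = f) of rank r equals C(n,r)·r^{n−r}. -/
/-- An idempotent fixes every element of its image. -/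
lemma idem_fix {n : ℕ} {f : Fin n → Fin n} (hf : f ∘ f = f) {y : Fin n}
    (hy : y ∈ Finset.univ.image f) : f y = y := by
  obtain ⟨x, -, rfl⟩ := Finset.mem_image.mp hy
  exact congrFun hf x

lemma img_eq {n : ℕ} (S : Finset (Fin n))
    (g : {x : Fin n // x ∉ S} → {y : Fin n // y ∈ S}) :
    Finset.univ.image (fun x => if h : x ∈ S then x else (g ⟨x, h⟩).1) = S := by
  apply Finset.Subset.antisymm
  · intro y hy
    obtain ⟨x, -, rfl⟩ := Finset.mem_image.mp hy
    by_cases h : x ∈ S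
    · simpa [h]
    · simpa [h] using (g ⟨x, h⟩).2
  · intro y hy
    exact Finset.mem_image.mpr ⟨y, Finset.mem_univ _, by simp [hy]⟩

/-- The number of idempotent transformations of `{1, …, n}` of rank `r`
equals `C(n, r) · r ^ (n - r)`. -/
theorem stmt_4 (n r : ℕ) (h1 : 1 ≤ r) (h2 : r ≤ n) :
    Nat.card {f : Fin n → Fin n // f ∘ f = f ∧ trank f = r}
      = n.choose r * r ^ (n - r) := by
  classical
  set T := Σ S : {S : Finset (Fin n) // S.card = r},
      ({x : Fin n // x ∉ S.1} → {y : Fin n // y ∈ S.1}) with hT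
  have Fdef : ∀ p : T, (fun x => if h : x ∈ p.1.1 then x else (p.2 ⟨x, h⟩).1) ∘
      (fun x => if h : x ∈ p.1.1 then x else (p.2 ⟨x, h⟩).1) =
      (fun x => if h : x ∈ p.1.1 then x else (p.2 ⟨x, h⟩).1) := by
    intro p
    funext x
    simp only [Function.comp_apply]
    by_cases h : x ∈ p.1.1
    · rw [dif_pos h, dif_pos h]
    · rw [dif_neg h, dif_pos (p.2 ⟨x, h⟩).2]
  let F : T → {f : Fin n → Fin n // f ∘ f = f ∧ trank f = r} := fun p =>
    ⟨fun x => if h : x ∈ p.1.1 then x else (p.2 ⟨x, h⟩).1,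
      Fdef p, by rw [trank, img_eq p.1.1 p.2]; exact p.1.2⟩
  have hF : Function.Bijective F := by
    constructor
    · rintro ⟨⟨S1, hS1⟩, g1⟩ ⟨⟨S2, hS2⟩, g2⟩ heq
      have hf : (fun x => if h : x ∈ S1 then x else (g1 ⟨x, h⟩).1) =
          (fun x => if h : x ∈ S2 then x else (g2 ⟨x, h⟩).1) :=
        Subtype.ext_iff.mp heq
      have hS : S1 = S2 := by
        rw [← img_eq S1 g1, ← img_eq S2 g2, hf]
      subst hS
      have hg : g1 = g2 := by
        funext x
        obtain ⟨x, hx⟩ := x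
        have := congrFun hf x
        rw [dif_neg hx, dif_neg hx] at this
        exact Subtype.ext this
      rw [hg]
    · rintro ⟨f, hf, hr⟩
      refine ⟨⟨⟨Finset.univ.image f, hr⟩,
        fun x => ⟨f x.1, Finset.mem_image_of_mem _ (Finset.mem_univ _)⟩⟩, ?_⟩
      apply Subtype.ext
      funext x
      by_cases h : x ∈ Finset.univ.image f
      · simpa [F, h] using (idem_fix hf h).symm
      · simp [F, h]
  rw [Nat.card_congr (Equiv.ofBijective F hF).symm, hT, Nat.card_eq_fintype_card,
    Fintype.card_sigma]
  have hcard : ∀ S : {S : Finset (Fin n) // S.card = r},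
      Fintype.card ({x : Fin n // x ∉ S.1} → {y : Fin n // y ∈ S.1}) = r ^ (n - r) := by
    rintro ⟨S, hS⟩
    rw [Fintype.card_fun]
    congr 1
    · simpa [Fintype.card_coe] using hS
    · simp [Fintype.card_subtype_compl, Fintype.card_coe, hS]
  rw [Finset.sum_congr rfl (fun S _ => hcard S), Finset.sum_const, Finset.card_univ,
    Fintype.card_finset_len, Fintype.card_fin, smul_eq_mul]
end

section
/- Let S be a subsemigroup of T_n, let X be a generating set for S, and let x ∈ X be such that rank(y_1 x y_2) < rank(x) for all y_1, y_2 ∈ X with y_1 ≥_J x and y_2 ≥_J x (products composed left to right). Suppose z_1,…,z_m ∈ X and the product z_1⋯z_m is J-equivalent to x (S¹(z_1⋯z_m)S¹ = S¹xS¹). Then every z_i satisfies z_i ≥_J x, the element x occurs at most once among z_1,…,z_m, and if z_i = x for some i then i = 1 or i = m. -/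
/-- The set `S¹xS¹ = {x} ∪ xS ∪ Sx ∪ SxS`, with products composed left to
right (so the left-to-right product `a x b` is the function `b ∘ x ∘ a`). -/
def transIdeal {α : Type*} (S : Set (α → α)) (x : α → α) : Set (α → α) :=
  insert x ({h | ∃ a ∈ S, h = x ∘ a} ∪ {h | ∃ b ∈ S, h = b ∘ x} ∪
    {h | ∃ a ∈ S, ∃ b ∈ S, h = b ∘ x ∘ a})

/-- The `J`-preorder on transformations relative to `S`: `x ≤_J y` iff
`S¹xS¹ ⊆ S¹yS¹`. -/
def JLE {α : Type*} (S : Set (α → α)) (x y : α → α) : Prop :=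
  transIdeal S x ⊆ transIdeal S y

/-- Auxiliary: the left-to-right composite `z i ⋯ z (i+k)`
(the function `z (i+k) ∘ ⋯ ∘ z i`). -/
def cProdAux {α : Type*} (z : ℕ → α → α) (i : ℕ) : ℕ → (α → α)
  | 0 => z i
  | k + 1 => z (i + k + 1) ∘ cProdAux z i k

/-- The left-to-right composite `z i ⋯ z j` (for `i ≤ j`). -/
def cProd {α : Type*} (z : ℕ → α → α) (i j : ℕ) : α → α :=
  cProdAux z i (j - i)

section Helpers

variable {n : ℕ} {S : Set (Fin n → Fin n)}

lemma mem_transIdeal {x h : Fin n → Fin n} :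
    h ∈ transIdeal S x ↔ ∃ a ∈ insert id S, ∃ b ∈ insert id S, h = b ∘ x ∘ a := by
  simp only [transIdeal, Set.mem_insert_iff, Set.mem_union, Set.mem_setOf_eq]
  constructor
  · rintro (rfl | ((⟨a, ha, rfl⟩ | ⟨b, hb, rfl⟩) | ⟨a, ha, b, hb, rfl⟩))
    · exact ⟨id, Or.inl rfl, id, Or.inl rfl, rfl⟩
    · exact ⟨a, Or.inr ha, id, Or.inl rfl, rfl⟩
    · exact ⟨id, Or.inl rfl, b, Or.inr hb, rfl⟩
    · exact ⟨a, Or.inr ha, b, Or.inr hb, rfl⟩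
  · rintro ⟨a, (rfl | ha), b, (rfl | hb), rfl⟩
    · exact Or.inl rfl
    · exact Or.inr (Or.inl (Or.inr ⟨b, hb, rfl⟩))
    · exact Or.inr (Or.inl (Or.inl ⟨a, ha, rfl⟩))
    · exact Or.inr (Or.inr ⟨a, ha, b, hb, rfl⟩)

lemma comp_mem_left (hS : ∀ f ∈ S, ∀ g ∈ S, g ∘ f ∈ S) {f g : Fin n → Fin n} (hf : f ∈ insert id S) (hg : g ∈ S) :
    g ∘ f ∈ S := by
  rcases Set.mem_insert_iff.mp hf with rfl | hf
  · exact hg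
  · exact hS f hf g hg

lemma comp_mem_right (hS : ∀ f ∈ S, ∀ g ∈ S, g ∘ f ∈ S) {f g : Fin n → Fin n} (hf : f ∈ S) (hg : g ∈ insert id S) :
    g ∘ f ∈ S := by
  rcases Set.mem_insert_iff.mp hg with rfl | hg
  · exact hf
  · exact hS f hf g hg

lemma comp_mem' (hS : ∀ f ∈ S, ∀ g ∈ S, g ∘ f ∈ S) {f g : Fin n → Fin n} (hf : f ∈ insert id S) (hg : g ∈ insert id S) :
    g ∘ f ∈ insert id S := by
  rcases Set.mem_insert_iff.mp hf with rfl | hf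
  · exact hg
  · exact Set.mem_insert_of_mem _ (comp_mem_right hS hf hg)

lemma transIdeal_subset (hS : ∀ f ∈ S, ∀ g ∈ S, g ∘ f ∈ S) {x y : Fin n → Fin n} (hxy : x ∈ transIdeal S y) :
    transIdeal S x ⊆ transIdeal S y := by
  intro v hv
  rw [mem_transIdeal] at hv hxy ⊢
  obtain ⟨a, ha, b, hb, rfl⟩ := hv
  obtain ⟨c, hc, d, hd, rfl⟩ := hxy
  exact ⟨c ∘ a, comp_mem' hS ha hc, b ∘ d, comp_mem' hS hd hb, rfl⟩

lemma trank_comp_le_left (f g : Fin n → Fin n) : trank (g ∘ f) ≤ trank f := by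
  unfold trank
  rw [← Finset.image_image]
  exact Finset.card_image_le

lemma trank_comp_le_right (f g : Fin n → Fin n) : trank (g ∘ f) ≤ trank g := by
  unfold trank
  apply Finset.card_le_card
  intro v hv
  simp only [Finset.mem_image] at *
  obtain ⟨t, _, rfl⟩ := hv
  exact ⟨f t, Finset.mem_univ _, rfl⟩

lemma trank_le_of_mem {x t : Fin n → Fin n} (h : x ∈ transIdeal S t) :
    trank x ≤ trank t := by
  rw [mem_transIdeal] at h
  obtain ⟨a, _, b, _, rfl⟩ := h
  exact le_trans (trank_comp_le_left (t ∘ a) b) (trank_comp_le_right a t)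

lemma sg_first_s7 (hS : ∀ f ∈ S, ∀ g ∈ S, g ∘ f ∈ S) {X : Set (Fin n → Fin n)}
    (hXS : ∀ f, SgClosure X f → f ∈ S)
    {s : Fin n → Fin n} (hs : SgClosure X s) :
    ∃ y ∈ X, ∃ w ∈ insert id S, s = w ∘ y := by
  induction hs with
  | base h => exact ⟨_, h, id, Set.mem_insert _ _, rfl⟩
  | @comp f g hf hg ihf ihg =>
    obtain ⟨y, hy, w, hw, rfl⟩ := ihf
    exact ⟨y, hy, g ∘ w, Set.mem_insert_of_mem _ (comp_mem_left hS hw (hXS g hg)), rfl⟩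

lemma sg_last_s7 (hS : ∀ f ∈ S, ∀ g ∈ S, g ∘ f ∈ S) {X : Set (Fin n → Fin n)}
    (hXS : ∀ f, SgClosure X f → f ∈ S)
    {s : Fin n → Fin n} (hs : SgClosure X s) :
    ∃ y ∈ X, ∃ w ∈ insert id S, s = y ∘ w := by
  induction hs with
  | base h => exact ⟨_, h, id, Set.mem_insert _ _, rfl⟩
  | @comp f g hf hg ihf ihg =>
    obtain ⟨y, hy, w, hw, rfl⟩ := ihg
    exact ⟨y, hy, w ∘ f, Set.mem_insert_of_mem _ (comp_mem_right hS (hXS f hf) hw), rfl⟩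

end Helpers

lemma cProdAux_mem {n : ℕ} {S : Set (Fin n → Fin n)}
    (hS : ∀ f ∈ S, ∀ g ∈ S, g ∘ f ∈ S)
    {X : Set (Fin n → Fin n)} (hXS : X ⊆ S) (z : ℕ → Fin n → Fin n)
    (i : ℕ) : ∀ d : ℕ, (∀ t, i ≤ t → t ≤ i + d → z t ∈ X) → cProdAux z i d ∈ S
  | 0, h => hXS (h i le_rfl (by omega))
  | d + 1, h =>
    hS _ (cProdAux_mem hS hXS z i d (fun t ht1 ht2 => h t ht1 (by omega))) _
      (hXS (h (i + d + 1) (by omega) (by omega)))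

lemma cProdAux_split {α : Type*} (z : ℕ → α → α) (i d : ℕ) :
    ∀ e : ℕ, cProdAux z i (d + e + 1) = cProdAux z (i + d + 1) e ∘ cProdAux z i d := by
  intro e
  induction e with
  | zero => rfl
  | succ e ih =>
    show z (i + (d + e + 1) + 1) ∘ cProdAux z i (d + e + 1)
        = (z (i + d + 1 + e + 1) ∘ cProdAux z (i + d + 1) e) ∘ cProdAux z i d
    rw [ih, show i + (d + e + 1) + 1 = i + d + 1 + e + 1 from by omega]
    rfl

lemma cProd_split {α : Type*} (z : ℕ → α → α) {i k j : ℕ} (h1 : i ≤ k) (h2 : k < j) :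
    cProd z i j = cProd z (k + 1) j ∘ cProd z i k := by
  unfold cProd
  rw [show j - i = (k - i) + (j - k - 1) + 1 from by omega,
    show k + 1 = i + (k - i) + 1 from by omega,
    show j - (i + (k - i) + 1) = j - k - 1 from by omega, cProdAux_split]

lemma cProd_self {α : Type*} (z : ℕ → α → α) (i : ℕ) : cProd z i i = z i := by
  unfold cProd
  rw [Nat.sub_self]
  rfl

/-- Suppose `S ≤ T_n` is generated by `X`, and `x ∈ X` satisfies
`rank (y₁ x y₂) < rank x` for all `y₁, y₂ ∈ X` with `y₁, y₂ ≥_J x`. If a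
product `z 1 ⋯ z m` of elements of `X` is `J`-equivalent to `x`, then every
factor lies `≥_J x`, the element `x` occurs at most once among the factors,
and if it occurs then only as the first or the last factor. -/
theorem stmt_7 {n : ℕ} (S : Set (Fin n → Fin n))
    (hS : ∀ f ∈ S, ∀ g ∈ S, g ∘ f ∈ S)
    (X : Set (Fin n → Fin n)) (hXgen : {f | SgClosure X f} = S)
    (x : Fin n → Fin n) (hx : x ∈ X)
    (hrank : ∀ y₁ ∈ X, ∀ y₂ ∈ X, JLE S x y₁ → JLE S x y₂ →
      trank (y₂ ∘ x ∘ y₁) < trank x)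
    (m : ℕ) (hm : 1 ≤ m) (z : ℕ → Fin n → Fin n)
    (hz : ∀ i, 1 ≤ i → i ≤ m → z i ∈ X)
    (hJ : transIdeal S (cProd z 1 m) = transIdeal S x) :
    (∀ i, 1 ≤ i → i ≤ m → JLE S x (z i)) ∧
    (∀ i j, 1 ≤ i → i ≤ m → 1 ≤ j → j ≤ m → z i = x → z j = x → i = j) ∧
    (∀ i, 1 ≤ i → i ≤ m → z i = x → i = 1 ∨ i = m) := by
    -- basic memberships
    have hXS : X ⊆ S := fun f hf => by rw [← hXgen]; exact SgClosure.base hf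
    have hxS : x ∈ S := hXS hx
    have hSc : ∀ f, f ∈ S → SgClosure X f := fun f hf => by rw [← hXgen] at hf; exact hf
    have hSmem : ∀ f, SgClosure X f → f ∈ S := fun f hf => by rw [← hXgen]; exact hf
    -- the key principle: x cannot be written as A x B with A, B ∈ S
    have principle : ∀ A ∈ S, ∀ B ∈ S, x ≠ B ∘ x ∘ A := by
      intro A hA B hB hEq
      obtain ⟨y, hy, w, hw, hAw⟩ := sg_last_s7 hS hSmem (hSc A hA)
      obtain ⟨y', hy', w', hw', hBw⟩ := sg_first_s7 hS hSmem (hSc B hB)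
      subst hAw
      subst hBw
      have hy_mem : x ∈ transIdeal S y := by
        rw [mem_transIdeal]
        exact ⟨w, hw, w' ∘ (y' ∘ x),
          Set.mem_insert_of_mem _ (comp_mem_right hS (hS x hxS y' (hXS hy')) hw'), hEq⟩
      have hy'_mem : x ∈ transIdeal S y' := by
        rw [mem_transIdeal]
        exact ⟨x ∘ (y ∘ w),
          Set.mem_insert_of_mem _ (hS (y ∘ w) (comp_mem_left hS hw (hXS hy)) x hxS),
          w', hw', hEq⟩
      have hlt := hrank y hy y' hy' (transIdeal_subset hS hy_mem) (transIdeal_subset hS hy'_mem)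
      have hge : trank x ≤ trank (y' ∘ x ∘ y) := by
        apply trank_le_of_mem (S := S)
        rw [mem_transIdeal]
        exact ⟨w, hw, w', hw', hEq⟩
      omega
    -- membership of partial products in S
    have hmemS : ∀ a b : ℕ, 1 ≤ a → a ≤ b → b ≤ m → cProd z a b ∈ S := by
      intro a b h1 h2 h3
      unfold cProd
      apply cProdAux_mem hS hXS
      intro t ht1 ht2
      exact hz t (le_trans h1 ht1) (by omega)
    -- x lies in the ideal of the product
    have hpx : x ∈ transIdeal S (cProd z 1 m) := by
      rw [hJ]; exact Set.mem_insert _ _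
    obtain ⟨a, ha, b, hb, hx_eq⟩ := mem_transIdeal.mp hpx
    -- decomposition of the product around a single factor
    have hdec : ∀ i, 1 ≤ i → i ≤ m → ∃ P ∈ insert id S, ∃ Q ∈ insert id S,
        cProd z 1 m = Q ∘ z i ∘ P := by
      intro i h1 h2
      by_cases hA : 1 < i <;> by_cases hB : i < m
      · refine ⟨cProd z 1 (i - 1),
          Set.mem_insert_of_mem _ (hmemS 1 (i - 1) le_rfl (by omega) (by omega)),
          cProd z (i + 1) m,
          Set.mem_insert_of_mem _ (hmemS (i + 1) m (by omega) (by omega) le_rfl), ?_⟩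
        rw [cProd_split z (i := 1) (k := i - 1) (j := m) (by omega) (by omega),
          show i - 1 + 1 = i from by omega,
          cProd_split z (i := i) (k := i) (j := m) le_rfl hB, cProd_self]
        exact rfl
      · -- 1 < i = m
        have him : i = m := by omega
        subst him
        refine ⟨cProd z 1 (i - 1),
          Set.mem_insert_of_mem _ (hmemS 1 (i - 1) le_rfl (by omega) (by omega)),
          id, Set.mem_insert _ _, ?_⟩
        rw [cProd_split z (i := 1) (k := i - 1) (j := i) (by omega) (by omega),
          show i - 1 + 1 = i from by omega, cProd_self]
        exact rfl
      · -- i = 1 < m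
        have hi1 : i = 1 := by omega
        subst hi1
        refine ⟨id, Set.mem_insert _ _, cProd z 2 m,
          Set.mem_insert_of_mem _ (hmemS 2 m (by omega) (by omega) le_rfl), ?_⟩
        rw [cProd_split z (i := 1) (k := 1) (j := m) le_rfl hB,
          show (1 : ℕ) + 1 = 2 from rfl, cProd_self]
        exact rfl
      · -- i = 1 = m
        have hi1 : i = 1 := by omega
        have hm1 : m = 1 := by omega
        subst hi1; subst hm1
        refine ⟨id, Set.mem_insert _ _, id, Set.mem_insert _ _, ?_⟩
        rw [cProd_self]
        exact rfl
    -- Part 1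
    have part1 : ∀ i, 1 ≤ i → i ≤ m → JLE S x (z i) := by
      intro i h1 h2
      obtain ⟨P, hP, Q, hQ, hPQ⟩ := hdec i h1 h2
      apply transIdeal_subset hS
      rw [mem_transIdeal]
      refine ⟨P ∘ a, comp_mem' hS ha hP, b ∘ Q, comp_mem' hS hQ hb, ?_⟩
      exact hx_eq.trans (by rw [hPQ]; rfl)
    -- Part 3
    have part3 : ∀ i, 1 ≤ i → i ≤ m → z i = x → i = 1 ∨ i = m := by
      intro i h1 h2 hzi
      by_contra hcon
      push_neg at hcon
      have hA : 1 < i := by omega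
      have hB : i < m := by omega
      have hP : cProd z 1 (i - 1) ∈ S := hmemS 1 (i - 1) le_rfl (by omega) (by omega)
      have hQ : cProd z (i + 1) m ∈ S := hmemS (i + 1) m (by omega) (by omega) le_rfl
      have hPQ : cProd z 1 m = cProd z (i + 1) m ∘ x ∘ cProd z 1 (i - 1) := by
        rw [cProd_split z (i := 1) (k := i - 1) (j := m) (by omega) (by omega),
          show i - 1 + 1 = i from by omega,
          cProd_split z (i := i) (k := i) (j := m) le_rfl hB, cProd_self, hzi]
        exact rfl
      exact principle (cProd z 1 (i - 1) ∘ a) (comp_mem_left hS ha hP)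
        (b ∘ cProd z (i + 1) m) (comp_mem_right hS hQ hb)
        (hx_eq.trans (by rw [hPQ]; rfl))
    -- Part 2 via a key lemma
    have key : ∀ i j, 1 ≤ i → i < j → j ≤ m → z i = x → z j = x → False := by
      intro i j hi1 hij hjm hzi hzj
      have hi : i = 1 := by
        rcases part3 i hi1 (by omega) hzi with h | h
        · exact h
        · omega
      have hj : j = m := by
        rcases part3 j (by omega) hjm hzj with h | h
        · omega
        · exact h
      rw [hi] at hzi
      rw [hj] at hzj
      have hm2 : 2 ≤ m := by omega
      obtain ⟨W, hW, hWeq⟩ : ∃ W ∈ insert id S, cProd z 1 m = x ∘ W ∘ x := by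
        rcases eq_or_lt_of_le hm2 with hm' | hm'
        · -- m = 2
          have hzj2 : z 2 = x := by rw [← hm'] at hzj; exact hzj
          refine ⟨id, Set.mem_insert _ _, ?_⟩
          rw [cProd_split z (i := 1) (k := 1) (j := m) le_rfl (by omega),
            show (1 : ℕ) + 1 = 2 from rfl, ← hm']
          simp only [cProd_self]
          rw [hzi, hzj2]
          exact rfl
        · -- m ≥ 3
          refine ⟨cProd z 2 (m - 1),
            Set.mem_insert_of_mem _ (hmemS 2 (m - 1) (by omega) (by omega) (by omega)), ?_⟩
          rw [cProd_split z (i := 1) (k := 1) (j := m) le_rfl (by omega),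
            show (1 : ℕ) + 1 = 2 from rfl,
            cProd_split z (i := 2) (k := m - 1) (j := m) (by omega) (by omega),
            show m - 1 + 1 = m from by omega]
          simp only [cProd_self]
          rw [hzi, hzj]
          exact rfl
      rcases Set.mem_insert_iff.mp hb with hb' | hb'
      · rcases Set.mem_insert_iff.mp ha with ha' | ha'
        · -- b = id, a = id
          have e : x = x ∘ W ∘ x := hx_eq.trans (by rw [hWeq, hb', ha']; exact rfl)
          exact principle (W ∘ x) (comp_mem_right hS hxS hW)
            (x ∘ W) (comp_mem_left hS hW hxS)
            (e.trans (congrArg (fun f => x ∘ W ∘ f) e))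
        · -- b = id, a ∈ S
          exact principle a ha' (x ∘ W) (comp_mem_left hS hW hxS)
            (hx_eq.trans (by rw [hWeq, hb']; exact rfl))
      · -- b ∈ S
        exact principle ((W ∘ x) ∘ a) (comp_mem_left hS ha (comp_mem_right hS hxS hW))
          b hb' (hx_eq.trans (by rw [hWeq]; exact rfl))
    refine ⟨part1, ?_, part3⟩
    intro i j hi1 him hj1 hjm hzi hzj
    rcases lt_trichotomy i j with h | h | h
    · exact (key i j hi1 h hjm hzi hzj).elim
    · exact h
    · exact (key j i hj1 h him hzj hzi).elim
end

section
/- Let S be a subsemigroup of T_n, let X be an irredundant generating set for S, and let x ∈ X be such that rank(z_1 x z_2) < rank(x) for all z_1, z_2 ∈ X with z_1 ≥_J x and z_2 ≥_J x (products composed left to right). Then for all p, u, s ∈ S¹ and every y ∈ X with x J y, the element p x u y s is not J-equivalent to x (i.e., S¹(pxuys)S¹ ≠ S¹xS¹). -/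
lemma my_trank_comp_le_left {n : ℕ} (f g : Fin n → Fin n) : trank (g ∘ f) ≤ trank f := by
  unfold trank
  have h : Finset.univ.image (g ∘ f) = (Finset.univ.image f).image g := by
    ext a; simp [Function.comp]
  rw [h]; exact Finset.card_image_le

lemma my_trank_comp_le_right {n : ℕ} (f g : Fin n → Fin n) : trank (g ∘ f) ≤ trank g := by
  unfold trank
  apply Finset.card_le_card
  intro a ha
  simp only [Finset.mem_image] at *
  obtain ⟨b, -, rfl⟩ := ha
  exact ⟨f b, Finset.mem_univ _, rfl⟩

lemma my_compS_memL {n : ℕ} {S : Set (Fin n → Fin n)}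
    (hS : ∀ f ∈ S, ∀ g ∈ S, g ∘ f ∈ S) {f g : Fin n → Fin n}
    (hf : f ∈ insert id S) (hg : g ∈ S) : g ∘ f ∈ S := by
  rcases Set.mem_insert_iff.mp hf with rfl | hf
  · simpa using hg
  · exact hS f hf g hg

lemma my_compS_memR {n : ℕ} {S : Set (Fin n → Fin n)}
    (hS : ∀ f ∈ S, ∀ g ∈ S, g ∘ f ∈ S) {f g : Fin n → Fin n}
    (hf : f ∈ S) (hg : g ∈ insert id S) : g ∘ f ∈ S := by
  rcases Set.mem_insert_iff.mp hg with rfl | hg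
  · simpa using hf
  · exact hS f hf g hg

lemma my_mem11 {n : ℕ} {S : Set (Fin n → Fin n)}
    (hS : ∀ f ∈ S, ∀ g ∈ S, g ∘ f ∈ S) {f g : Fin n → Fin n}
    (hf : f ∈ insert id S) (hg : g ∈ insert id S) : g ∘ f ∈ insert id S := by
  rcases Set.mem_insert_iff.mp hf with rfl | hf
  · simpa using hg
  · exact Set.mem_insert_iff.mpr (Or.inr (my_compS_memR hS hf hg))

lemma my_mem_transIdeal_iff {α : Type*} {S : Set (α → α)} {x h : α → α} :
    h ∈ transIdeal S x ↔ ∃ a ∈ insert id S, ∃ b ∈ insert id S, h = b ∘ x ∘ a := by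
  constructor
  · intro hh
    simp only [transIdeal, Set.mem_insert_iff, Set.mem_union, Set.mem_setOf_eq] at hh
    rcases hh with rfl | ((⟨a, ha, rfl⟩ | ⟨b, hb, rfl⟩) | ⟨a, ha, b, hb, rfl⟩)
    · exact ⟨id, Set.mem_insert _ _, id, Set.mem_insert _ _, rfl⟩
    · exact ⟨a, Set.mem_insert_iff.mpr (Or.inr ha), id, Set.mem_insert _ _, rfl⟩
    · exact ⟨id, Set.mem_insert _ _, b, Set.mem_insert_iff.mpr (Or.inr hb), rfl⟩
    · exact ⟨a, Set.mem_insert_iff.mpr (Or.inr ha), b, Set.mem_insert_iff.mpr (Or.inr hb), rfl⟩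
  · rintro ⟨a, ha, b, hb, rfl⟩
    simp only [transIdeal, Set.mem_insert_iff, Set.mem_union, Set.mem_setOf_eq]
    rcases Set.mem_insert_iff.mp ha with rfl | ha <;>
      rcases Set.mem_insert_iff.mp hb with rfl | hb
    · exact Or.inl rfl
    · exact Or.inr (Or.inl (Or.inr ⟨b, hb, rfl⟩))
    · exact Or.inr (Or.inl (Or.inl ⟨a, ha, rfl⟩))
    · exact Or.inr (Or.inr ⟨a, ha, b, hb, rfl⟩)

lemma my_jle_of_mem {n : ℕ} {S : Set (Fin n → Fin n)}
    (hS : ∀ f ∈ S, ∀ g ∈ S, g ∘ f ∈ S)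
    {x z : Fin n → Fin n} (hxz : x ∈ transIdeal S z) : JLE S x z := by
  rw [my_mem_transIdeal_iff] at hxz
  obtain ⟨a, ha, b, hb, rfl⟩ := hxz
  intro h hh
  rw [my_mem_transIdeal_iff] at hh ⊢
  obtain ⟨a', ha', b', hb', rfl⟩ := hh
  exact ⟨a ∘ a', my_mem11 hS ha' ha, b' ∘ b, my_mem11 hS hb hb', rfl⟩

lemma my_decompR {n : ℕ} (S : Set (Fin n → Fin n))
    (hS : ∀ f ∈ S, ∀ g ∈ S, g ∘ f ∈ S)
    (X : Set (Fin n → Fin n)) (hXgen : {f | SgClosure X f} = S)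
    (f : Fin n → Fin n) (hf : f ∈ S) :
    ∃ z ∈ X, ∃ c ∈ insert id S, f = c ∘ z := by
  have hf' : SgClosure X f := by rw [← hXgen] at hf; exact hf
  induction hf' with
  | base h => exact ⟨_, h, id, Set.mem_insert _ _, rfl⟩
  | comp hf1 hg1 ihf ihg =>
    rename_i f1 g1
    have hg1S : g1 ∈ S := by rw [← hXgen]; exact hg1
    have hf1S : f1 ∈ S := by rw [← hXgen]; exact hf1
    obtain ⟨z, hz, c, hc, rfl⟩ := ihf hf1S
    refine ⟨z, hz, g1 ∘ c, ?_, rfl⟩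
    exact Set.mem_insert_iff.mpr (Or.inr (my_compS_memL hS hc hg1S))

lemma my_decompL {n : ℕ} (S : Set (Fin n → Fin n))
    (hS : ∀ f ∈ S, ∀ g ∈ S, g ∘ f ∈ S)
    (X : Set (Fin n → Fin n)) (hXgen : {f | SgClosure X f} = S)
    (f : Fin n → Fin n) (hf : f ∈ S) :
    ∃ z ∈ X, ∃ c ∈ insert id S, f = z ∘ c := by
  have hf' : SgClosure X f := by rw [← hXgen] at hf; exact hf
  induction hf' with
  | base h => exact ⟨_, h, id, Set.mem_insert _ _, rfl⟩
  | comp hf1 hg1 ihf ihg =>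
    rename_i f1 g1
    have hg1S : g1 ∈ S := by rw [← hXgen]; exact hg1
    have hf1S : f1 ∈ S := by rw [← hXgen]; exact hf1
    obtain ⟨z, hz, c, hc, rfl⟩ := ihg hg1S
    refine ⟨z, hz, c ∘ f1, ?_, rfl⟩
    exact Set.mem_insert_iff.mpr (Or.inr (my_compS_memR hS hf1S hc))

lemma my_core {n : ℕ} (S : Set (Fin n → Fin n))
    (hS : ∀ f ∈ S, ∀ g ∈ S, g ∘ f ∈ S)
    (X : Set (Fin n → Fin n)) (hXgen : {f | SgClosure X f} = S)
    (x : Fin n → Fin n)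
    (hrank : ∀ z₁ ∈ X, ∀ z₂ ∈ X, JLE S x z₁ → JLE S x z₂ →
      trank (z₂ ∘ x ∘ z₁) < trank x)
    (hxS : x ∈ S)
    (L R : Fin n → Fin n) (hL : L ∈ S) (hR : R ∈ S)
    (heq : x = L ∘ x ∘ R) : False := by
  obtain ⟨z₂, hz₂, c₂, hc₂, rfl⟩ := my_decompR S hS X hXgen L hL
  obtain ⟨z₁, hz₁, c₁, hc₁, rfl⟩ := my_decompL S hS X hXgen R hR
  have hz₂S : z₂ ∈ S := by rw [← hXgen]; exact SgClosure.base hz₂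
  have hz₁S : z₁ ∈ S := by rw [← hXgen]; exact SgClosure.base hz₁
  have hx1 : x ∈ transIdeal S z₁ := by
    rw [my_mem_transIdeal_iff]
    refine ⟨c₁, hc₁, (c₂ ∘ z₂) ∘ x, ?_, heq⟩
    exact Set.mem_insert_iff.mpr (Or.inr (hS x hxS _ (my_compS_memR hS hz₂S hc₂)))
  have hx2 : x ∈ transIdeal S z₂ := by
    rw [my_mem_transIdeal_iff]
    refine ⟨x ∘ (z₁ ∘ c₁), ?_, c₂, hc₂, heq⟩
    exact Set.mem_insert_iff.mpr (Or.inr (hS _ (my_compS_memL hS hc₁ hz₁S) x hxS))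
  have hlt := hrank z₁ hz₁ z₂ hz₂ (my_jle_of_mem hS hx1) (my_jle_of_mem hS hx2)
  have h7 : trank x = trank (c₂ ∘ ((z₂ ∘ x ∘ z₁) ∘ c₁)) := congrArg trank heq
  have h8 : trank (c₂ ∘ ((z₂ ∘ x ∘ z₁) ∘ c₁)) ≤ trank ((z₂ ∘ x ∘ z₁) ∘ c₁) :=
    my_trank_comp_le_left _ _
  have h9 : trank ((z₂ ∘ x ∘ z₁) ∘ c₁) ≤ trank (z₂ ∘ x ∘ z₁) :=
    my_trank_comp_le_right _ _
  omega

/-- Let `S ≤ T_n` with irredundant generating set `X`, and let `x ∈ X` satisfy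
`rank (z₁ x z₂) < rank x` for all `z₁, z₂ ∈ X` with `z₁, z₂ ≥_J x`. Then for
all `p, u, s ∈ S¹` (formalized as `insert id S`, the identity playing the role
of the adjoined identity `1`) and every `y ∈ X` with `x J y`, the left-to-right
product `p x u y s` (the function `s ∘ y ∘ u ∘ x ∘ p`) is not `J`-equivalent
to `x`. -/
theorem stmt_8 {n : ℕ} (S : Set (Fin n → Fin n))
    (hS : ∀ f ∈ S, ∀ g ∈ S, g ∘ f ∈ S)
    (X : Set (Fin n → Fin n)) (hXgen : {f | SgClosure X f} = S)
    (hXirr : ∀ Z, Z ⊂ X → {f | SgClosure Z f} ≠ S)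
    (x : Fin n → Fin n) (hx : x ∈ X)
    (hrank : ∀ z₁ ∈ X, ∀ z₂ ∈ X, JLE S x z₁ → JLE S x z₂ →
      trank (z₂ ∘ x ∘ z₁) < trank x) :
    ∀ p ∈ insert id S, ∀ u ∈ insert id S, ∀ s ∈ insert id S, ∀ y ∈ X,
      transIdeal S x = transIdeal S y →
      transIdeal S (s ∘ y ∘ u ∘ x ∘ p) ≠ transIdeal S x := by
  intro p hp u hu s hs y hy hxy hcontra
  have hxS : x ∈ S := by rw [← hXgen]; exact SgClosure.base hx
  have hyS : y ∈ S := by rw [← hXgen]; exact SgClosure.base hy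
  have hxw : x ∈ transIdeal S (s ∘ y ∘ u ∘ x ∘ p) := by
    rw [hcontra]; exact Set.mem_insert _ _
  rw [my_mem_transIdeal_iff] at hxw
  obtain ⟨a, ha, b, hb, hxeq⟩ := hxw
  -- hxeq : x = b ∘ (s ∘ y ∘ u ∘ x ∘ p) ∘ a
  rcases Set.mem_insert_iff.mp (my_mem11 hS ha hp) with hRid | hRS
  · -- p ∘ a = id
    have h2 : x = (b ∘ s ∘ y ∘ u) ∘ x := by
      funext t
      have h1 := congrFun hxeq t
      have hpa := congrFun hRid t
      simp only [Function.comp, id] at h1 hpa ⊢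
      rw [hpa] at h1
      exact h1
    have hyx : y ∈ transIdeal S x := by rw [hxy]; exact Set.mem_insert _ _
    rw [my_mem_transIdeal_iff] at hyx
    obtain ⟨α, hα, β, hβ, hyeq⟩ := hyx
    -- hyeq : y = β ∘ x ∘ α
    have h3 : x = (b ∘ s ∘ β) ∘ x ∘ (α ∘ u ∘ x) := by
      have h3' : x = b ∘ s ∘ (β ∘ x ∘ α) ∘ u ∘ x := by rw [← hyeq]; exact h2
      exact h3'
    have hR2 : (α ∘ u ∘ x : Fin n → Fin n) ∈ S :=
      my_compS_memR hS (my_compS_memR hS hxS hu) hα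
    rcases Set.mem_insert_iff.mp (my_mem11 hS (my_mem11 hS hβ hs) hb) with hLid | hLS
    · -- b ∘ s ∘ β = id, so x = x ∘ (α ∘ u ∘ x)
      have h4 : x = x ∘ ((α ∘ u) ∘ x) := by
        rw [hLid, Function.id_comp] at h3
        exact h3
      have h6 : x = (x ∘ (α ∘ u)) ∘ x ∘ ((α ∘ u) ∘ x) := by
        funext t
        have h1 := congrFun h4 t
        simp only [Function.comp] at h1 ⊢
        rw [← h1]
        exact h1
      exact my_core S hS X hXgen x hrank hxS (x ∘ (α ∘ u)) ((α ∘ u) ∘ x)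
        (my_compS_memL hS (my_mem11 hS hu hα) hxS)
        (my_compS_memR hS hxS (my_mem11 hS hu hα)) h6
    · exact my_core S hS X hXgen x hrank hxS (b ∘ s ∘ β) (α ∘ u ∘ x) hLS hR2 h3
  · -- p ∘ a ∈ S
    have hL : (b ∘ s ∘ y ∘ u : Fin n → Fin n) ∈ S :=
      my_compS_memR hS (my_compS_memR hS (my_compS_memL hS hu hyS) hs) hb
    exact my_core S hS X hXgen x hrank hxS (b ∘ s ∘ y ∘ u) (p ∘ a) hL hRS hxeq
end

section
/- For every n ≥ 1, the number of transformations f ∈ T_n that are injective on their own image (equivalently, for which ⟨f⟩ is a group) equals ∑_{r=1}^{n} C(n,r)·r^{n−r}·r!, and this number also equals ∑_{k=0}^{n−1} (n−k)^k · n!/k!. Consequently, the probability G_n that a uniformly random f ∈ T_n generates a group is G_n = (n!/n^n)·∑_{k=0}^{n−1} (n−k)^k/k!. -/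
/-- The number of transformations of `Fin n` that are injective on their own
image (equivalently, that generate a group). -/
noncomputable def groupGenCount (n : ℕ) : ℕ :=
  Nat.card {f : Fin n → Fin n // Set.InjOn f (Set.range f)}

open Finset in
lemma card_piece (n : ℕ) (S : Finset (Fin n)) :
    Fintype.card {f : Fin n → Fin n // (∀ x, f x ∈ S) ∧ Set.InjOn f ↑S}
      = S.card ^ (n - S.card) * S.card.factorial := by
  classical
  have e : {f : Fin n → Fin n // (∀ x, f x ∈ S) ∧ Set.InjOn f ↑S}
      ≃ ((↥Sᶜ → ↥S) × (↥S ↪ ↥S)) := by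
    refine
      { toFun := fun f => (fun x => ⟨f.1 x, f.2.1 x⟩,
          ⟨fun s => ⟨f.1 s, f.2.1 s⟩, ?_⟩)
        invFun := fun p =>
          ⟨fun x => if hx : x ∈ S then (p.2 ⟨x, hx⟩ : Fin n)
            else (p.1 ⟨x, Finset.mem_compl.mpr hx⟩ : Fin n), ?_, ?_⟩
        left_inv := ?_
        right_inv := ?_ }
    · intro a b hab
      exact Subtype.ext (f.2.2 a.2 b.2 (congrArg Subtype.val hab))
    · intro x
      by_cases hx : x ∈ S <;> simp [hx, Finset.coe_mem]
    · intro a ha b hb hab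
      simp only [Finset.mem_coe] at ha hb
      simp only [dif_pos ha, dif_pos hb] at hab
      have := p.2.injective (Subtype.ext hab)
      exact congrArg Subtype.val this
    · rintro ⟨f, h1, h2⟩
      ext x
      by_cases hx : x ∈ S <;> simp [hx] <;> rfl
    · rintro ⟨g, e⟩
      refine Prod.ext ?_ ?_
      · funext x
        have hx : (x : Fin n) ∉ S := Finset.mem_compl.mp x.2
        ext
        simp [hx]
      · ext s
        have hs : (s : Fin n) ∈ S := s.2
        simp [hs]
  rw [Fintype.card_congr e, Fintype.card_prod, Fintype.card_fun,
    Fintype.card_embedding_eq, Fintype.card_coe, Fintype.card_coe,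
    Finset.card_compl, Fintype.card_fin, Nat.descFactorial_self]

/-- The number of `f ∈ T_n` injective on their image equals
`∑_{r=1}^{n} C(n,r)·r^{n−r}·r!`, also equals `∑_{k=0}^{n−1} (n−k)^k·n!/k!`, and
hence the probability `G_n` that a uniformly random `f ∈ T_n` generates a group
is `(n!/n^n)·∑_{k=0}^{n−1} (n−k)^k/k!`. -/
theorem stmt_10 (n : ℕ) (hn : 1 ≤ n) :
    (groupGenCount n
        = ∑ r ∈ Finset.Icc 1 n, n.choose r * r ^ (n - r) * r.factorial) ∧
    ((groupGenCount n : ℝ)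
        = ∑ k ∈ Finset.range n, ((n - k : ℕ) : ℝ) ^ k * n.factorial / k.factorial) ∧
    ((groupGenCount n : ℝ) / (n : ℝ) ^ n
        = ((n.factorial : ℝ) / (n : ℝ) ^ n) *
            ∑ k ∈ Finset.range n, ((n - k : ℕ) : ℝ) ^ k / k.factorial) := by
  classical
  have key : groupGenCount n
      = ∑ r ∈ Finset.Icc 1 n, n.choose r * r ^ (n - r) * r.factorial := by
    have h0 : groupGenCount n =
        (Finset.univ.filter
          (fun f : Fin n → Fin n => Set.InjOn f (Set.range f))).card := by
      rw [groupGenCount, Nat.card_eq_fintype_card, Fintype.card_subtype]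
    rw [h0,
      Finset.card_eq_sum_card_fiberwise
        (f := fun f : Fin n → Fin n => Finset.image f Finset.univ)
        (t := (Finset.univ : Finset (Fin n)).powerset)
        (fun f _ => Finset.mem_powerset.mpr (Finset.subset_univ _))]
    have hfib : ∀ S ∈ (Finset.univ : Finset (Fin n)).powerset,
        ((Finset.univ.filter
            (fun f : Fin n → Fin n => Set.InjOn f (Set.range f))).filter
          (fun f => Finset.image f Finset.univ = S)).card
        = S.card ^ (n - S.card) * S.card.factorial := by
      intro S _
      rw [Finset.filter_filter]
      have hiff : ∀ f : Fin n → Fin n,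
          (Set.InjOn f (Set.range f) ∧ Finset.image f Finset.univ = S)
          ↔ ((∀ x, f x ∈ S) ∧ Set.InjOn f ↑S) := by
        intro f
        constructor
        · rintro ⟨hP, himg⟩
          have hr : Set.range f = ↑S := by
            rw [← himg, Finset.coe_image, Finset.coe_univ, Set.image_univ]
          exact ⟨fun x => by
            rw [← Finset.mem_coe, ← hr]; exact Set.mem_range_self x, hr ▸ hP⟩
        · rintro ⟨h1, h2⟩
          have hmaps : Set.MapsTo f ↑S ↑S := fun x _ => h1 x
          have hbij :=
            ((Set.Finite.injOn_iff_bijOn_of_mapsTo S.finite_toSet hmaps).mp h2)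
          have hr : Set.range f = ↑S := by
            apply Set.Subset.antisymm
            · rintro _ ⟨x, rfl⟩; exact h1 x
            · intro y hy
              obtain ⟨x, _, hfx⟩ := hbij.surjOn hy
              exact ⟨x, hfx⟩
          refine ⟨hr ▸ h2, ?_⟩
          rw [← Finset.coe_inj, Finset.coe_image, Finset.coe_univ,
            Set.image_univ, hr]
      rw [Finset.filter_congr (fun f _ => by
        simpa using (hiff f))]
      rw [← Fintype.card_subtype]
      exact card_piece n S
    rw [Finset.sum_congr rfl hfib]
    have hps : (Finset.univ : Finset (Fin n)).powerset
        = (Finset.range ((Finset.univ : Finset (Fin n)).card + 1)).disjiUnion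
            (fun i => Finset.powersetCard i Finset.univ)
            (fun i _ j _ hij => (Finset.univ : Finset (Fin n)).pairwise_disjoint_powersetCard hij) :=
      Finset.powerset_card_disjiUnion _
    rw [hps]
    refine (Finset.sum_disjiUnion ..).trans ?_
    have hcardu : (Finset.univ : Finset (Fin n)).card = n := by simp
    have hinner : ∀ r ∈ Finset.range ((Finset.univ : Finset (Fin n)).card + 1),
        (∑ S ∈ Finset.powersetCard r (Finset.univ : Finset (Fin n)),
          S.card ^ (n - S.card) * S.card.factorial)
        = n.choose r * r ^ (n - r) * r.factorial := by
      intro r _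
      have : ∀ S ∈ Finset.powersetCard r (Finset.univ : Finset (Fin n)),
          S.card ^ (n - S.card) * S.card.factorial
            = r ^ (n - r) * r.factorial := by
        intro S hS
        rw [(Finset.mem_powersetCard.mp hS).2]
      rw [Finset.sum_congr rfl this, Finset.sum_const,
        Finset.card_powersetCard, hcardu, smul_eq_mul, mul_assoc]
    rw [Finset.sum_congr rfl hinner, hcardu]
    symm
    apply Finset.sum_subset
    · intro r hr
      exact Finset.mem_range.mpr (Nat.lt_succ_of_le (Finset.mem_Icc.mp hr).2)
    · intro r hr hr'
      have hr0 : r = 0 := by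
        rcases Nat.eq_zero_or_pos r with h | h
        · exact h
        · exact absurd (Finset.mem_Icc.mpr ⟨h, Nat.lt_succ_iff.mp (Finset.mem_range.mp hr)⟩) hr'
      subst hr0
      have hn0 : n ≠ 0 := by omega
      simp [zero_pow hn0]
  have key2 : (groupGenCount n : ℝ)
      = ∑ k ∈ Finset.range n, ((n - k : ℕ) : ℝ) ^ k * n.factorial / k.factorial := by
    rw [key]
    push_cast
    refine Finset.sum_nbij' (i := fun r => n - r) (j := fun k => n - k)
      ?_ ?_ ?_ ?_ ?_
    · intro r hr
      obtain ⟨h1, h2⟩ := Finset.mem_Icc.mp hr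
      exact Finset.mem_range.mpr (by omega)
    · intro k hk
      have := Finset.mem_range.mp hk
      exact Finset.mem_Icc.mpr ⟨by omega, by omega⟩
    · intro r hr
      obtain ⟨h1, h2⟩ := Finset.mem_Icc.mp hr
      omega
    · intro k hk
      have := Finset.mem_range.mp hk
      omega
    · intro r hr
      obtain ⟨h1, h2⟩ := Finset.mem_Icc.mp hr
      have h3 : n - (n - r) = r := by omega
      have hch : (n.choose r : ℝ) * r.factorial
          = n.factorial / (n - r).factorial := by
        have := Nat.choose_mul_factorial_mul_factorial h2
        field_simp
        push_cast [← this]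
        ring
      simp only [h3]
      rw [mul_comm ((n.choose r : ℝ)) ((r : ℝ) ^ (n - r)), mul_assoc, hch]
      ring
  refine ⟨key, key2, ?_⟩
  rw [key2, Finset.mul_sum, Finset.sum_div]
  refine Finset.sum_congr rfl fun k _ => ?_
  ring
end

section
/- For n ≥ 1 let G_n = n^{−n}·|{f ∈ T_n : f is injective on its image}| be the probability that a uniformly random f ∈ T_n generates a group. Then (log G_n)/n converges to Ω − 1 as n → ∞; in particular, since Ω − 1 < 0, the probability G_n tends to 0 exponentially fast. -/
set_option maxHeartbeats 1000000

open Finset Set Real Filter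

section Counting


variable {n : ℕ}

abbrev Dom (n : ℕ) := Σ S : Finset (Fin n),
  ({x : Fin n // x ∈ S} ≃ {x : Fin n // x ∈ S}) × ({x : Fin n // x ∉ S} → {x : Fin n // x ∈ S})

def bwdFun (S : Finset (Fin n)) (e : {x : Fin n // x ∈ S} ≃ {x : Fin n // x ∈ S})
    (g : {x : Fin n // x ∉ S} → {x : Fin n // x ∈ S}) : Fin n → Fin n :=
  fun x => if h : x ∈ S then (e ⟨x, h⟩).1 else (g ⟨x, h⟩).1

theorem bwdFun_range (S : Finset (Fin n)) (e) (g) : Set.range (bwdFun S e g) = ↑S := by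
  ext y
  constructor
  · rintro ⟨x, rfl⟩
    by_cases h : x ∈ S <;> simp [bwdFun, h, Subtype.coe_prop]
  · intro hy
    refine ⟨(e.symm ⟨y, hy⟩).1, ?_⟩
    have h : ((e.symm ⟨y, hy⟩).1 : Fin n) ∈ S := (e.symm ⟨y, hy⟩).2
    simp [bwdFun, h]

theorem bwdFun_injOn (S : Finset (Fin n)) (e) (g) :
    Set.InjOn (bwdFun S e g) (Set.range (bwdFun S e g)) := by
  rw [bwdFun_range]
  intro a ha b hb hab
  simp only [Finset.mem_coe] at ha hb
  simp only [bwdFun, dif_pos ha, dif_pos hb] at hab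
  have := e.injective (Subtype.ext hab)
  exact congrArg Subtype.val this

noncomputable def bwd (d : Dom n) : {f : Fin n → Fin n // Set.InjOn f (Set.range f)} :=
  ⟨bwdFun d.1 d.2.1 d.2.2, bwdFun_injOn d.1 d.2.1 d.2.2⟩

theorem bwd_bijective : Function.Bijective (bwd (n := n)) := by
  constructor
  · rintro ⟨S, e, g⟩ ⟨S', e', g'⟩ h
    have hf : bwdFun S e g = bwdFun S' e' g' := congrArg Subtype.val h
    have hS : S = S' := by
      have := bwdFun_range S e g
      rw [hf, bwdFun_range] at this
      exact (Finset.coe_injective this).symm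
    subst hS
    have he : e = e' := by
      ext x
      have h2 := congrFun hf x.1
      simp only [bwdFun, dif_pos x.2] at h2
      exact congrArg Fin.val h2
    have hg : g = g' := by
      funext x
      have := congrFun hf x.1
      simp only [bwdFun, dif_neg x.2] at this
      exact Subtype.ext this
    rw [he, hg]
  · rintro ⟨f, hf⟩
    classical
    have hmap : ∀ x : Fin n, f x ∈ (Set.range f).toFinset := by
      intro x; simp [Set.mem_range]
    set S : Finset (Fin n) := (Set.range f).toFinset with hSdef
    have hinj : Function.Injective (fun x : {x : Fin n // x ∈ S} => (⟨f x.1, hmap x.1⟩ : {x : Fin n // x ∈ S})) := by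
      intro a b hab
      have := hf (by have := a.2; simpa [hSdef] using this) (by have := b.2; simpa [hSdef] using this)
        (by simpa using congrArg Subtype.val hab)
      exact Subtype.ext this
    have hbij := Finite.injective_iff_bijective.mp hinj
    refine ⟨⟨S, Equiv.ofBijective _ hbij, fun x => ⟨f x.1, hmap x.1⟩⟩, ?_⟩
    apply Subtype.ext
    funext x
    by_cases h : x ∈ S
    · simp [bwd, bwdFun, dif_pos h, Equiv.ofBijective]
    · simp [bwd, bwdFun, dif_neg h]

theorem countCard (n : ℕ) :
    Nat.card {f : Fin n → Fin n // Set.InjOn f (Set.range f)}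
      = ∑ k ∈ Finset.range (n + 1), n.choose k * (k.factorial * k ^ (n - k)) := by
  classical
  rw [← Nat.card_eq_of_bijective _ bwd_bijective, Nat.card_eq_fintype_card, Fintype.card_sigma]
  have hfib : ∀ S : Finset (Fin n),
      Fintype.card (({x : Fin n // x ∈ S} ≃ {x : Fin n // x ∈ S}) × ({x : Fin n // x ∉ S} → {x : Fin n // x ∈ S}))
        = S.card.factorial * S.card ^ (n - S.card) := by
    intro S
    rw [Fintype.card_prod, Fintype.card_equiv (Equiv.refl _), Fintype.card_fun]
    simp [Fintype.card_subtype_compl]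
  rw [Finset.sum_congr rfl (fun S _ => hfib S)]
  have := Finset.sum_powerset_apply_card (x := (Finset.univ : Finset (Fin n)))
    (fun k => k.factorial * k ^ (n - k))
  rw [Finset.powerset_univ] at this
  simpa [Finset.card_univ, smul_eq_mul] using this

end Counting

section Anal


-- (n+1)^n ≤ e * n^n
theorem aux1 (n : ℕ) : ((n : ℝ) + 1) ^ n ≤ Real.exp 1 * (n : ℝ) ^ n := by
  rcases Nat.eq_zero_or_pos n with rfl | hn
  · simpa using Real.one_le_exp zero_le_one
  have hn' : (0 : ℝ) < n := by exact_mod_cast hn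
  have h1 : (1 / (n : ℝ)) + 1 ≤ Real.exp (1 / n) := Real.add_one_le_exp _
  have h2 : ((1 / (n : ℝ)) + 1) ^ n ≤ Real.exp (1 / n) ^ n :=
    pow_le_pow_left₀ (by positivity) h1 n
  have h3 : Real.exp (1 / (n : ℝ)) ^ n = Real.exp 1 := by
    rw [← Real.exp_nat_mul]
    congr 1
    field_simp
  calc ((n : ℝ) + 1) ^ n = (((1 / (n : ℝ)) + 1) * n) ^ n := by
        congr 1; field_simp; ring
    _ = ((1 / (n : ℝ)) + 1) ^ n * (n : ℝ) ^ n := mul_pow _ _ _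
    _ ≤ Real.exp 1 * (n : ℝ) ^ n := by
        rw [h3] at h2
        exact mul_le_mul_of_nonneg_right h2 (by positivity)

-- n^n ≤ e^n * n!
theorem fact_lower (n : ℕ) : (n : ℝ) ^ n ≤ Real.exp n * n.factorial := by
  induction n with
  | zero => simp
  | succ n ih =>
    have : ((n : ℝ) + 1) ^ (n + 1) = ((n : ℝ) + 1) * ((n : ℝ) + 1) ^ n := by ring
    push_cast
    rw [this]
    calc ((n : ℝ) + 1) * ((n : ℝ) + 1) ^ n
        ≤ ((n : ℝ) + 1) * (Real.exp 1 * (n : ℝ) ^ n) :=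
          mul_le_mul_of_nonneg_left (aux1 n) (by positivity)
      _ ≤ ((n : ℝ) + 1) * (Real.exp 1 * (Real.exp n * n.factorial)) := by
          have := mul_le_mul_of_nonneg_left ih (le_of_lt (Real.exp_pos 1))
          exact mul_le_mul_of_nonneg_left this (by positivity)
      _ = Real.exp ((n : ℝ) + 1) * ((n + 1).factorial : ℝ) := by
          rw [Real.exp_add, Nat.factorial_succ]; push_cast; ring

-- e * n^(n+1) ≤ (n+1)^(n+1) for n ≥ 1
theorem aux2 (n : ℕ) (hn : 1 ≤ n) :
    Real.exp 1 * (n : ℝ) ^ (n + 1) ≤ ((n : ℝ) + 1) ^ (n + 1) := by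
  have hn' : (0 : ℝ) < n := by exact_mod_cast hn
  have h0 : (0 : ℝ) < (n : ℝ) + 1 := by positivity
  have h1 : Real.exp (-(1 / ((n : ℝ) + 1))) ≥ 1 - 1 / ((n : ℝ) + 1) := by
    have := Real.add_one_le_exp (-(1 / ((n : ℝ) + 1)))
    linarith
  have h2 : Real.exp (1 / ((n : ℝ) + 1)) * ((n : ℝ) / ((n : ℝ) + 1)) ≤ 1 := by
    have hexp : Real.exp (1 / ((n : ℝ) + 1)) > 0 := Real.exp_pos _
    have : 1 - 1 / ((n : ℝ) + 1) = (n : ℝ) / ((n : ℝ) + 1) := by field_simp; ring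
    rw [this] at h1
    calc Real.exp (1 / ((n : ℝ) + 1)) * ((n : ℝ) / ((n : ℝ) + 1))
        ≤ Real.exp (1 / ((n : ℝ) + 1)) * Real.exp (-(1 / ((n : ℝ) + 1))) :=
          mul_le_mul_of_nonneg_left h1 (le_of_lt hexp)
      _ = 1 := by rw [← Real.exp_add]; simp
  have h3 : Real.exp (1 / ((n : ℝ) + 1)) * (n : ℝ) ≤ (n : ℝ) + 1 := by
    have := mul_le_mul_of_nonneg_right h2 (le_of_lt h0)
    calc Real.exp (1 / ((n : ℝ) + 1)) * (n : ℝ)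
        = Real.exp (1 / ((n : ℝ) + 1)) * ((n : ℝ) / ((n : ℝ) + 1)) * ((n : ℝ) + 1) := by
          field_simp
      _ ≤ 1 * ((n : ℝ) + 1) := this
      _ = (n : ℝ) + 1 := one_mul _
  have h4 : (Real.exp (1 / ((n : ℝ) + 1)) * (n : ℝ)) ^ (n + 1) ≤ ((n : ℝ) + 1) ^ (n + 1) :=
    pow_le_pow_left₀ (by positivity) h3 _
  calc Real.exp 1 * (n : ℝ) ^ (n + 1)
      = (Real.exp (1 / ((n : ℝ) + 1)) * (n : ℝ)) ^ (n + 1) := by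
        rw [mul_pow, ← Real.exp_nat_mul]
        congr 2
        push_cast
        field_simp
    _ ≤ ((n : ℝ) + 1) ^ (n + 1) := h4

-- n! * e^n ≤ e * n * n^n for n ≥ 1
theorem fact_upper (n : ℕ) (hn : 1 ≤ n) :
    (n.factorial : ℝ) * Real.exp n ≤ Real.exp 1 * n * (n : ℝ) ^ n := by
  induction n with
  | zero => omega
  | succ m ih =>
    rcases Nat.eq_zero_or_pos m with rfl | hm
    · simpa using le_refl (Real.exp 1)
    have ihm := ih hm
    have key := aux2 m hm
    push_cast
    have : (((m : ℕ) + 1).factorial : ℝ) = ((m : ℝ) + 1) * m.factorial := by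
      push_cast [Nat.factorial_succ]; ring
    rw [Nat.factorial_succ]
    push_cast
    calc ((m : ℝ) + 1) * m.factorial * Real.exp ((m : ℝ) + 1)
        = ((m : ℝ) + 1) * Real.exp 1 * ((m.factorial : ℝ) * Real.exp m) := by
          rw [Real.exp_add]; ring
      _ ≤ ((m : ℝ) + 1) * Real.exp 1 * (Real.exp 1 * m * (m : ℝ) ^ m) := by
          apply mul_le_mul_of_nonneg_left ihm (by positivity)
      _ = ((m : ℝ) + 1) * Real.exp 1 * (Real.exp 1 * (m : ℝ) ^ (m + 1)) := by ring
      _ ≤ ((m : ℝ) + 1) * Real.exp 1 * ((m : ℝ) + 1) ^ (m + 1) := by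
          apply mul_le_mul_of_nonneg_left key (by positivity)
      _ = Real.exp 1 * ((m : ℝ) + 1) * ((m : ℝ) + 1) ^ (m + 1) := by ring

section Omega
variable {Ω : ℝ} (hΩpos : 0 < Ω) (hΩ : Ω * Real.exp Ω = 1)

include hΩpos hΩ

theorem logOmega : Real.log Ω = -Ω := by
  have h : Ω = Real.exp (-Ω) := by
    rw [Real.exp_neg]
    field_simp
    linarith [hΩ]
  conv_lhs => rw [h]
  rw [Real.log_exp]

theorem keyIneq (t : ℝ) (ht : 0 < t) : 0 ≤ Ω + (Ω - 1) * t + t * Real.log t := by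
  have h := Real.log_le_sub_one_of_pos (show (0:ℝ) < Ω / t by positivity)
  rw [Real.log_div (ne_of_gt hΩpos) (ne_of_gt ht), logOmega hΩpos hΩ] at h
  have h2 := mul_le_mul_of_nonneg_left h (le_of_lt ht)
  have h3 : t * (Ω / t) = Ω := by field_simp
  nlinarith [h2, h3]

-- per-term upper bound
theorem termUpper (n k : ℕ) (hn : 1 ≤ n) (hk : k ≤ n) :
    ((n.choose k * (k.factorial * k ^ (n - k)) : ℕ) : ℝ) ≤
      Real.exp 1 * n * Real.exp ((Ω - 1) * n) * (n : ℝ) ^ n := by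
  rcases Nat.eq_zero_or_pos k with rfl | hkpos
  · have hne : n ≠ 0 := by omega
    simp [zero_pow hne]
    positivity
  set r := n - k with hr
  have hkr : k + r = n := by omega
  have hfact : (n.choose k * (k.factorial * k ^ r)) * r.factorial = n.factorial * k ^ r := by
    have := Nat.choose_mul_factorial_mul_factorial hk
    calc (n.choose k * (k.factorial * k ^ r)) * r.factorial
        = (n.choose k * k.factorial * r.factorial) * k ^ r := by ring
      _ = n.factorial * k ^ r := by rw [this]
  -- real versions
  have hA : (n.factorial : ℝ) ≤ Real.exp 1 * n * (n:ℝ)^n * Real.exp (-(n:ℝ)) := by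
    have h := fact_upper n hn
    calc (n.factorial : ℝ) = (n.factorial : ℝ) * Real.exp (n:ℝ) * Real.exp (-(n:ℝ)) := by
          rw [mul_assoc, ← Real.exp_add]; simp
      _ ≤ Real.exp 1 * n * (n:ℝ)^n * Real.exp (-(n:ℝ)) := by
          apply mul_le_mul_of_nonneg_right h (le_of_lt (Real.exp_pos _))
  have hB : (r : ℝ) ^ r * Real.exp (-(r:ℝ)) ≤ (r.factorial : ℝ) := by
    have h := fact_lower r
    calc (r : ℝ) ^ r * Real.exp (-(r:ℝ)) ≤ (Real.exp (r:ℝ) * r.factorial) * Real.exp (-(r:ℝ)) := by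
          apply mul_le_mul_of_nonneg_right h (le_of_lt (Real.exp_pos _))
      _ = (r.factorial : ℝ) := by rw [mul_comm (Real.exp _), mul_assoc, ← Real.exp_add]; simp
  -- core scalar inequality
  have hC : Real.exp (-(n:ℝ)) * (k : ℝ) ^ r ≤
      Real.exp ((Ω - 1) * n) * ((r : ℝ) ^ r * Real.exp (-(r:ℝ))) := by
    rcases Nat.eq_zero_or_pos r with hr0 | hrpos
    · rw [hr0]
      simp only [pow_zero, Nat.cast_zero, neg_zero, Real.exp_zero, mul_one]
      apply Real.exp_le_exp.mpr
      nlinarith [hΩpos, (show (0:ℝ) ≤ (n:ℝ) by positivity)]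
    · have hkR : (0:ℝ) < k := by exact_mod_cast hkpos
      have hrR : (0:ℝ) < r := by exact_mod_cast hrpos
      have hkey := keyIneq hΩpos hΩ ((r:ℝ)/(k:ℝ)) (by positivity)
      rw [Real.log_div (ne_of_gt hrR) (ne_of_gt hkR)] at hkey
      have hkey2 := mul_le_mul_of_nonneg_left hkey (le_of_lt hkR)
      have hn' : (n:ℝ) = (k:ℝ) + (r:ℝ) := by exact_mod_cast hkr.symm
      have hlog : (r:ℝ) * Real.log k ≤ (Ω - 1) * n + k + (r:ℝ) * Real.log r := by
        have hexpand : (k:ℝ) * (Ω + (Ω - 1) * ((r:ℝ)/(k:ℝ)) + (r:ℝ)/(k:ℝ) * (Real.log r - Real.log k))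
            = Ω * k + (Ω - 1) * r + (r:ℝ) * (Real.log r - Real.log k) := by
          field_simp
        have hexpand2 : (Ω - 1) * (n:ℝ) = Ω * k + (Ω - 1) * r - k := by rw [hn']; ring
        rw [hexpand] at hkey2
        linarith [hkey2]
      have e1 : (k:ℝ) ^ r = Real.exp ((r:ℝ) * Real.log k) := by
        rw [Real.exp_nat_mul, Real.exp_log hkR]
      have e2 : (r:ℝ) ^ r = Real.exp ((r:ℝ) * Real.log r) := by
        rw [Real.exp_nat_mul, Real.exp_log hrR]
      rw [e1, e2, ← Real.exp_add, ← Real.exp_add, ← Real.exp_add]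
      apply Real.exp_le_exp.mpr
      linarith [hlog, hn']
  -- combine
  have hrfac : (0:ℝ) < (r.factorial : ℝ) := by exact_mod_cast r.factorial_pos
  rw [← mul_le_mul_iff_of_pos_right hrfac]
  have hcast : ((n.choose k * (k.factorial * k ^ r) : ℕ) : ℝ) * (r.factorial : ℝ)
      = (n.factorial : ℝ) * (k:ℝ) ^ r := by exact_mod_cast congrArg Nat.cast hfact
  rw [hcast]
  calc (n.factorial : ℝ) * (k:ℝ) ^ r
      ≤ (Real.exp 1 * n * (n:ℝ)^n * Real.exp (-(n:ℝ))) * (k:ℝ) ^ r := by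
        apply mul_le_mul_of_nonneg_right hA (by positivity)
    _ = (Real.exp 1 * n * (n:ℝ)^n) * (Real.exp (-(n:ℝ)) * (k:ℝ) ^ r) := by ring
    _ ≤ (Real.exp 1 * n * (n:ℝ)^n) * (Real.exp ((Ω - 1) * n) * ((r : ℝ) ^ r * Real.exp (-(r:ℝ)))) := by
        apply mul_le_mul_of_nonneg_left hC (by positivity)
    _ = (Real.exp 1 * n * Real.exp ((Ω - 1) * n) * (n : ℝ) ^ n) * ((r : ℝ) ^ r * Real.exp (-(r:ℝ))) := by ring
    _ ≤ (Real.exp 1 * n * Real.exp ((Ω - 1) * n) * (n : ℝ) ^ n) * (r.factorial : ℝ) := by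
        apply mul_le_mul_of_nonneg_left hB (by positivity)

end Omega

-- per-term lower bound (no Ω needed)
theorem termLower (n k : ℕ) (hk : 1 ≤ k) (hkn : k + 1 ≤ n) :
    (n : ℝ) ^ n * Real.exp (-(k:ℝ) - 1) * (k:ℝ) ^ (n - k) ≤
      ((n.choose k * (k.factorial * k ^ (n - k)) : ℕ) : ℝ) * ((n - k : ℕ) * ((n-k:ℕ):ℝ) ^ (n - k)) := by
  set r := n - k with hrdef
  have hr1 : 1 ≤ r := by omega
  have hrR : (0:ℝ) < r := by exact_mod_cast hr1
  have hfact : (n.choose k * (k.factorial * k ^ r)) * r.factorial = n.factorial * k ^ r := by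
    have h := Nat.choose_mul_factorial_mul_factorial (show k ≤ n by omega)
    calc (n.choose k * (k.factorial * k ^ r)) * r.factorial
        = (n.choose k * k.factorial * r.factorial) * k ^ r := by ring
      _ = n.factorial * k ^ r := by rw [h]
  have hcast : ((n.choose k * (k.factorial * k ^ r) : ℕ) : ℝ) * (r.factorial : ℝ)
      = (n.factorial : ℝ) * (k:ℝ) ^ r := by exact_mod_cast congrArg Nat.cast hfact
  have h1 : (n:ℝ)^n * (k:ℝ)^r ≤ Real.exp n * (n.factorial:ℝ) * (k:ℝ)^r :=
    mul_le_mul_of_nonneg_right (fact_lower n) (by positivity)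
  have h2 : (r.factorial : ℝ) * Real.exp r ≤ Real.exp 1 * r * (r:ℝ)^r := fact_upper r hr1
  set T : ℝ := ((n.choose k * (k.factorial * k ^ r) : ℕ) : ℝ) with hT
  have hTnonneg : 0 ≤ T := by positivity
  have hnr : (n:ℝ) = (k:ℝ) + (r:ℝ) := by
    have : k + r = n := by omega
    exact_mod_cast this.symm
  have hexpn : Real.exp (n:ℝ) = Real.exp (k:ℝ) * Real.exp (r:ℝ) := by
    rw [hnr, Real.exp_add]
  have hM : (0:ℝ) < (r.factorial : ℝ) * Real.exp (r:ℝ) * Real.exp (k:ℝ) * Real.exp 1 := by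
    positivity
  rw [← mul_le_mul_iff_of_pos_right hM]
  have hcancel : Real.exp (-(k:ℝ) - 1) * (Real.exp (k:ℝ) * Real.exp 1) = 1 := by
    rw [← Real.exp_add ((k:ℝ)) 1, ← Real.exp_add]
    norm_num
  calc (n : ℝ) ^ n * Real.exp (-(k:ℝ) - 1) * (k:ℝ) ^ r * ((r.factorial : ℝ) * Real.exp (r:ℝ) * Real.exp (k:ℝ) * Real.exp 1)
      = ((n:ℝ)^n * (k:ℝ)^r) * ((r.factorial : ℝ) * Real.exp (r:ℝ)) * (Real.exp (-(k:ℝ) - 1) * (Real.exp (k:ℝ) * Real.exp 1)) := by ring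
    _ = ((n:ℝ)^n * (k:ℝ)^r) * ((r.factorial : ℝ) * Real.exp (r:ℝ)) := by rw [hcancel, mul_one]
    _ ≤ (Real.exp (n:ℝ) * (n.factorial:ℝ) * (k:ℝ)^r) * ((r.factorial : ℝ) * Real.exp (r:ℝ)) := by
        apply mul_le_mul_of_nonneg_right h1 (by positivity)
    _ = (T * (r.factorial:ℝ) * Real.exp (n:ℝ)) * ((r.factorial : ℝ) * Real.exp (r:ℝ)) := by
        rw [hcast]; ring
    _ ≤ (T * (r.factorial:ℝ) * Real.exp (n:ℝ)) * (Real.exp 1 * r * (r:ℝ)^r) := by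
        apply mul_le_mul_of_nonneg_left h2 (by positivity)
    _ = T * ((r:ℝ) * (r:ℝ)^r) * ((r.factorial : ℝ) * Real.exp (r:ℝ) * Real.exp (k:ℝ) * Real.exp 1) := by
        rw [hexpn]; ring

end Anal

theorem groupGenCount_eq (n : ℕ) :
    groupGenCount n = ∑ k ∈ Finset.range (n + 1), n.choose k * (k.factorial * k ^ (n - k)) :=
  countCard n

/-- Let `G_n = n^{-n}·|{f ∈ T_n : f injective on its image}|` be the
probability that a uniformly random `f ∈ T_n` generates a group. Then
`(log G_n)/n → Ω − 1` as `n → ∞`, where `Ω` is the omega constant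
(`Ω·e^Ω = 1`); in particular `Ω − 1 < 0`, so `G_n → 0` exponentially fast. -/
theorem stmt_12 (Ω : ℝ) (hΩpos : 0 < Ω) (hΩ : Ω * Real.exp Ω = 1) :
    Filter.Tendsto
      (fun n : ℕ =>
        Real.log ((groupGenCount n : ℝ) / (n : ℝ) ^ n) / (n : ℝ))
      Filter.atTop (nhds (Ω - 1)) ∧ Ω - 1 < 0 := by
  have hΩlt : Ω - 1 < 0 := by nlinarith [Real.add_one_le_exp Ω]
  refine ⟨?_, hΩlt⟩
  have hlogΩ : Real.log Ω = -Ω := by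
    have h : Ω = Real.exp (-Ω) := by
      rw [Real.exp_neg]; field_simp; linarith [hΩ]
    conv_lhs => rw [h]
    rw [Real.log_exp]
  set c : ℝ := 1 / (1 + Ω) with hcdef
  have h1Ω : (0:ℝ) < 1 + Ω := by linarith
  have hc : 0 < c := by positivity
  have hc1 : c < 1 := by rw [hcdef, div_lt_one h1Ω]; linarith
  have h1c : 1 - c = Ω / (1 + Ω) := by rw [hcdef]; field_simp; ring
  set k : ℕ → ℕ := fun n => ⌈(n:ℝ) * c⌉₊ with hkdef
  set r : ℕ → ℕ := fun n => n - k n with hrdef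
  have hklb : ∀ n : ℕ, (n:ℝ) * c ≤ k n := fun n => Nat.le_ceil _
  have hkub : ∀ n : ℕ, (k n : ℝ) < (n:ℝ) * c + 1 := fun n =>
    Nat.ceil_lt_add_one (by positivity)
  -- eventual structural facts
  have hev : ∀ᶠ n : ℕ in atTop, 1 ≤ k n ∧ k n + 1 ≤ n := by
    have h1 : Tendsto (fun n : ℕ => (n:ℝ) * c) atTop atTop :=
      Tendsto.atTop_mul_const hc tendsto_natCast_atTop_atTop
    have h2 : Tendsto (fun n : ℕ => (n:ℝ) * (1 - c)) atTop atTop :=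
      Tendsto.atTop_mul_const (by linarith) tendsto_natCast_atTop_atTop
    filter_upwards [h1.eventually_ge_atTop 1, h2.eventually_ge_atTop 2] with n e1 e2
    constructor
    · have : (1:ℝ) ≤ (k n : ℝ) := le_trans e1 (hklb n)
      exact_mod_cast this
    · have : ((k n : ℝ)) + 1 < (n:ℝ) := by
        have := hkub n
        nlinarith
      have : ((k n + 1 : ℕ) : ℝ) < (n : ℝ) := by push_cast; linarith
      exact le_of_lt (by exact_mod_cast this)
  have hconsadd : Tendsto (fun n : ℕ => c + 1 / (n:ℝ)) atTop (nhds c) := by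
    have := tendsto_const_nhds (α := ℕ) (f := atTop) (x := c) |>.add tendsto_one_div_atTop_nhds_zero_nat
    simpa using this
  -- limit of k n / n
  have hκ : Tendsto (fun n : ℕ => (k n : ℝ) / n) atTop (nhds c) := by
    refine tendsto_of_tendsto_of_tendsto_of_le_of_le' (g := fun _ => c)
      (h := fun n : ℕ => c + 1/(n:ℝ)) tendsto_const_nhds hconsadd ?_ ?_
    · filter_upwards [eventually_ge_atTop 1] with n hn
      have hn' : (0:ℝ) < n := by exact_mod_cast hn
      rw [le_div_iff₀ hn']
      calc c * n = n * c := by ring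
        _ ≤ k n := hklb n
    · filter_upwards [eventually_ge_atTop 1] with n hn
      have hn' : (0:ℝ) < n := by exact_mod_cast hn
      rw [div_le_iff₀ hn']
      have := hkub n
      calc (k n : ℝ) ≤ n * c + 1 := le_of_lt this
        _ = (c + 1/n) * n := by field_simp
  -- limit of r n / n
  have hρ : Tendsto (fun n : ℕ => (r n : ℝ) / n) atTop (nhds (1 - c)) := by
    apply Tendsto.congr' _ (tendsto_const_nhds.sub hκ)
    filter_upwards [hev, eventually_ge_atTop 1] with n hn hn1
    have hkn : k n ≤ n := by omega
    have hn' : (0:ℝ) < n := by exact_mod_cast hn1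
    rw [hrdef]
    simp only
    rw [Nat.cast_sub hkn]
    field_simp
  have hlogk : Tendsto (fun n : ℕ => Real.log ((k n : ℝ) / n)) atTop (nhds (Real.log c)) :=
    hκ.log (ne_of_gt hc)
  have hlogr : Tendsto (fun n : ℕ => Real.log ((r n : ℝ) / n)) atTop (nhds (Real.log (1 - c))) :=
    hρ.log (by linarith)
  have hlogn : Tendsto (fun n : ℕ => Real.log n / n) atTop (nhds 0) :=
    (Real.isLittleO_log_id_atTop.tendsto_div_nhds_zero).comp tendsto_natCast_atTop_atTop
  have hone : Tendsto (fun n : ℕ => 1 / (n:ℝ)) atTop (nhds 0) := tendsto_one_div_atTop_nhds_zero_nat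
  have hlogn1 : Tendsto (fun n : ℕ => Real.log ((n:ℝ) + 1) / n) atTop (nhds 0) := by
    have t1 : Tendsto (fun n : ℕ => Real.log ((n:ℝ)+1) / ((n:ℝ)+1)) atTop (nhds 0) :=
      (Real.isLittleO_log_id_atTop.tendsto_div_nhds_zero).comp
        (tendsto_atTop_add_const_right atTop 1 tendsto_natCast_atTop_atTop)
    have t2 : Tendsto (fun n : ℕ => ((n:ℝ)+1) / n) atTop (nhds 1) := by
      have base : Tendsto (fun n : ℕ => 1 + 1/(n:ℝ)) atTop (nhds 1) := by
        have := tendsto_const_nhds (α := ℕ) (f := atTop) (x := (1:ℝ)) |>.add tendsto_one_div_atTop_nhds_zero_nat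
        simpa using this
      apply Tendsto.congr' _ base
      filter_upwards [eventually_ge_atTop 1] with n hn
      have hn' : (0:ℝ) < n := by exact_mod_cast hn
      field_simp
    have := t1.mul t2
    rw [zero_mul] at this
    apply Tendsto.congr' _ this
    filter_upwards [eventually_ge_atTop 1] with n hn
    have hn' : (0:ℝ) < n := by exact_mod_cast hn
    have h1 : ((n:ℝ)+1) ≠ 0 := by positivity
    field_simp
  -- the lower and upper comparison sequences
  set A : ℕ → ℝ := fun n => -((k n : ℝ)/n) - 1/n
    + ((r n : ℝ)/n) * (Real.log ((k n : ℝ)/n) - Real.log ((r n : ℝ)/n)) - Real.log n / n with hAdef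
  set B : ℕ → ℝ := fun n => (Ω - 1) + 1/n + Real.log ((n:ℝ)+1)/n + Real.log n / n with hBdef
  have hA : Tendsto A atTop (nhds (Ω - 1)) := by
    have lim : Tendsto A atTop (nhds (-c - 0 + (1 - c) * (Real.log c - Real.log (1 - c)) - 0)) := by
      exact (((hκ.neg.sub hone).add (hρ.mul (hlogk.sub hlogr))).sub hlogn)
    have hval : -c - 0 + (1 - c) * (Real.log c - Real.log (1 - c)) - 0 = Ω - 1 := by
      have hlc : Real.log c = -Real.log (1 + Ω) := by
        rw [hcdef, one_div, Real.log_inv]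
      have hl1c : Real.log (1 - c) = -Ω - Real.log (1 + Ω) := by
        rw [h1c, Real.log_div (ne_of_gt hΩpos) (ne_of_gt h1Ω), hlogΩ]
        try ring
      rw [hlc, hl1c]
      have e1 : (-Real.log (1+Ω) - (-Ω - Real.log (1+Ω))) = Ω := by ring
      rw [e1, h1c, hcdef]
      have h0 : (1+Ω) ≠ 0 := ne_of_gt h1Ω
      field_simp
      ring
    rwa [hval] at lim
  have hB : Tendsto B atTop (nhds (Ω - 1)) := by
    have lim : Tendsto B atTop (nhds ((Ω - 1) + 0 + 0 + 0)) :=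
      ((tendsto_const_nhds.add hone).add hlogn1).add hlogn
    simpa using lim
  -- eventual inequalities
  have hlow : ∀ᶠ n : ℕ in atTop, A n ≤ Real.log ((groupGenCount n : ℝ) / (n:ℝ)^n) / n := by
    filter_upwards [hev, eventually_ge_atTop 1] with n hn hn1
    obtain ⟨hk1, hkn⟩ := hn
    have hrn : r n = n - k n := by rw [hrdef]
    have hr1 : 1 ≤ r n := by omega
    have hrlen : r n ≤ n := by omega
    have hkn' : k n ≤ n := by omega
    have hn' : (0:ℝ) < n := by exact_mod_cast hn1
    have hkR : (0:ℝ) < (k n : ℝ) := by exact_mod_cast hk1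
    have hrR : (0:ℝ) < (r n : ℝ) := by exact_mod_cast hr1
    have hrcast : ((n - k n : ℕ) : ℝ) = (r n : ℝ) := by rw [hrn]
    -- single term below the count
    have hterm : (n.choose (k n) * ((k n).factorial * (k n) ^ (n - k n)) : ℕ)
        ≤ groupGenCount n := by
      rw [groupGenCount_eq]
      apply Finset.single_le_sum (f := fun j => n.choose j * (j.factorial * j ^ (n - j)))
        (fun i _ => Nat.zero_le _)
      simp only [Finset.mem_range]; omega
    have htermR : ((n.choose (k n) * ((k n).factorial * (k n) ^ (n - k n)) : ℕ) : ℝ)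
        ≤ (groupGenCount n : ℝ) := by exact_mod_cast hterm
    have hTL := termLower n (k n) hk1 hkn
    rw [hrcast] at hTL
    -- P ≤ count / n^n
    set P : ℝ := Real.exp (-(k n : ℝ) - 1) * (k n : ℝ) ^ (n - k n) / ((r n : ℝ) * (r n : ℝ) ^ (n - k n)) with hPdef
    have hPpos : 0 < P := by rw [hPdef]; positivity
    have hP2 : P ≤ ((n.choose (k n) * ((k n).factorial * (k n) ^ (n - k n)) : ℕ) : ℝ) / (n:ℝ)^n := by
      rw [hPdef, div_le_div_iff₀ (by positivity) (by positivity)]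
      calc Real.exp (-(k n : ℝ) - 1) * (k n : ℝ) ^ (n - k n) * (n:ℝ)^n
          = (n:ℝ)^n * Real.exp (-(k n:ℝ) - 1) * (k n : ℝ)^(n - k n) := by ring
        _ ≤ _ := hTL
    have hP3 : P ≤ (groupGenCount n : ℝ) / (n:ℝ)^n := by
      refine le_trans hP2 ?_
      gcongr
    have hlogP : Real.log P ≤ Real.log ((groupGenCount n : ℝ) / (n:ℝ)^n) :=
      Real.log_le_log hPpos hP3
    -- compute log P
    have hlogPval : Real.log P = (-(k n : ℝ) - 1) + (r n : ℝ) * Real.log (k n)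
        - (Real.log (r n) + (r n : ℝ) * Real.log (r n)) := by
      rw [hPdef, Real.log_div (by positivity) (by positivity),
        Real.log_mul (by positivity) (by positivity),
        Real.log_mul (by positivity) (by positivity), Real.log_exp, Real.log_pow, Real.log_pow]
      try rw [hrn]
      try push_cast [Nat.cast_sub hkn']
      try ring
    -- relate logs to normalized logs
    have hlogkn : Real.log ((k n : ℝ)/n) = Real.log (k n) - Real.log n :=
      Real.log_div (ne_of_gt hkR) (ne_of_gt hn')
    have hlogrn : Real.log ((r n : ℝ)/n) = Real.log (r n) - Real.log n :=
      Real.log_div (ne_of_gt hrR) (ne_of_gt hn')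
    have hlogmono : Real.log (r n : ℝ) ≤ Real.log (n : ℝ) :=
      Real.log_le_log hrR (by exact_mod_cast hrlen)
    have hchain : (-(k n : ℝ) - 1) + (r n : ℝ) * (Real.log ((k n : ℝ)/n) - Real.log ((r n : ℝ)/n))
        - Real.log n ≤ Real.log ((groupGenCount n : ℝ) / (n:ℝ)^n) := by
      rw [hlogkn, hlogrn]
      have : (-(k n : ℝ) - 1) + (r n : ℝ) * ((Real.log (k n) - Real.log n) - (Real.log (r n) - Real.log n))
          - Real.log n ≤ Real.log P := by
        rw [hlogPval]; nlinarith [hlogmono]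
      linarith [hlogP]
    have hAeq : A n = ((-(k n : ℝ) - 1) + (r n : ℝ) * (Real.log ((k n : ℝ)/n) - Real.log ((r n : ℝ)/n))
        - Real.log n) / n := by
      rw [hAdef]
      field_simp
    rw [hAeq]
    exact div_le_div_of_nonneg_right hchain hn'.le
  -- upper bound
  have hup : ∀ᶠ n : ℕ in atTop,
      Real.log ((groupGenCount n : ℝ) / (n:ℝ)^n) / n ≤ B n := by
    filter_upwards [hev, eventually_ge_atTop 1] with n hn hn1
    obtain ⟨hk1, hkn⟩ := hn
    have hn' : (0:ℝ) < n := by exact_mod_cast hn1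
    -- positivity of count
    have hcount1 : 1 ≤ groupGenCount n := by
      have hterm : (1:ℕ) ≤ n.choose (k n) * ((k n).factorial * (k n) ^ (n - k n)) := by
        have h1 : 1 ≤ n.choose (k n) := Nat.choose_pos (by omega)
        have h2 : 1 ≤ (k n).factorial := Nat.factorial_pos _
        have h3 : 1 ≤ (k n) ^ (n - k n) := Nat.one_le_pow _ _ (by omega)
        calc 1 = 1 * (1 * 1) := by ring
          _ ≤ _ := by gcongr
      refine le_trans hterm ?_
      rw [groupGenCount_eq]
      apply Finset.single_le_sum (f := fun j => n.choose j * (j.factorial * j ^ (n - j)))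
        (fun i _ => Nat.zero_le _)
      simp only [Finset.mem_range]; omega
    have hcpos : (0:ℝ) < (groupGenCount n : ℝ) := by exact_mod_cast hcount1
    have hsum : (groupGenCount n : ℝ)
        ≤ (n + 1 : ℝ) * (Real.exp 1 * n * Real.exp ((Ω - 1) * n) * (n:ℝ)^n) := by
      rw [groupGenCount_eq]
      push_cast
      calc ∑ j ∈ Finset.range (n + 1), (n.choose j : ℝ) * ((j.factorial : ℝ) * (j:ℝ) ^ (n - j))
          ≤ ∑ j ∈ Finset.range (n + 1), Real.exp 1 * n * Real.exp ((Ω - 1) * n) * (n:ℝ)^n := by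
            apply Finset.sum_le_sum
            intro j hj
            have hj' : j ≤ n := by simpa [Finset.mem_range, Nat.lt_succ_iff] using hj
            have := termUpper hΩpos hΩ n j hn1 hj'
            push_cast at this
            exact this
        _ = (n + 1 : ℝ) * (Real.exp 1 * n * Real.exp ((Ω - 1) * n) * (n:ℝ)^n) := by
            rw [Finset.sum_const, Finset.card_range]
            push_cast
            ring
    have hdiv : (groupGenCount n : ℝ) / (n:ℝ)^n
        ≤ (n + 1 : ℝ) * (Real.exp 1 * n * Real.exp ((Ω - 1) * n)) := by
      rw [div_le_iff₀ (by positivity)]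
      calc (groupGenCount n : ℝ) ≤ (n + 1 : ℝ) * (Real.exp 1 * n * Real.exp ((Ω - 1) * n) * (n:ℝ)^n) := hsum
        _ = (n + 1 : ℝ) * (Real.exp 1 * n * Real.exp ((Ω - 1) * n)) * (n:ℝ)^n := by ring
    have hlog : Real.log ((groupGenCount n : ℝ) / (n:ℝ)^n)
        ≤ Real.log (n + 1 : ℝ) + (1 + Real.log n + (Ω - 1) * n) := by
      calc Real.log ((groupGenCount n : ℝ) / (n:ℝ)^n)
          ≤ Real.log ((n + 1 : ℝ) * (Real.exp 1 * n * Real.exp ((Ω - 1) * n))) :=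
            Real.log_le_log (by positivity) hdiv
        _ = Real.log (n + 1 : ℝ) + (1 + Real.log n + (Ω - 1) * n) := by
            rw [Real.log_mul (by positivity) (by positivity),
              Real.log_mul (by positivity) (by positivity),
              Real.log_mul (by positivity) (by positivity),
              Real.log_exp, Real.log_exp]
            try ring
    have hBeq : B n = (Real.log (n + 1 : ℝ) + (1 + Real.log n + (Ω - 1) * n)) / n := by
      rw [hBdef]
      field_simp
      ring
    rw [hBeq]
    exact div_le_div_of_nonneg_right hlog hn'.le
  exact tendsto_of_tendsto_of_tendsto_of_le_of_le' hA hB hlow hup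
end

section
/- Let n, r, k ∈ ℕ with 1 ≤ k ≤ r ≤ n. Then ∑_{{A_1,…,A_r} ∈ A(n,r)} ∑_{B ⊆ {1,…,r}, |B| = k} ∏_{i ∈ B} |A_i| = ∑_{s=k}^{n+k−r} C(n,s)·S(n−s, r−k)·C(s,k)·k^{s−k}, where the outer sum on the left is over all partitions of {1,…,n} into r nonempty parts and the inner sum is over all k-element subsets B of the index set of parts. -/
open scoped Classical

/-- The Stirling number of the second kind `S(m, j)`: the number of partitions
of an `m`-element set into `j` nonempty parts (`S(0,0) = 1`, `S(m,0) = 0` for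
`m > 0`). -/
noncomputable def stirling2 (m j : ℕ) : ℕ :=
  Nat.card {𝒜 : Finset (Finset (Fin m)) // isPartitionInto 𝒜 j}

open Finset

/-- Partitions of the finset `S` into `j` nonempty parts. -/
noncomputable def partOf {α : Type*} [Fintype α] [DecidableEq α]
    (S : Finset α) (j : ℕ) : Finset (Finset (Finset α)) :=
  univ.filter (fun 𝒜 => 𝒜.card = j ∧ (∀ A ∈ 𝒜, A.Nonempty) ∧
    (∀ A ∈ 𝒜, ∀ B ∈ 𝒜, A ≠ B → Disjoint A B) ∧ 𝒜.sup id = S)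

lemma mem_partOf {α : Type*} [Fintype α] [DecidableEq α]
    {S : Finset α} {j : ℕ} {𝒜 : Finset (Finset α)} :
    𝒜 ∈ partOf S j ↔ 𝒜.card = j ∧ (∀ A ∈ 𝒜, A.Nonempty) ∧
    (∀ A ∈ 𝒜, ∀ B ∈ 𝒜, A ≠ B → Disjoint A B) ∧ 𝒜.sup id = S := by
  simp [partOf]

lemma isPartitionInto_iff {α : Type*} [Fintype α] [DecidableEq α]
    {𝒜 : Finset (Finset α)} {j : ℕ} :
    isPartitionInto 𝒜 j ↔ 𝒜 ∈ partOf (univ : Finset α) j := by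
  rw [mem_partOf, isPartitionInto]
  have hiff : (∀ x : α, ∃ A ∈ 𝒜, x ∈ A) ↔ 𝒜.sup id = univ := by
    constructor
    · intro h
      apply Finset.eq_univ_iff_forall.mpr
      intro x
      rw [Finset.mem_sup]
      simpa using h x
    · intro h x
      have : x ∈ 𝒜.sup id := h ▸ Finset.mem_univ x
      simpa using Finset.mem_sup.mp this
  tauto

lemma stirling2_eq_card (m j : ℕ) :
    stirling2 m j = (partOf (univ : Finset (Fin m)) j).card := by
  rw [stirling2, Nat.card_eq_fintype_card, Fintype.card_subtype]
  congr 1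
  ext 𝒜
  simp only [mem_filter, mem_univ, true_and]
  rw [isPartitionInto_iff]

lemma image_sup {α β : Type*} [DecidableEq α] [DecidableEq β]
    (𝒜 : Finset (Finset α)) (f : α → β) :
    (𝒜.sup id).image f = 𝒜.sup (fun A => A.image f) := by
  induction 𝒜 using Finset.induction_on with
  | empty => simp
  | insert _ _ h ih =>
    rw [Finset.sup_insert, Finset.sup_insert, id_eq, Finset.sup_eq_union,
      Finset.sup_eq_union, Finset.image_union, ih]

lemma card_partOf_image {α β : Type*} [Fintype α] [DecidableEq α]
    [Fintype β] [DecidableEq β] {f : α → β} (hf : Function.Injective f)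
    (S : Finset α) (j : ℕ) :
    (partOf (S.image f) j).card = (partOf S j).card := by
  symm
  refine Finset.card_bij (fun 𝒜 _ => 𝒜.image (fun A => A.image f)) ?_ ?_ ?_
  · -- maps to
    intro 𝒜 h𝒜
    obtain ⟨hc, hne, hd, hsup⟩ := mem_partOf.mp h𝒜
    refine mem_partOf.mpr ⟨?_, ?_, ?_, ?_⟩
    · rw [Finset.card_image_of_injective _ (Finset.image_injective hf), hc]
    · intro A hA
      obtain ⟨A', hA', rfl⟩ := Finset.mem_image.mp hA
      exact (hne A' hA').image f
    · intro A hA A' hA' hne'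
      obtain ⟨X, hX, rfl⟩ := Finset.mem_image.mp hA
      obtain ⟨X', hX', rfl⟩ := Finset.mem_image.mp hA'
      have : X ≠ X' := fun h => hne' (by rw [h])
      exact (Finset.disjoint_image hf).mpr (hd X hX X' hX' this)
    · rw [Finset.sup_image, ← hsup, image_sup]
      rfl
  · -- inj
    intro 𝒜₁ h₁ 𝒜₂ h₂ h
    exact Finset.image_injective (Finset.image_injective hf) h
  · -- surj
    intro ℬ hℬ
    obtain ⟨hc, hne, hd, hsup⟩ := mem_partOf.mp hℬ
    have hXS : ∀ X ∈ ℬ, X ⊆ S.image f := by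
      intro X hX
      rw [← hsup]
      exact Finset.le_sup (f := id) hX
    set g : Finset β → Finset α := fun X => S.filter (fun a => f a ∈ X) with hg
    have hgX : ∀ X ∈ ℬ, (g X).image f = X := by
      intro X hX
      ext x
      simp only [hg, Finset.mem_image, Finset.mem_filter]
      constructor
      · rintro ⟨a, ⟨_, hfa⟩, rfl⟩; exact hfa
      · intro hx
        obtain ⟨a, haS, rfl⟩ := Finset.mem_image.mp (hXS X hX hx)
        exact ⟨a, ⟨haS, hx⟩, rfl⟩
    refine ⟨ℬ.image g, mem_partOf.mpr ⟨?_, ?_, ?_, ?_⟩, ?_⟩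
    · rw [Finset.card_image_of_injOn, hc]
      intro X hX X' hX' h
      rw [← hgX X hX, ← hgX X' hX', h]
    · intro A hA
      obtain ⟨X, hX, rfl⟩ := Finset.mem_image.mp hA
      have := hne X hX
      rw [← hgX X hX] at this
      exact Finset.Nonempty.of_image this
    · intro A hA A' hA' hne'
      obtain ⟨X, hX, rfl⟩ := Finset.mem_image.mp hA
      obtain ⟨X', hX', rfl⟩ := Finset.mem_image.mp hA'
      have hXX' : X ≠ X' := fun h => hne' (by rw [h])
      have hdXX' := hd X hX X' hX' hXX'
      rw [Finset.disjoint_left]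
      intro a ha ha'
      simp only [hg, Finset.mem_filter] at ha ha'
      exact (Finset.disjoint_left.mp hdXX') ha.2 ha'.2
    · apply Finset.image_injective hf
      rw [image_sup, Finset.sup_image]
      calc ℬ.sup ((fun A => A.image f) ∘ g) = ℬ.sup id := by
            apply Finset.sup_congr rfl
            intro X hX
            exact hgX X hX
      _ = S.image f := hsup
    · rw [Finset.image_image]
      calc ℬ.image ((fun A => A.image f) ∘ g) = ℬ.image id := by
            apply Finset.image_congr
            intro X hX
            exact hgX X hX
      _ = ℬ := Finset.image_id

lemma card_partOf {α : Type*} [Fintype α] [DecidableEq α]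
    (S : Finset α) (j : ℕ) :
    (partOf S j).card = stirling2 S.card j := by
  rw [stirling2_eq_card]
  have h1 : ((univ : Finset ↥S).image (Subtype.val)) = S := by
    simp [Finset.univ_eq_attach, Finset.attach_image_val]
  have h2 : ((univ : Finset ↥S).image S.equivFin) = univ :=
    Finset.image_univ_of_surjective S.equivFin.surjective
  calc (partOf S j).card = (partOf (univ : Finset ↥S) j).card := by
        conv_lhs => rw [← h1]
        exact card_partOf_image Subtype.val_injective _ _
  _ = (partOf (univ : Finset (Fin S.card)) j).card := by
        conv_rhs => rw [← h2]
        exact (card_partOf_image S.equivFin.injective _ _).symm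

lemma stirling2_of_lt {m j : ℕ} (h : m < j) : stirling2 m j = 0 := by
  rw [stirling2_eq_card, Finset.card_eq_zero, Finset.eq_empty_iff_forall_notMem]
  intro 𝒜 h𝒜
  obtain ⟨hc, hne, hd, hsup⟩ := mem_partOf.mp h𝒜
  have h1 : (𝒜.sup id).card = ∑ A ∈ 𝒜, A.card := by
    rw [Finset.sup_eq_biUnion]
    show (𝒜.biUnion fun A => A).card = _
    rw [Finset.card_biUnion hd]
  have h2 : 𝒜.card ≤ ∑ A ∈ 𝒜, A.card := by
    calc 𝒜.card = ∑ _A ∈ 𝒜, 1 := by simp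
    _ ≤ ∑ A ∈ 𝒜, A.card :=
      Finset.sum_le_sum (fun A hA => Finset.card_pos.mpr (hne A hA))
  have h3 : (𝒜.sup id).card ≤ m := by
    calc (𝒜.sup id).card ≤ (univ : Finset (Fin m)).card := Finset.card_le_univ _
    _ = m := by simp
  omega

/-- Claim 1: the product of part sizes counts transversals. -/
lemma prod_card_eq_card_transversals {α : Type*} [Fintype α] [DecidableEq α]
    (B : Finset (Finset α))
    (hd : ∀ A ∈ B, ∀ A' ∈ B, A ≠ A' → Disjoint A A') :
    ∏ A ∈ B, A.card =
      ((B.sup id).powerset.filter (fun R => ∀ A ∈ B, (R ∩ A).card = 1)).card := by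
  induction B using Finset.induction_on with
  | empty => simp
  | @insert A₀ B' hA₀B' ih =>
    have hd' : ∀ A ∈ B', ∀ A' ∈ B', A ≠ A' → Disjoint A A' := fun A hA A' hA' h =>
      hd A (Finset.mem_insert_of_mem hA) A' (Finset.mem_insert_of_mem hA') h
    have hA₀S' : Disjoint A₀ (B'.sup id) := by
      rw [Finset.disjoint_sup_right]
      intro A hA
      exact hd A₀ (Finset.mem_insert_self _ _) A (Finset.mem_insert_of_mem hA)
        (fun h => hA₀B' (h ▸ hA))
    rw [Finset.prod_insert hA₀B', ih hd']
    rw [← Finset.card_product]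
    refine Finset.card_bij (fun p _ => insert p.1 p.2) ?_ ?_ ?_
    · rintro ⟨x, R⟩ hp
      dsimp only
      rw [Finset.mem_product] at hp
      obtain ⟨hx, hR⟩ := hp
      rw [Finset.mem_filter, Finset.mem_powerset] at hR
      obtain ⟨hRS', hRtr⟩ := hR
      rw [Finset.mem_filter, Finset.mem_powerset]
      constructor
      · intro a ha
        rw [Finset.sup_insert, id_eq, Finset.sup_eq_union]
        rcases Finset.mem_insert.mp ha with rfl | ha'
        · exact Finset.mem_union_left _ hx
        · exact Finset.mem_union_right _ (hRS' ha')
      · intro A hA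
        rcases Finset.mem_insert.mp hA with rfl | hA'
        · have hxA : x ∈ A := hx
          have hRA : R ∩ A = ∅ := by
            rw [Finset.eq_empty_iff_forall_notMem]
            intro a ha
            rw [Finset.mem_inter] at ha
            exact Finset.disjoint_left.mp hA₀S' ha.2 (hRS' ha.1)
          rw [Finset.insert_inter_of_mem hxA, hRA]
          simp
        · have hxA : x ∉ A := by
            intro hxA
            have hAS' : A ⊆ B'.sup id := Finset.le_sup (f := id) hA'
            exact Finset.disjoint_left.mp hA₀S' hx (hAS' hxA)
          rw [Finset.insert_inter_of_notMem hxA]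
          exact hRtr A hA'
    · rintro ⟨x₁, R₁⟩ h₁ ⟨x₂, R₂⟩ h₂ h
      dsimp only at h
      rw [Finset.mem_product] at h₁ h₂
      obtain ⟨hx₁, hR₁⟩ := h₁
      obtain ⟨hx₂, hR₂⟩ := h₂
      rw [Finset.mem_filter, Finset.mem_powerset] at hR₁ hR₂
      have hR₁S' := hR₁.1
      have hR₂S' := hR₂.1
      have hx₁R₂ : x₁ ∉ R₂ := fun hc => Finset.disjoint_left.mp hA₀S' hx₁ (hR₂S' hc)
      have hx₂R₁ : x₂ ∉ R₁ := fun hc => Finset.disjoint_left.mp hA₀S' hx₂ (hR₁S' hc)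
      have hx12 : x₁ = x₂ := by
        have : x₁ ∈ insert x₂ R₂ := h ▸ Finset.mem_insert_self x₁ R₁
        rcases Finset.mem_insert.mp this with h' | h'
        · exact h'
        · exact absurd h' hx₁R₂
      subst hx12
      have hR12 : R₁ = R₂ := by
        ext a
        constructor
        · intro ha
          have : a ∈ insert x₁ R₂ := h ▸ Finset.mem_insert_of_mem ha
          rcases Finset.mem_insert.mp this with rfl | h'
          · exact absurd ha hx₂R₁
          · exact h'
        · intro ha
          have : a ∈ insert x₁ R₁ := h ▸ Finset.mem_insert_of_mem ha
          rcases Finset.mem_insert.mp this with rfl | h'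
          · exact absurd ha hx₁R₂
          · exact h'
      rw [hR12]
    · intro R hR
      rw [Finset.mem_filter, Finset.mem_powerset] at hR
      obtain ⟨hRS, hRtr⟩ := hR
      have h1 : (R ∩ A₀).card = 1 := hRtr A₀ (Finset.mem_insert_self _ _)
      obtain ⟨x, hx⟩ := Finset.card_eq_one.mp h1
      have hxR : x ∈ R := by
        have : x ∈ R ∩ A₀ := hx ▸ Finset.mem_singleton_self x
        exact (Finset.mem_inter.mp this).1
      have hxA₀ : x ∈ A₀ := by
        have : x ∈ R ∩ A₀ := hx ▸ Finset.mem_singleton_self x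
        exact (Finset.mem_inter.mp this).2
      refine ⟨⟨x, R \ A₀⟩, ?_, ?_⟩
      · rw [Finset.mem_product]
        refine ⟨hxA₀, ?_⟩
        rw [Finset.mem_filter, Finset.mem_powerset]
        constructor
        · intro a ha
          rw [Finset.mem_sdiff] at ha
          have : a ∈ (insert A₀ B').sup id := hRS ha.1
          rw [Finset.sup_insert, id_eq, Finset.sup_eq_union] at this
          rcases Finset.mem_union.mp this with h' | h'
          · exact absurd h' ha.2
          · exact h'
        · intro A hA
          have hAd : Disjoint A A₀ := hd A (Finset.mem_insert_of_mem hA) A₀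
            (Finset.mem_insert_self _ _) (fun h => hA₀B' (h ▸ hA))
          have : R \ A₀ ∩ A = R ∩ A := by
            ext a
            simp only [Finset.mem_inter, Finset.mem_sdiff]
            constructor
            · rintro ⟨⟨h1', _⟩, h2'⟩; exact ⟨h1', h2'⟩
            · rintro ⟨h1', h2'⟩
              exact ⟨⟨h1', fun hc => Finset.disjoint_left.mp hAd h2' hc⟩, h2'⟩
          rw [this]
          exact hRtr A (Finset.mem_insert_of_mem hA)
      · dsimp only
        ext a
        simp only [Finset.mem_insert, Finset.mem_sdiff]
        constructor
        · rintro (rfl | ⟨ha, _⟩)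
          · exact hxR
          · exact ha
        · intro ha
          by_cases haA₀ : a ∈ A₀
          · left
            have : a ∈ R ∩ A₀ := Finset.mem_inter.mpr ⟨ha, haA₀⟩
            rw [hx] at this
            exact Finset.mem_singleton.mp this
          · right
            exact ⟨ha, haA₀⟩

/-- Claim 3: partitions of `S` into `k` parts with a fixed transversal `R`. -/
lemma card_part_with_transversal {α : Type*} [Fintype α] [DecidableEq α]
    {S R : Finset α} {k : ℕ} (hR : R ⊆ S) (hRk : R.card = k) :
    ((partOf S k).filter (fun B => ∀ A ∈ B, (R ∩ A).card = 1)).card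
      = k ^ (S.card - k) := by
  have hpi : (((S \ R).pi (fun _ => R)).card : ℕ) = k ^ (S.card - k) := by
    rw [Finset.card_pi, Finset.prod_const, hRk, Finset.card_sdiff_of_subset hR, hRk]
  rw [← hpi]
  symm
  have hmem : ∀ (g : (a : α) → a ∈ S \ R → α) (y a : α),
      a ∈ insert y ((S \ R).filter (fun x => ∃ hx : x ∈ S \ R, g x hx = y)) ↔
        (a = y ∨ ∃ ha : a ∈ S \ R, g a ha = y) := by
    intro g y a
    simp only [Finset.mem_insert, Finset.mem_filter]
    constructor
    · rintro (rfl | ⟨haSR, hx, e⟩)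
      · exact Or.inl rfl
      · exact Or.inr ⟨hx, e⟩
    · rintro (rfl | ⟨ha, e⟩)
      · exact Or.inl rfl
      · exact Or.inr ⟨ha, ha, e⟩
  refine Finset.card_bij (fun g _ => R.image
    (fun y => insert y ((S \ R).filter (fun x => ∃ hx : x ∈ S \ R, g x hx = y))))
    ?_ ?_ ?_
  · -- maps to
    intro g hg
    rw [Finset.mem_pi] at hg
    have hinj : ∀ y₁ ∈ R, ∀ y₂ ∈ R,
        insert y₁ ((S \ R).filter (fun x => ∃ hx : x ∈ S \ R, g x hx = y₁)) =
        insert y₂ ((S \ R).filter (fun x => ∃ hx : x ∈ S \ R, g x hx = y₂)) → y₁ = y₂ := by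
      intro y₁ hy₁ y₂ hy₂ h
      have : y₁ ∈ insert y₂ ((S \ R).filter (fun x => ∃ hx : x ∈ S \ R, g x hx = y₂)) :=
        h ▸ Finset.mem_insert_self _ _
      rcases (hmem g y₂ y₁).mp this with h' | ⟨h', _⟩
      · exact h'
      · exact absurd (Finset.mem_sdiff.mp h').2 (fun _ => (Finset.mem_sdiff.mp h').2 hy₁)
    have hPsubS : ∀ y ∈ R,
        insert y ((S \ R).filter (fun x => ∃ hx : x ∈ S \ R, g x hx = y)) ⊆ S := by
      intro y hy
      apply Finset.insert_subset (hR hy)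
      exact (Finset.filter_subset _ _).trans (Finset.sdiff_subset)
    have hRinter : ∀ y ∈ R,
        R ∩ insert y ((S \ R).filter (fun x => ∃ hx : x ∈ S \ R, g x hx = y)) = {y} := by
      intro y hy
      ext a
      rw [Finset.mem_inter, hmem g y a, Finset.mem_singleton]
      constructor
      · rintro ⟨haR, rfl | ⟨ha, _⟩⟩
        · rfl
        · exact absurd haR (Finset.mem_sdiff.mp ha).2
      · rintro rfl
        exact ⟨hy, Or.inl rfl⟩
    rw [Finset.mem_filter]
    constructor
    · refine mem_partOf.mpr ⟨?_, ?_, ?_, ?_⟩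
      · rw [Finset.card_image_of_injOn hinj, hRk]
      · intro A hA
        obtain ⟨y, hy, rfl⟩ := Finset.mem_image.mp hA
        exact ⟨y, Finset.mem_insert_self _ _⟩
      · intro A hA A' hA' hne'
        obtain ⟨y, hy, rfl⟩ := Finset.mem_image.mp hA
        obtain ⟨y', hy', rfl⟩ := Finset.mem_image.mp hA'
        have hyy' : y ≠ y' := fun h => hne' (by rw [h])
        rw [Finset.disjoint_left]
        intro a ha ha'
        rcases (hmem g y a).mp ha with rfl | ⟨haS, e⟩
        · rcases (hmem g y' a).mp ha' with h' | ⟨haS', _⟩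
          · exact hyy' h'
          · exact (Finset.mem_sdiff.mp haS').2 hy
        · rcases (hmem g y' a).mp ha' with rfl | ⟨haS', e'⟩
          · exact (Finset.mem_sdiff.mp haS).2 hy'
          · exact hyy' (e ▸ e' ▸ rfl)
      · apply le_antisymm
        · apply Finset.sup_le
          intro A hA
          obtain ⟨y, hy, rfl⟩ := Finset.mem_image.mp hA
          exact hPsubS y hy
        · intro x hxS
          rw [Finset.mem_sup]
          by_cases hx : x ∈ R
          · exact ⟨_, Finset.mem_image_of_mem _ hx, Finset.mem_insert_self _ _⟩
          · have hxSR : x ∈ S \ R := Finset.mem_sdiff.mpr ⟨hxS, hx⟩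
            refine ⟨_, Finset.mem_image_of_mem _ (hg x hxSR), ?_⟩
            exact (hmem g (g x hxSR) x).mpr (Or.inr ⟨hxSR, rfl⟩)
    · intro A hA
      obtain ⟨y, hy, rfl⟩ := Finset.mem_image.mp hA
      rw [hRinter y hy, Finset.card_singleton]
  · -- injective
    intro g₁ hg₁ g₂ hg₂ h
    rw [Finset.mem_pi] at hg₁ hg₂
    funext x hx
    have hy₁ : g₁ x hx ∈ R := hg₁ x hx
    have hxP : x ∈ insert (g₁ x hx)
        ((S \ R).filter (fun z => ∃ hz : z ∈ S \ R, g₁ z hz = g₁ x hx)) :=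
      (hmem g₁ (g₁ x hx) x).mpr (Or.inr ⟨hx, rfl⟩)
    have hPmem : insert (g₁ x hx)
        ((S \ R).filter (fun z => ∃ hz : z ∈ S \ R, g₁ z hz = g₁ x hx)) ∈
        R.image (fun y => insert y ((S \ R).filter (fun z => ∃ hz : z ∈ S \ R, g₂ z hz = y))) := by
      rw [← h]
      exact Finset.mem_image_of_mem _ hy₁
    obtain ⟨y₂, hy₂, hPeq⟩ := Finset.mem_image.mp hPmem
    have hxP₂ : x ∈ insert y₂ ((S \ R).filter (fun z => ∃ hz : z ∈ S \ R, g₂ z hz = y₂)) :=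
      hPeq ▸ hxP
    have hg₂x : g₂ x hx = y₂ := by
      rcases (hmem g₂ y₂ x).mp hxP₂ with rfl | ⟨hx', e⟩
      · exact absurd hy₂ (Finset.mem_sdiff.mp hx).2
      · exact e
    have hg₁x : g₁ x hx = y₂ := by
      have : g₁ x hx ∈ insert y₂ ((S \ R).filter (fun z => ∃ hz : z ∈ S \ R, g₂ z hz = y₂)) :=
        hPeq ▸ Finset.mem_insert_self _ _
      rcases (hmem g₂ y₂ _).mp this with h' | ⟨h', _⟩
      · exact h'
      · exact absurd hy₁ (Finset.mem_sdiff.mp h').2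
    rw [hg₁x, hg₂x]
  · -- surjective
    intro B hB
    rw [Finset.mem_filter] at hB
    obtain ⟨hB1, htr⟩ := hB
    obtain ⟨hBc, hBne, hBd, hBsup⟩ := mem_partOf.mp hB1
    have hAS : ∀ A ∈ B, A ⊆ S := fun A hA => hBsup ▸ Finset.le_sup (f := id) hA
    have hupart : ∀ x ∈ S, ∀ A ∈ B, ∀ A' ∈ B, x ∈ A → x ∈ A' → A = A' := by
      intro x _ A hA A' hA' hxA hxA'
      by_contra hne'
      exact Finset.disjoint_left.mp (hBd A hA A' hA' hne') hxA hxA'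
    have hex : ∀ x, x ∈ S \ R → ∃! y, y ∈ R ∧ ∃ A ∈ B, x ∈ A ∧ y ∈ A := by
      intro x hx
      have hxS : x ∈ S := (Finset.mem_sdiff.mp hx).1
      obtain ⟨A₀, hA₀, hxA₀⟩ := Finset.mem_sup.mp (hBsup ▸ hxS)
      obtain ⟨y₀, hy₀⟩ := Finset.card_eq_one.mp (htr A₀ hA₀)
      have hy₀R : y₀ ∈ R := by
        have : y₀ ∈ R ∩ A₀ := hy₀ ▸ Finset.mem_singleton_self y₀
        exact (Finset.mem_inter.mp this).1
      have hy₀A₀ : y₀ ∈ A₀ := by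
        have : y₀ ∈ R ∩ A₀ := hy₀ ▸ Finset.mem_singleton_self y₀
        exact (Finset.mem_inter.mp this).2
      refine ⟨y₀, ⟨hy₀R, A₀, hA₀, hxA₀, hy₀A₀⟩, ?_⟩
      rintro y' ⟨hy'R, A', hA', hxA', hy'A'⟩
      have : A' = A₀ := hupart x hxS A' hA' A₀ hA₀ hxA' hxA₀
      subst this
      have : y' ∈ R ∩ A' := Finset.mem_inter.mpr ⟨hy'R, hy'A'⟩
      rw [hy₀] at this
      exact Finset.mem_singleton.mp this
    refine ⟨fun x hx => Finset.choose (fun y => ∃ A ∈ B, x ∈ A ∧ y ∈ A) R (hex x hx), ?_, ?_⟩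
    · rw [Finset.mem_pi]
      intro a ha
      exact Finset.choose_mem _ _ _
    · dsimp only
      set g : (a : α) → a ∈ S \ R → α :=
        fun x hx => Finset.choose (fun y => ∃ A ∈ B, x ∈ A ∧ y ∈ A) R (hex x hx) with hgdef
      have hgR : ∀ x (hx : x ∈ S \ R), g x hx ∈ R := fun x hx => Finset.choose_mem _ _ _
      have hgprop : ∀ x (hx : x ∈ S \ R), ∃ A ∈ B, x ∈ A ∧ g x hx ∈ A :=
        fun x hx => Finset.choose_property (fun y => ∃ A ∈ B, x ∈ A ∧ y ∈ A) R (hex x hx)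
      have hc1 : ∀ y ∈ R, ∀ A ∈ B, y ∈ A →
          insert y ((S \ R).filter (fun x => ∃ hx : x ∈ S \ R, g x hx = y)) = A := by
        intro y hy A hA hyA
        have hRA : R ∩ A = {y} := by
          obtain ⟨z, hz⟩ := Finset.card_eq_one.mp (htr A hA)
          have hyz : y ∈ ({z} : Finset α) := hz ▸ Finset.mem_inter.mpr ⟨hy, hyA⟩
          rw [← Finset.mem_singleton.mp hyz] at hz
          exact hz
        apply Finset.Subset.antisymm
        · intro a ha
          rcases (hmem g y a).mp ha with rfl | ⟨ha', e⟩
          · exact hyA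
          · obtain ⟨A', hA', haA', hgA'⟩ := hgprop a ha'
            rw [e] at hgA'
            have : A' = A := hupart y (hR hy) A' hA' A hA hgA' hyA
            exact this ▸ haA'
        · intro a haA
          by_cases haR : a ∈ R
          · have : a ∈ R ∩ A := Finset.mem_inter.mpr ⟨haR, haA⟩
            rw [hRA, Finset.mem_singleton] at this
            exact this ▸ Finset.mem_insert_self _ _
          · have haS : a ∈ S := hAS A hA haA
            have ha' : a ∈ S \ R := Finset.mem_sdiff.mpr ⟨haS, haR⟩
            have : g a ha' = y := by
              obtain ⟨A', hA', haA', hgA'⟩ := hgprop a ha'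
              have hAA' : A' = A := hupart a haS A' hA' A hA haA' haA
              subst hAA'
              have : g a ha' ∈ R ∩ A' := Finset.mem_inter.mpr ⟨hgR a ha', hgA'⟩
              rw [hRA, Finset.mem_singleton] at this
              exact this
            exact (hmem g y a).mpr (Or.inr ⟨ha', this⟩)
      apply Finset.Subset.antisymm
      · intro X hX
        obtain ⟨y, hy, rfl⟩ := Finset.mem_image.mp hX
        obtain ⟨A, hA, hyA⟩ := Finset.mem_sup.mp (hBsup ▸ hR hy)
        rw [hc1 y hy A hA hyA]
        exact hA
      · intro A hA
        obtain ⟨y, hy⟩ := Finset.card_eq_one.mp (htr A hA)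
        have hyR : y ∈ R := by
          have : y ∈ R ∩ A := hy ▸ Finset.mem_singleton_self y
          exact (Finset.mem_inter.mp this).1
        have hyA : y ∈ A := by
          have : y ∈ R ∩ A := hy ▸ Finset.mem_singleton_self y
          exact (Finset.mem_inter.mp this).2
        rw [Finset.mem_image]
        exact ⟨y, hyR, hc1 y hyR A hA hyA⟩

/-- Lemma C. -/
lemma sum_prod_card_partOf {α : Type*} [Fintype α] [DecidableEq α]
    (S : Finset α) (k : ℕ) :
    ∑ B ∈ partOf S k, ∏ A ∈ B, A.card
      = S.card.choose k * k ^ (S.card - k) := by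
  have h1 : ∀ B ∈ partOf S k, ∏ A ∈ B, A.card
      = (S.powerset.filter (fun R => ∀ A ∈ B, (R ∩ A).card = 1)).card := by
    intro B hB
    obtain ⟨-, -, hd, hsup⟩ := mem_partOf.mp hB
    rw [prod_card_eq_card_transversals B hd, hsup]
  rw [Finset.sum_congr rfl h1]
  have h2 : ∑ B ∈ partOf S k, (S.powerset.filter (fun R => ∀ A ∈ B, (R ∩ A).card = 1)).card
      = ∑ R ∈ S.powerset, ((partOf S k).filter (fun B => ∀ A ∈ B, (R ∩ A).card = 1)).card := by
    simp only [Finset.card_eq_sum_ones]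
    refine Finset.sum_comm' ?_
    intro B R
    simp only [Finset.mem_filter]
    tauto
  rw [h2]
  have hzero : ∀ R ∈ S.powerset, R.card ≠ k →
      ((partOf S k).filter (fun B => ∀ A ∈ B, (R ∩ A).card = 1)).card = 0 := by
    intro R hRp hRk
    rw [Finset.card_eq_zero, Finset.filter_eq_empty_iff]
    intro B hB htr
    apply hRk
    obtain ⟨hBc, -, hBd, hBsup⟩ := mem_partOf.mp hB
    have hRS : R ⊆ S := Finset.mem_powerset.mp hRp
    have hRe : R = B.biUnion (fun A => R ∩ A) := by
      ext a
      simp only [Finset.mem_biUnion, Finset.mem_inter]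
      constructor
      · intro ha
        obtain ⟨A, hA, haA⟩ := Finset.mem_sup.mp (hBsup ▸ hRS ha)
        exact ⟨A, hA, ha, haA⟩
      · rintro ⟨A, -, ha, -⟩
        exact ha
    have hdisj : ∀ A ∈ B, ∀ A' ∈ B, A ≠ A' → Disjoint (R ∩ A) (R ∩ A') :=
      fun A hA A' hA' h => (hBd A hA A' hA' h).mono
        Finset.inter_subset_right Finset.inter_subset_right
    rw [hRe, Finset.card_biUnion hdisj, Finset.sum_congr rfl htr, Finset.sum_const,
      smul_eq_mul, mul_one, hBc]
  rw [← Finset.sum_filter_of_ne (p := fun R : Finset α => R.card = k)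
    (fun R hR h => by by_contra hc; exact h (hzero R hR hc))]
  rw [← Finset.powersetCard_eq_filter]
  have h3 : ∀ R ∈ S.powersetCard k,
      ((partOf S k).filter (fun B => ∀ A ∈ B, (R ∩ A).card = 1)).card
        = k ^ (S.card - k) := by
    intro R hR
    obtain ⟨hRS, hRk⟩ := Finset.mem_powersetCard.mp hR
    exact card_part_with_transversal hRS hRk
  rw [Finset.sum_congr rfl h3, Finset.sum_const, smul_eq_mul, Finset.card_powersetCard]

/-- counting partitions extending a given partial partition. -/
lemma card_extensions {α : Type*} [Fintype α] [DecidableEq α]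
    {B : Finset (Finset α)} {k r : ℕ} (hk : B ∈ partOf (B.sup id) k)
    (hkr : k ≤ r) :
    ((univ.filter (fun 𝒜 : Finset (Finset α) => isPartitionInto 𝒜 r)).filter
        (fun 𝒜 => B ⊆ 𝒜 ∧ B.card = k)).card
      = (partOf (B.sup id)ᶜ (r - k)).card := by
  obtain ⟨hBc, hBne, hBd, -⟩ := mem_partOf.mp hk
  set S := B.sup id with hS
  refine Finset.card_bij (fun 𝒜 _ => 𝒜 \ B) ?_ ?_ ?_
  · intro 𝒜 h𝒜
    simp only [mem_filter, mem_univ, true_and] at h𝒜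
    obtain ⟨⟨hc, hne, hd, hcov⟩, hsub, -⟩ := h𝒜
    refine mem_partOf.mpr ⟨?_, ?_, ?_, ?_⟩
    · rw [Finset.card_sdiff_of_subset hsub, hc, hBc]
    · exact fun A hA => hne A (Finset.mem_sdiff.mp hA).1
    · intro A hA A' hA' hne'
      exact hd A (Finset.mem_sdiff.mp hA).1 A' (Finset.mem_sdiff.mp hA').1 hne'
    · ext x
      simp only [Finset.mem_sup, Finset.mem_compl, Finset.mem_sdiff, id_eq]
      constructor
      · rintro ⟨A, ⟨hA𝒜, hAB⟩, hxA⟩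
        intro hxS
        rw [hS] at hxS
        obtain ⟨A', hA'B, hxA'⟩ := Finset.mem_sup.mp hxS
        have hA'𝒜 : A' ∈ 𝒜 := hsub hA'B
        have hAA' : A ≠ A' := fun h => hAB (h ▸ hA'B)
        exact Finset.disjoint_left.mp (hd A hA𝒜 A' hA'𝒜 hAA') hxA hxA'
      · intro hxS
        obtain ⟨A, hA, hxA⟩ := hcov x
        refine ⟨A, ⟨hA, fun hAB => hxS ?_⟩, hxA⟩
        rw [hS]
        exact Finset.mem_sup.mpr ⟨A, hAB, hxA⟩
  · intro 𝒜₁ h₁ 𝒜₂ h₂ h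
    simp only [mem_filter, mem_univ, true_and] at h₁ h₂
    have e1 : 𝒜₁ = 𝒜₁ \ B ∪ B := (Finset.sdiff_union_of_subset h₁.2.1).symm
    have e2 : 𝒜₂ = 𝒜₂ \ B ∪ B := (Finset.sdiff_union_of_subset h₂.2.1).symm
    rw [e1, e2]
    rw [h]
  · intro 𝒞 h𝒞
    obtain ⟨hc, hne, hd, hsup⟩ := mem_partOf.mp h𝒞
    have hdisjCB : Disjoint 𝒞 B := by
      rw [Finset.disjoint_left]
      intro A hA𝒞 hAB
      have ha : A ⊆ Sᶜ := hsup ▸ Finset.le_sup (f := id) hA𝒞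
      have hb : A ⊆ S := hS ▸ Finset.le_sup (f := id) hAB
      obtain ⟨x, hx⟩ := hne A hA𝒞
      exact (Finset.mem_compl.mp (ha hx)) (hb hx)
    refine ⟨𝒞 ∪ B, ?_, ?_⟩
    · simp only [mem_filter, mem_univ, true_and]
      refine ⟨⟨?_, ?_, ?_, ?_⟩, Finset.subset_union_right, hBc⟩
      · rw [Finset.card_union_of_disjoint hdisjCB, hc, hBc]
        omega
      · intro A hA
        rcases Finset.mem_union.mp hA with h | h
        · exact hne A h
        · exact hBne A h
      · intro A hA A' hA' hne'
        rcases Finset.mem_union.mp hA with h | h <;> rcases Finset.mem_union.mp hA' with h' | h'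
        · exact hd A h A' h' hne'
        · have ha : A ⊆ Sᶜ := hsup ▸ Finset.le_sup (f := id) h
          have hb : A' ⊆ S := hS ▸ Finset.le_sup (f := id) h'
          rw [Finset.disjoint_left]
          intro x hx hx'
          exact (Finset.mem_compl.mp (ha hx)) (hb hx')
        · have ha : A ⊆ S := hS ▸ Finset.le_sup (f := id) h
          have hb : A' ⊆ Sᶜ := hsup ▸ Finset.le_sup (f := id) h'
          rw [Finset.disjoint_left]
          intro x hx hx'
          exact (Finset.mem_compl.mp (hb hx')) (ha hx)
        · exact hBd A h A' h' hne'
      · intro x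
        by_cases hx : x ∈ S
        · rw [hS] at hx
          obtain ⟨A, hA, hxA⟩ := Finset.mem_sup.mp hx
          exact ⟨A, Finset.mem_union_right _ hA, hxA⟩
        · have hx' : x ∈ 𝒞.sup id := hsup ▸ Finset.mem_compl.mpr hx
          obtain ⟨A, hA, hxA⟩ := Finset.mem_sup.mp hx'
          exact ⟨A, Finset.mem_union_left _ hA, hxA⟩
    · ext A
      simp only [Finset.mem_sdiff, Finset.mem_union]
      constructor
      · rintro ⟨h | h, hAB⟩
        · exact h
        · exact absurd h hAB
      · intro h
        exact ⟨Or.inl h, fun hAB => Finset.disjoint_left.mp hdisjCB h hAB⟩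

/-- For `1 ≤ k ≤ r ≤ n`,
`∑_{𝒜 ∈ A(n,r)} ∑_{B ⊆ 𝒜, |B| = k} ∏_{A ∈ B} |A|
  = ∑_{s=k}^{n+k−r} C(n,s)·S(n−s, r−k)·C(s,k)·k^{s−k}`. -/
theorem stmt_15 (n r k : ℕ) (h1 : 1 ≤ k) (h2 : k ≤ r) (h3 : r ≤ n) :
    ∑ 𝒜 ∈ Finset.univ.filter
        (fun 𝒜 : Finset (Finset (Fin n)) => isPartitionInto 𝒜 r),
      ∑ B ∈ 𝒜.powersetCard k, ∏ A ∈ B, A.card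
    = ∑ s ∈ Finset.Icc k (n + k - r),
        n.choose s * stirling2 (n - s) (r - k) * s.choose k * k ^ (s - k) := by
  classical
  set P : Finset (Finset (Finset (Fin n))) :=
    univ.filter (fun 𝒜 : Finset (Finset (Fin n)) => isPartitionInto 𝒜 r) with hP
  -- Step A: swap the sums
  have hswap : ∑ 𝒜 ∈ P, ∑ B ∈ 𝒜.powersetCard k, ∏ A ∈ B, A.card
      = ∑ B ∈ (univ : Finset (Finset (Finset (Fin n)))),
          ∑ 𝒜 ∈ P.filter (fun 𝒜 => B ⊆ 𝒜 ∧ B.card = k), ∏ A ∈ B, A.card := by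
    refine Finset.sum_comm' ?_
    intro 𝒜 B
    simp only [mem_filter, mem_powersetCard, mem_univ, and_true, true_and]
    try tauto
  rw [hswap]
  -- Step B: the inner count
  have hinner : ∀ B : Finset (Finset (Fin n)),
      ∑ 𝒜 ∈ P.filter (fun 𝒜 => B ⊆ 𝒜 ∧ B.card = k), ∏ A ∈ B, A.card
        = (P.filter (fun 𝒜 => B ⊆ 𝒜 ∧ B.card = k)).card * ∏ A ∈ B, A.card := by
    intro B; rw [Finset.sum_const, smul_eq_mul]
  simp only [hinner]
  -- restrict to good B
  have hgoodsum : ∑ B ∈ (univ : Finset (Finset (Finset (Fin n)))),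
      (P.filter (fun 𝒜 => B ⊆ 𝒜 ∧ B.card = k)).card * ∏ A ∈ B, A.card
      = ∑ B ∈ univ.filter (fun B : Finset (Finset (Fin n)) => B ∈ partOf (B.sup id) k),
        (P.filter (fun 𝒜 => B ⊆ 𝒜 ∧ B.card = k)).card * ∏ A ∈ B, A.card := by
    refine (Finset.sum_subset (Finset.subset_univ _) ?_).symm
    intro B _ hB
    simp only [mem_filter, mem_univ, true_and, mem_partOf] at hB
    have : P.filter (fun 𝒜 => B ⊆ 𝒜 ∧ B.card = k) = ∅ := by
      rw [Finset.filter_eq_empty_iff]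
      intro 𝒜 h𝒜
      simp only [hP, mem_filter, mem_univ, true_and] at h𝒜
      obtain ⟨hcard', hne', hdisj', hcov'⟩ := h𝒜
      intro ⟨hsub, hcard⟩
      exact hB ⟨hcard, fun A hA => hne' A (hsub hA),
        fun A hA A' hA' hne => hdisj' A (hsub hA) A' (hsub hA') hne, trivial⟩
    rw [this]; simp
  rw [hgoodsum]
  -- replace the count by stirling numbers
  have hcount : ∀ B ∈ univ.filter
      (fun B : Finset (Finset (Fin n)) => B ∈ partOf (B.sup id) k),
      (P.filter (fun 𝒜 => B ⊆ 𝒜 ∧ B.card = k)).card * ∏ A ∈ B, A.card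
        = stirling2 (n - (B.sup id).card) (r - k) * ∏ A ∈ B, A.card := by
    intro B hB
    simp only [mem_filter, mem_univ, true_and] at hB
    rw [hP, card_extensions hB h2, card_partOf, Finset.card_compl]
    simp
  rw [Finset.sum_congr rfl hcount]
  -- Step C: group by S = B.sup id
  have hfib : ∑ B ∈ univ.filter
        (fun B : Finset (Finset (Fin n)) => B ∈ partOf (B.sup id) k),
      stirling2 (n - (B.sup id).card) (r - k) * ∏ A ∈ B, A.card
      = ∑ S ∈ (univ : Finset (Finset (Fin n))),
          stirling2 (n - S.card) (r - k) * ∑ B ∈ partOf S k, ∏ A ∈ B, A.card := by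
    rw [← Finset.sum_fiberwise_of_maps_to
      (g := fun B : Finset (Finset (Fin n)) => B.sup id)
      (fun B _ => mem_univ _)]
    refine Finset.sum_congr rfl ?_
    intro S _
    rw [Finset.mul_sum]
    refine Finset.sum_congr ?_ ?_
    · ext B
      simp only [mem_filter, mem_univ, true_and, mem_partOf, and_true]
      tauto
    · intro B hB
      rw [(mem_partOf.mp hB).2.2.2]
  rw [hfib]
  -- use Lemma C
  have hC : ∀ S ∈ (univ : Finset (Finset (Fin n))),
      stirling2 (n - S.card) (r - k) * ∑ B ∈ partOf S k, ∏ A ∈ B, A.card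
        = stirling2 (n - S.card) (r - k) * (S.card.choose k * k ^ (S.card - k)) := by
    intro S _; rw [sum_prod_card_partOf]
  rw [Finset.sum_congr rfl hC]
  -- Step D: group by s = S.card
  have hfib2 : ∑ S ∈ (univ : Finset (Finset (Fin n))),
      stirling2 (n - S.card) (r - k) * (S.card.choose k * k ^ (S.card - k))
      = ∑ s ∈ Finset.range (n + 1),
          n.choose s * stirling2 (n - s) (r - k) * s.choose k * k ^ (s - k) := by
    rw [← Finset.sum_fiberwise_of_maps_to
      (g := fun S : Finset (Fin n) => S.card) (t := Finset.range (n + 1))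
      (fun S _ => by simpa [Nat.lt_succ_iff] using (Finset.card_le_univ S).trans_eq (by simp))]
    refine Finset.sum_congr rfl ?_
    intro s _
    rw [Finset.sum_congr rfl (fun S hS => by
      simp only [mem_filter] at hS
      rw [hS.2]), Finset.sum_const, smul_eq_mul]
    have : (univ.filter (fun S : Finset (Fin n) => S.card = s)).card = n.choose s := by
      rw [show univ.filter (fun S : Finset (Fin n) => S.card = s)
          = (univ : Finset (Fin n)).powersetCard s by
        ext S; simp [Finset.mem_powersetCard]]
      rw [Finset.card_powersetCard]; simp
    rw [this]; ring
  rw [hfib2]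
  -- Step E: shrink the range
  refine (Finset.sum_subset ?_ ?_).symm
  · intro s hs
    simp only [Finset.mem_Icc] at hs
    simp only [Finset.mem_range]
    omega
  · intro s hs hs'
    simp only [Finset.mem_range] at hs
    simp only [Finset.mem_Icc, not_and, not_le] at hs'
    rcases Nat.lt_or_ge s k with h | h
    · rw [Nat.choose_eq_zero_of_lt h]; ring
    · have : n + k - r < s := hs' h
      have : n - s < r - k := by omega
      rw [stirling2_of_lt this]; ring
end

section
/- There exist constants c > 0 and ρ ∈ (0,1) such that for all n ≥ 1, the number of pairs (x, y) ∈ T_n × T_n with rank(xyx) = rank(y) (where xyx is the composite: first x, then y, then x) is at most c·n^{7/2}·ρ^n·n^{2n}. Equivalently, the probability T_n-bar that two independent uniformly random transformations x, y ∈ T_n satisfy rank(xyx) = rank(y) is at most c·n^{7/2}·ρ^n, and hence tends to 0 exponentially fast as n → ∞. -/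
section Aux

open Finset

/-- If `rank (x∘y∘x) = rank y` then `x` does not collapse the image of `y`. -/
lemma key_inj {n : ℕ} (x y : Fin n → Fin n)
    (h : trank (x ∘ y ∘ x) = trank y) :
    ((Finset.univ.image y).image x).card = (Finset.univ.image y).card := by
  have h1 : Finset.univ.image (x ∘ y ∘ x) ⊆ (Finset.univ.image y).image x := by
    intro a ha
    simp only [Finset.mem_image, Finset.mem_univ, true_and] at ha ⊢
    obtain ⟨b, hb⟩ := ha
    exact ⟨y (x b), ⟨x b, rfl⟩, hb⟩
  have h2 := Finset.card_le_card h1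
  have h3 := Finset.card_image_le (s := Finset.univ.image y) (f := x)
  unfold trank at h
  omega

/-- Counting functions that are injective on a given set `S`. -/
lemma count_injOn {n : ℕ} (S : Finset (Fin n)) :
    Fintype.card {x : Fin n → Fin n // (S.image x).card = S.card}
      ≤ n.descFactorial S.card * n ^ (n - S.card) := by
  classical
  have key : Fintype.card {x : Fin n → Fin n // (S.image x).card = S.card}
      ≤ Fintype.card ((↥S ↪ Fin n) × ({a : Fin n // a ∉ S} → Fin n)) := by
    have inj : ∀ x : {x : Fin n → Fin n // (S.image x).card = S.card},
        Function.Injective (fun a : ↥S => x.1 a.1) := by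
      intro x a b hab
      have hinj : Set.InjOn x.1 ↑S := Finset.injOn_of_card_image_eq x.2
      exact Subtype.ext (hinj a.2 b.2 hab)
    apply Fintype.card_le_of_injective
      (fun x => (⟨fun a : ↥S => x.1 a.1, inj x⟩, fun a => x.1 a.1))
    intro x₁ x₂ hx
    have h1 := congrArg Prod.fst hx
    have h2 := congrArg Prod.snd hx
    apply Subtype.ext; funext a
    by_cases ha : a ∈ S
    · exact DFunLike.congr_fun h1 ⟨a, ha⟩
    · exact congrFun h2 ⟨a, ha⟩
  calc Fintype.card {x : Fin n → Fin n // (S.image x).card = S.card}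
      ≤ Fintype.card ((↥S ↪ Fin n) × ({a : Fin n // a ∉ S} → Fin n)) := key
    _ = n.descFactorial S.card * n ^ (n - S.card) := by
        have hcard : Fintype.card {a : Fin n // a ∉ S} = n - S.card := by
          have := Fintype.card_subtype_compl (fun a : Fin n => a ∈ S)
          simpa [Fintype.card_fin, Fintype.card_coe] using this
        rw [Fintype.card_prod, Fintype.card_embedding_eq, Fintype.card_coe,
          Fintype.card_fin, Fintype.card_fun, hcard, Fintype.card_fin]

/-- Counting functions of low rank. -/
lemma count_low {n m : ℕ} :
    Fintype.card {y : Fin n → Fin n // trank y ≤ m} ≤ 2 ^ n * m ^ n := by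
  classical
  have step : Fintype.card {y : Fin n → Fin n // trank y ≤ m}
      ≤ Fintype.card (Σ t : {t : Finset (Fin n) // t.card ≤ m}, (Fin n → ↥t.1)) := by
    apply Fintype.card_le_of_injective
      (fun y => ⟨⟨Finset.univ.image y.1, y.2⟩,
        fun a => ⟨y.1 a, Finset.mem_image_of_mem _ (Finset.mem_univ a)⟩⟩)
    intro y₁ y₂ h
    apply Subtype.ext; funext a
    have := congrArg (fun s : (Σ t : {t : Finset (Fin n) // t.card ≤ m}, (Fin n → ↥t.1)) =>
      (s.2 a : Fin n)) h
    simpa using this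
  have step2 : Fintype.card (Σ t : {t : Finset (Fin n) // t.card ≤ m}, (Fin n → ↥t.1))
      ≤ 2 ^ n * m ^ n := by
    rw [Fintype.card_sigma]
    calc ∑ t : {t : Finset (Fin n) // t.card ≤ m}, Fintype.card (Fin n → ↥t.1)
        ≤ (Finset.univ : Finset {t : Finset (Fin n) // t.card ≤ m}).card • (m ^ n) := by
          apply Finset.sum_le_card_nsmul
          intro t _
          rw [Fintype.card_fun, Fintype.card_coe, Fintype.card_fin]
          exact Nat.pow_le_pow_left t.2 n
      _ ≤ 2 ^ n * m ^ n := by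
          rw [smul_eq_mul, Finset.card_univ]
          apply Nat.mul_le_mul_right
          calc Fintype.card {t : Finset (Fin n) // t.card ≤ m}
              ≤ Fintype.card (Finset (Fin n)) := Fintype.card_subtype_le _
            _ = 2 ^ n := by rw [Fintype.card_finset, Fintype.card_fin]
  exact le_trans step step2

lemma gauss_sum (r : ℕ) :
    (∑ i ∈ Finset.range r, (i:ℝ)) * 2 = (r:ℝ) * ((r:ℝ) - 1) := by
  induction r with
  | zero => simp
  | succ k ih =>
      rw [Finset.sum_range_succ]
      push_cast
      nlinarith [ih]

/-- Real bound on the descending factorial. -/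
lemma desc_bound {n : ℕ} (hn : 1 ≤ n) (r : ℕ) (hr : r ≤ n) :
    (n.descFactorial r : ℝ) ≤ (n : ℝ) ^ r *
      Real.exp (-((r : ℝ) * ((r : ℝ) - 1)) / (2 * n)) := by
  have hn0 : (0:ℝ) < n := by exact_mod_cast hn
  rw [Nat.descFactorial_eq_prod_range, Nat.cast_prod]
  have step1 : ∀ i ∈ Finset.range r, ((n - i : ℕ) : ℝ) ≤ (n:ℝ) * Real.exp (-(i:ℝ)/n) := by
    intro i hi
    have hi' : i ≤ n := le_trans (le_of_lt (Finset.mem_range.mp hi)) hr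
    rw [Nat.cast_sub hi']
    have hexp := Real.add_one_le_exp (-(i:ℝ)/n)
    have : (n:ℝ) * (-(i:ℝ)/n + 1) = (n:ℝ) - i := by field_simp; ring
    nlinarith [Real.exp_pos (-(i:ℝ)/n)]
  calc ∏ i ∈ Finset.range r, ((n - i : ℕ):ℝ)
      ≤ ∏ i ∈ Finset.range r, ((n:ℝ) * Real.exp (-(i:ℝ)/n)) :=
        Finset.prod_le_prod (fun i _ => by positivity) step1
    _ = (n:ℝ)^r * Real.exp (∑ i ∈ Finset.range r, (-(i:ℝ)/n)) := by
        rw [Finset.prod_mul_distrib, Finset.prod_const, Finset.card_range, Real.exp_sum]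
    _ = (n:ℝ)^r * Real.exp (-((r : ℝ) * ((r : ℝ) - 1)) / (2 * n)) := by
        congr 1
        have hs := gauss_sum r
        have hSum : (∑ i ∈ Finset.range r, (i:ℝ)) = (r:ℝ) * ((r:ℝ) - 1) / 2 := by
          linarith
        have h2 : (∑ i ∈ Finset.range r, (-(i:ℝ)/n)) = -(∑ i ∈ Finset.range r, (i:ℝ))/n := by
          rw [← Finset.sum_div, ← Finset.sum_neg_distrib]
        rw [h2, hSum]
        ring

end Aux

set_option maxHeartbeats 1600000 in
/-- There are `c > 0` and `ρ ∈ (0,1)` such that for all `n ≥ 1` the number of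
pairs `(x, y) ∈ T_n × T_n` with `rank (xyx) = rank y` (products composed left
to right, so `xyx` is the function `x ∘ y ∘ x`) is at most
`c·n^{7/2}·ρ^n·n^{2n}`; hence the probability that two uniformly random
transformations satisfy this tends to `0` exponentially fast. -/
theorem stmt_16 :
    ∃ c : ℝ, 0 < c ∧ ∃ ρ : ℝ, 0 < ρ ∧ ρ < 1 ∧ ∀ n : ℕ, 1 ≤ n →
      (Nat.card {p : (Fin n → Fin n) × (Fin n → Fin n) //
          trank (p.1 ∘ p.2 ∘ p.1) = trank p.2} : ℝ)
        ≤ c * (n : ℝ) ^ ((7 : ℝ) / 2) * ρ ^ n * (n : ℝ) ^ (2 * n) := by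
  classical
  refine ⟨3, by norm_num, 99/100, by norm_num, by norm_num, ?_⟩
  intro n hn
  have hn0 : (0:ℝ) < n := by exact_mod_cast hn
  -- basic exp estimates
  have hE10 : Real.exp ((1:ℝ)/10) ≤ 2 := by
    have h := Real.log_two_gt_d9
    have h1 : ((1:ℝ)/10) ≤ Real.log 2 := by norm_num at h ⊢; linarith
    calc Real.exp ((1:ℝ)/10) ≤ Real.exp (Real.log 2) := Real.exp_le_exp.mpr h1
      _ = 2 := Real.exp_log (by norm_num)
  have hE50 : Real.exp (-(1:ℝ)/50) ≤ 99/100 := by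
    have h1 := Real.add_one_le_exp ((1:ℝ)/50)
    have h2 : Real.exp (-(1:ℝ)/50) * Real.exp ((1:ℝ)/50) = 1 := by
      rw [← Real.exp_add]; norm_num
    nlinarith [Real.exp_pos ((1:ℝ)/50), Real.exp_pos (-(1:ℝ)/50)]
  -- Step 1: counting in ℕ
  have hmono : Nat.card {p : (Fin n → Fin n) × (Fin n → Fin n) //
        trank (p.1 ∘ p.2 ∘ p.1) = trank p.2}
      ≤ Fintype.card {p : (Fin n → Fin n) × (Fin n → Fin n) //
          ((Finset.univ.image p.2).image p.1).card = (Finset.univ.image p.2).card} := by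
    rw [Nat.card_eq_fintype_card]
    exact Fintype.card_le_of_embedding (Subtype.impEmbedding _ _
      (fun p hp => key_inj p.1 p.2 hp))
  have hsig : Fintype.card {p : (Fin n → Fin n) × (Fin n → Fin n) //
        ((Finset.univ.image p.2).image p.1).card = (Finset.univ.image p.2).card}
      = ∑ y : Fin n → Fin n, Fintype.card {x : Fin n → Fin n //
          ((Finset.univ.image y).image x).card = (Finset.univ.image y).card} := by
    rw [← Fintype.card_sigma]
    apply Fintype.card_congr
    exact ((Equiv.prodComm _ _).subtypeEquiv (fun p => Iff.rfl)).trans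
      (Equiv.subtypeProdEquivSigmaSubtype fun (y x : Fin n → Fin n) =>
        ((Finset.univ.image y).image x).card = (Finset.univ.image y).card)
  have hnat : Nat.card {p : (Fin n → Fin n) × (Fin n → Fin n) //
        trank (p.1 ∘ p.2 ∘ p.1) = trank p.2}
      ≤ ∑ y : Fin n → Fin n, n.descFactorial (trank y) * n ^ (n - trank y) := by
    refine le_trans hmono (le_trans (le_of_eq hsig) (Finset.sum_le_sum ?_))
    intro y _
    exact count_injOn (Finset.univ.image y)
  have hreal : (Nat.card {p : (Fin n → Fin n) × (Fin n → Fin n) //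
        trank (p.1 ∘ p.2 ∘ p.1) = trank p.2} : ℝ)
      ≤ ∑ y : Fin n → Fin n, ((n.descFactorial (trank y) * n ^ (n - trank y) : ℕ) : ℝ) := by
    rw [← Nat.cast_sum]
    exact_mod_cast hnat
  -- rank bounds
  have hrank_le : ∀ y : Fin n → Fin n, trank y ≤ n := by
    intro y
    have := Finset.card_le_univ (Finset.univ.image y)
    simpa [trank] using this
  -- uniform term bound
  have hterm_le : ∀ y : Fin n → Fin n,
      ((n.descFactorial (trank y) * n ^ (n - trank y) : ℕ) : ℝ) ≤ (n:ℝ)^n := by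
    intro y
    have h : n.descFactorial (trank y) * n ^ (n - trank y) ≤ n ^ n := by
      calc n.descFactorial (trank y) * n ^ (n - trank y)
          ≤ n ^ (trank y) * n ^ (n - trank y) :=
            Nat.mul_le_mul_right _ (Nat.descFactorial_le_pow _ _)
        _ = n ^ n := by rw [← pow_add]; congr 1; have := hrank_le y; omega
    exact_mod_cast h
  -- big-rank term bound
  have hbig : ∀ y : Fin n → Fin n, n ≤ 5 * trank y →
      ((n.descFactorial (trank y) * n ^ (n - trank y) : ℕ) : ℝ)
        ≤ (n:ℝ)^n * (2 * (99/100:ℝ)^n) := by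
    intro y hy
    set r := trank y with hrdef
    have hr : r ≤ n := hrank_le y
    have hnr : (n:ℝ)^r * (n:ℝ)^(n-r) = (n:ℝ)^n := by
      rw [← pow_add]; congr 1; omega
    have hexp_le : Real.exp (-((r:ℝ)*((r:ℝ)-1))/(2*n)) ≤ 2 * (99/100:ℝ)^n := by
      have hr1 : 1 ≤ r := by omega
      have hrR : (n:ℝ) ≤ 5 * r := by exact_mod_cast hy
      have hr1R : (1:ℝ) ≤ r := by exact_mod_cast hr1
      have harg : -((r:ℝ)*((r:ℝ)-1))/(2*n) ≤ 1/10 - (n:ℝ)/50 := by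
        rw [div_le_iff₀ (by positivity : (0:ℝ) < 2*n)]
        nlinarith [mul_nonneg (by linarith : (0:ℝ) ≤ 5*(r:ℝ) - n)
          (by linarith : (0:ℝ) ≤ 5*(r:ℝ) + (n:ℝ) - 5)]
      calc Real.exp (-((r:ℝ)*((r:ℝ)-1))/(2*n))
          ≤ Real.exp (1/10 - (n:ℝ)/50) := Real.exp_le_exp.mpr harg
        _ = Real.exp (1/10) * Real.exp (-(1:ℝ)/50) ^ n := by
            rw [← Real.exp_nat_mul, ← Real.exp_add]; congr 1; push_cast; ring
        _ ≤ 2 * (99/100:ℝ)^n := by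
            apply mul_le_mul hE10
              (pow_le_pow_left₀ (le_of_lt (Real.exp_pos _)) hE50 n)
              (by positivity) (by norm_num)
    have h2 := desc_bound hn r hr
    calc ((n.descFactorial r * n ^ (n - r) : ℕ) : ℝ)
        = (n.descFactorial r : ℝ) * (n:ℝ)^(n-r) := by push_cast; ring
      _ ≤ ((n:ℝ)^r * Real.exp (-((r:ℝ)*((r:ℝ)-1))/(2*n))) * (n:ℝ)^(n-r) :=
          mul_le_mul_of_nonneg_right h2 (by positivity)
      _ = (n:ℝ)^n * Real.exp (-((r:ℝ)*((r:ℝ)-1))/(2*n)) := by rw [← hnr]; ring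
      _ ≤ (n:ℝ)^n * (2 * (99/100:ℝ)^n) := mul_le_mul_of_nonneg_left hexp_le (by positivity)
  -- count of small-rank y
  have hsmall_card : ((Finset.univ.filter
        (fun y : Fin n → Fin n => ¬ n ≤ 5 * trank y)).card : ℝ)
      ≤ (2/5:ℝ)^n * (n:ℝ)^n := by
    have h1 : (Finset.univ.filter (fun y : Fin n → Fin n => ¬ n ≤ 5 * trank y)).card
        ≤ Fintype.card {y : Fin n → Fin n // trank y ≤ n / 5} := by
      rw [Fintype.card_subtype]
      apply Finset.card_le_card
      intro y hy
      simp only [Finset.mem_filter, Finset.mem_univ, true_and, not_le] at hy ⊢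
      omega
    have h2 := count_low (n := n) (m := n / 5)
    calc ((Finset.univ.filter (fun y : Fin n → Fin n => ¬ n ≤ 5 * trank y)).card : ℝ)
        ≤ ((2^n * (n/5)^n : ℕ) : ℝ) := by exact_mod_cast le_trans h1 h2
      _ ≤ (2:ℝ)^n * ((n:ℝ)/5)^n := by
          push_cast
          exact mul_le_mul_of_nonneg_left
            (pow_le_pow_left₀ (by positivity) Nat.cast_div_le n) (by positivity)
      _ = (2/5:ℝ)^n * (n:ℝ)^n := by
          rw [← mul_pow, ← mul_pow]; congr 1; ring
  -- split the sum
  have hsplit := Finset.sum_filter_add_sum_filter_not Finset.univ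
    (fun y : Fin n → Fin n => n ≤ 5 * trank y)
    (fun y : Fin n → Fin n => ((n.descFactorial (trank y) * n ^ (n - trank y) : ℕ) : ℝ))
  have hcardF : ((Fintype.card (Fin n → Fin n) : ℕ) : ℝ) = (n:ℝ)^n := by
    rw [Fintype.card_fun, Fintype.card_fin]; push_cast; ring
  have hbigsum : ∑ y ∈ Finset.univ.filter (fun y : Fin n → Fin n => n ≤ 5 * trank y),
        ((n.descFactorial (trank y) * n ^ (n - trank y) : ℕ) : ℝ)
      ≤ (n:ℝ)^n * ((n:ℝ)^n * (2 * (99/100:ℝ)^n)) := by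
    calc ∑ y ∈ Finset.univ.filter (fun y : Fin n → Fin n => n ≤ 5 * trank y),
          ((n.descFactorial (trank y) * n ^ (n - trank y) : ℕ) : ℝ)
        ≤ (Finset.univ.filter (fun y : Fin n → Fin n => n ≤ 5 * trank y)).card
            • ((n:ℝ)^n * (2 * (99/100:ℝ)^n)) := by
          apply Finset.sum_le_card_nsmul
          intro y hy
          exact hbig y (Finset.mem_filter.mp hy).2
      _ ≤ (n:ℝ)^n * ((n:ℝ)^n * (2 * (99/100:ℝ)^n)) := by
          rw [nsmul_eq_mul]
          apply mul_le_mul_of_nonneg_right _ (by positivity)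
          calc ((Finset.univ.filter (fun y : Fin n → Fin n => n ≤ 5 * trank y)).card : ℝ)
              ≤ ((Fintype.card (Fin n → Fin n) : ℕ) : ℝ) := by
                exact_mod_cast le_trans (Finset.card_filter_le _ _) (le_of_eq Finset.card_univ)
            _ = (n:ℝ)^n := hcardF
  have hsmallsum : ∑ y ∈ Finset.univ.filter (fun y : Fin n → Fin n => ¬ n ≤ 5 * trank y),
        ((n.descFactorial (trank y) * n ^ (n - trank y) : ℕ) : ℝ)
      ≤ ((2/5:ℝ)^n * (n:ℝ)^n) * (n:ℝ)^n := by
    calc ∑ y ∈ Finset.univ.filter (fun y : Fin n → Fin n => ¬ n ≤ 5 * trank y),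
          ((n.descFactorial (trank y) * n ^ (n - trank y) : ℕ) : ℝ)
        ≤ (Finset.univ.filter (fun y : Fin n → Fin n => ¬ n ≤ 5 * trank y)).card
            • ((n:ℝ)^n) := by
          apply Finset.sum_le_card_nsmul
          intro y _
          exact hterm_le y
      _ ≤ ((2/5:ℝ)^n * (n:ℝ)^n) * (n:ℝ)^n := by
          rw [nsmul_eq_mul]
          exact mul_le_mul_of_nonneg_right hsmall_card (by positivity)
  -- combine
  have hpow2 : (n:ℝ)^n * (n:ℝ)^n = (n:ℝ)^(2*n) := by
    rw [← pow_add]; congr 1; omega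
  have h25 : (2/5:ℝ)^n ≤ (99/100:ℝ)^n := pow_le_pow_left₀ (by norm_num) (by norm_num) n
  have hone : (1:ℝ) ≤ (n:ℝ) ^ ((7:ℝ)/2) :=
    Real.one_le_rpow (by exact_mod_cast hn) (by norm_num)
  have hfinal : (Nat.card {p : (Fin n → Fin n) × (Fin n → Fin n) //
        trank (p.1 ∘ p.2 ∘ p.1) = trank p.2} : ℝ)
      ≤ 3 * (99/100:ℝ)^n * (n:ℝ)^(2*n) := by
    calc (Nat.card {p : (Fin n → Fin n) × (Fin n → Fin n) //
          trank (p.1 ∘ p.2 ∘ p.1) = trank p.2} : ℝ)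
        ≤ ∑ y : Fin n → Fin n, ((n.descFactorial (trank y) * n ^ (n - trank y) : ℕ) : ℝ) := hreal
      _ = ∑ y ∈ Finset.univ.filter (fun y : Fin n → Fin n => n ≤ 5 * trank y),
            ((n.descFactorial (trank y) * n ^ (n - trank y) : ℕ) : ℝ)
          + ∑ y ∈ Finset.univ.filter (fun y : Fin n → Fin n => ¬ n ≤ 5 * trank y),
            ((n.descFactorial (trank y) * n ^ (n - trank y) : ℕ) : ℝ) := hsplit.symm
      _ ≤ (n:ℝ)^n * ((n:ℝ)^n * (2 * (99/100:ℝ)^n))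
          + ((2/5:ℝ)^n * (n:ℝ)^n) * (n:ℝ)^n := add_le_add hbigsum hsmallsum
      _ ≤ 3 * (99/100:ℝ)^n * (n:ℝ)^(2*n) := by
          rw [← hpow2]
          nlinarith [h25, pow_nonneg (le_of_lt hn0) n, pow_nonneg (by norm_num : (0:ℝ) ≤ 99/100) n,
            pow_nonneg (by norm_num : (0:ℝ) ≤ 2/5) n,
            mul_nonneg (pow_nonneg (le_of_lt hn0) n) (pow_nonneg (le_of_lt hn0) n)]
  calc (Nat.card {p : (Fin n → Fin n) × (Fin n → Fin n) //
        trank (p.1 ∘ p.2 ∘ p.1) = trank p.2} : ℝ)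
      ≤ 3 * (99/100:ℝ)^n * (n:ℝ)^(2*n) := hfinal
    _ ≤ 3 * (n:ℝ) ^ ((7:ℝ)/2) * (99/100:ℝ)^n * (n:ℝ)^(2*n) := by
        nlinarith [hone, pow_nonneg (by norm_num : (0:ℝ) ≤ 99/100) n,
          pow_nonneg (le_of_lt hn0) (2*n),
          mul_nonneg (pow_nonneg (by norm_num : (0:ℝ) ≤ 99/100) n)
            (pow_nonneg (le_of_lt hn0) (2*n))]
end

section
/- There exist constants c > 0 and ρ ∈ (0,1) such that for all n ≥ 1, the number of triples (x, y, z) ∈ T_n³ with rank(xyz) = rank(y) (where xyz is the composite: first x, then y, then z) is at most c·n^5·ρ^n·n^{3n}. Equivalently, the probability V_n-bar that three independent uniformly random transformations x, y, z ∈ T_n satisfy rank(xyz) = rank(y) is at most c·n^5·ρ^n, and hence tends to 0 exponentially fast as n → ∞. -/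
open Finset

open Finset

lemma my_card_into (n : ℕ) (S : Finset (Fin n)) :
    Fintype.card {f : Fin n → Fin n // ∀ a, f a ∈ S} ≤ S.card ^ n := by
  have h : Function.Injective
      (fun f : {f : Fin n → Fin n // ∀ a, f a ∈ S} => (fun a => (⟨f.1 a, f.2 a⟩ : ↥S))) := by
    intro f g h
    apply Subtype.ext; funext a
    exact congrArg Subtype.val (congrFun h a)
  calc Fintype.card {f : Fin n → Fin n // ∀ a, f a ∈ S}
      ≤ Fintype.card (Fin n → ↥S) := Fintype.card_le_of_injective _ h
    _ = S.card ^ n := by simp [Fintype.card_fun]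

lemma my_card_smallrank (n k : ℕ) :
    ((univ : Finset (Fin n → Fin n)).filter (fun y => trank y ≤ k)).card ≤ 2 ^ n * k ^ n := by
  classical
  have hsub : (univ : Finset (Fin n → Fin n)).filter (fun y => trank y ≤ k) ⊆
      ((univ : Finset (Finset (Fin n))).filter (fun S => S.card ≤ k)).biUnion
        (fun S => univ.filter (fun y => ∀ a, y a ∈ S)) := by
    intro y hy
    simp only [mem_filter, mem_univ, true_and] at hy
    refine mem_biUnion.2 ⟨univ.image y, ?_, ?_⟩
    · simp only [mem_filter, mem_univ, true_and]
      exact hy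
    · simp only [mem_filter, mem_univ, true_and]
      intro a; exact mem_image_of_mem y (mem_univ a)
  have e1 := card_le_card hsub
  have e2 : (((univ : Finset (Finset (Fin n))).filter (fun S => S.card ≤ k)).biUnion
        (fun S => univ.filter (fun y : Fin n → Fin n => ∀ a, y a ∈ S))).card ≤
      ∑ S ∈ (univ : Finset (Finset (Fin n))).filter (fun S => S.card ≤ k),
          (univ.filter (fun y : Fin n → Fin n => ∀ a, y a ∈ S)).card := card_biUnion_le
  have e3 : ∑ S ∈ (univ : Finset (Finset (Fin n))).filter (fun S => S.card ≤ k),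
          (univ.filter (fun y : Fin n → Fin n => ∀ a, y a ∈ S)).card ≤
      ∑ S ∈ (univ : Finset (Finset (Fin n))).filter (fun S => S.card ≤ k), k ^ n := by
    refine sum_le_sum ?_
    intro S hS
    simp only [mem_filter, mem_univ, true_and] at hS
    have h1 : (univ.filter (fun y : Fin n → Fin n => ∀ a, y a ∈ S)).card
        = Fintype.card {f : Fin n → Fin n // ∀ a, f a ∈ S} :=
      (Fintype.card_subtype _).symm
    rw [h1]
    exact le_trans (my_card_into n S) (Nat.pow_le_pow_left hS n)
  have e4 : ∑ S ∈ (univ : Finset (Finset (Fin n))).filter (fun S => S.card ≤ k), k ^ n ≤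
      2 ^ n * k ^ n := by
    rw [sum_const, smul_eq_mul]
    have h5 : ((univ : Finset (Finset (Fin n))).filter (fun S => S.card ≤ k)).card ≤ 2 ^ n :=
      le_trans (card_le_card (filter_subset _ _)) (by simp [card_univ])
    exact Nat.mul_le_mul_right _ h5
  exact le_trans e1 (le_trans e2 (le_trans e3 e4))

lemma my_card_injOn (n : ℕ) (S : Finset (Fin n)) :
    Fintype.card {z : Fin n → Fin n // Set.InjOn z ↑S} ≤
      n.descFactorial S.card * n ^ (n - S.card) := by
  classical
  have hinj : Function.Injective
      (fun z : {z : Fin n → Fin n // Set.InjOn z ↑S} =>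
        ((⟨fun s : ↥S => z.1 s, fun a b h => Subtype.ext (z.2 a.2 b.2 h)⟩ : ↥S ↪ Fin n),
         (fun a : ↥(Sᶜ) => z.1 a))) := by
    intro z w h
    have h1 := congrArg Prod.fst h
    have h2 := congrArg Prod.snd h
    apply Subtype.ext; funext a
    by_cases ha : a ∈ S
    · exact DFunLike.congr_fun h1 ⟨a, ha⟩
    · exact congrFun h2 ⟨a, by simpa using ha⟩
  calc Fintype.card {z : Fin n → Fin n // Set.InjOn z ↑S}
      ≤ Fintype.card ((↥S ↪ Fin n) × (↥(Sᶜ) → Fin n)) := Fintype.card_le_of_injective _ hinj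
    _ = n.descFactorial S.card * n ^ (n - S.card) := by
        simp [Fintype.card_prod, Fintype.card_embedding_eq, Fintype.card_fun, card_compl]
open Finset

noncomputable def myrho : ℝ := (7/8 : ℝ) ^ ((1:ℝ)/8)

lemma myrho_pos : 0 < myrho := Real.rpow_pos_of_pos (by norm_num) _

lemma myrho_lt_one : myrho < 1 :=
  Real.rpow_lt_one (by norm_num) (by norm_num) (by norm_num)

lemma half_le_myrho : (1/2 : ℝ) ≤ myrho := by
  have h1 : ((1/2 : ℝ) ^ ((8:ℝ))) ^ ((1:ℝ)/8) = 1/2 := by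
    rw [← Real.rpow_mul (by norm_num : (0:ℝ) ≤ 1/2)]
    norm_num
  have h2 : ((1/2 : ℝ) ^ ((8:ℝ))) = 1/256 := by
    rw [show (8:ℝ) = ((8:ℕ):ℝ) by norm_num, Real.rpow_natCast]; norm_num
  have h3 : ((1/2 : ℝ) ^ ((8:ℝ))) ^ ((1:ℝ)/8) ≤ (7/8 : ℝ) ^ ((1:ℝ)/8) := by
    apply Real.rpow_le_rpow (by positivity) (by rw [h2]; norm_num) (by norm_num)
  rw [h1] at h3
  exact h3

lemma my_descFact_le (n r : ℕ) (h : n < 4 * r) :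
    (n.descFactorial r : ℝ) ≤ (7/8 : ℝ) ^ (r - (n+7)/8) * (n:ℝ) ^ r := by
  set t := (n+7)/8 with ht
  have htr : t ≤ r := by omega
  have ht8 : n ≤ 8 * t := by omega
  rw [Nat.descFactorial_eq_prod_range, Nat.cast_prod]
  have hsplit : (∏ i ∈ Finset.range r, ((n - i : ℕ) : ℝ)) =
      (∏ i ∈ Finset.Ico 0 t, ((n - i : ℕ) : ℝ)) * ∏ i ∈ Finset.Ico t r, ((n - i : ℕ) : ℝ) := by
    rw [Finset.range_eq_Ico, Finset.prod_Ico_consecutive _ (Nat.zero_le t) htr]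
  rw [hsplit]
  have h1 : (∏ i ∈ Finset.Ico 0 t, ((n - i : ℕ) : ℝ)) ≤ (n:ℝ) ^ t := by
    calc (∏ i ∈ Finset.Ico 0 t, ((n - i : ℕ) : ℝ))
        ≤ ∏ i ∈ Finset.Ico 0 t, (n:ℝ) := by
          refine Finset.prod_le_prod (fun i _ => by positivity) (fun i _ => ?_)
          exact_mod_cast Nat.sub_le n i
      _ = (n:ℝ) ^ t := by rw [Finset.prod_const, Nat.card_Ico, Nat.sub_zero]
  have h2 : (∏ i ∈ Finset.Ico t r, ((n - i : ℕ) : ℝ)) ≤ ((7/8 : ℝ) * n) ^ (r - t) := by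
    calc (∏ i ∈ Finset.Ico t r, ((n - i : ℕ) : ℝ))
        ≤ ∏ i ∈ Finset.Ico t r, ((7/8 : ℝ) * n) := by
          refine Finset.prod_le_prod (fun i _ => by positivity) (fun i hi => ?_)
          have hit : t ≤ i := (Finset.mem_Ico.1 hi).1
          have hnat : 8 * (n - i) ≤ 7 * n := by omega
          have : (8:ℝ) * ((n - i : ℕ) : ℝ) ≤ 7 * n := by exact_mod_cast hnat
          linarith
      _ = ((7/8 : ℝ) * n) ^ (r - t) := by rw [Finset.prod_const, Nat.card_Ico]
  have hmul : (∏ i ∈ Finset.Ico 0 t, ((n - i : ℕ) : ℝ)) * ∏ i ∈ Finset.Ico t r, ((n - i : ℕ) : ℝ)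
      ≤ (n:ℝ) ^ t * ((7/8 : ℝ) * n) ^ (r - t) := by
    apply mul_le_mul h1 h2 (Finset.prod_nonneg (fun i _ => by positivity)) (by positivity)
  refine le_trans hmul ?_
  rw [mul_pow]
  have : (n:ℝ) ^ t * ((7/8:ℝ) ^ (r-t) * (n:ℝ) ^ (r - t)) = (7/8:ℝ) ^ (r-t) * (n:ℝ) ^ (t + (r-t)) := by
    rw [pow_add]; ring
  rw [this, Nat.add_sub_cancel' htr]

lemma my_pow78 (n e : ℕ) (h : n ≤ 8 * e + 5) : ((7:ℝ)/8) ^ e ≤ 2 * myrho ^ n := by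
  have hρn : myrho ^ n = (7/8 : ℝ) ^ ((n:ℝ)/8) := by
    rw [myrho, ← Real.rpow_natCast ((7/8:ℝ) ^ ((1:ℝ)/8)) n, ← Real.rpow_mul (by norm_num)]
    congr 1
    ring
  have he : ((7:ℝ)/8) ^ e = (7/8 : ℝ) ^ ((e:ℝ)) := (Real.rpow_natCast _ e).symm
  rw [he, hρn]
  have h1 : (7/8 : ℝ) ^ ((e:ℝ)) ≤ (7/8 : ℝ) ^ ((n:ℝ)/8 - 5/8) := by
    apply Real.rpow_le_rpow_of_exponent_ge (by norm_num) (by norm_num)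
    have : (n:ℝ) ≤ 8 * e + 5 := by exact_mod_cast h
    linarith
  refine le_trans h1 ?_
  rw [Real.rpow_sub (by norm_num)]
  have h2 : (1/2 : ℝ) ≤ (7/8 : ℝ) ^ ((5:ℝ)/8) := by
    have := Real.rpow_le_rpow_of_exponent_ge (x := (7/8:ℝ)) (by norm_num) (by norm_num)
      (show (5:ℝ)/8 ≤ 1 by norm_num)
    rw [Real.rpow_one] at this
    linarith
  have hA : (0:ℝ) < (7/8 : ℝ) ^ ((n:ℝ)/8) := Real.rpow_pos_of_pos (by norm_num) _
  have hB : (0:ℝ) < (7/8 : ℝ) ^ ((5:ℝ)/8) := Real.rpow_pos_of_pos (by norm_num) _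
  rw [div_le_iff₀ hB]
  nlinarith


/-- There are `c > 0` and `ρ ∈ (0,1)` such that for all `n ≥ 1` the number of
triples `(x, y, z) ∈ T_n³` with `rank (xyz) = rank y` (products composed left
to right, so `xyz` is the function `z ∘ y ∘ x`) is at most `c·n^5·ρ^n·n^{3n}`;
hence the probability that three uniformly random transformations satisfy this
tends to `0` exponentially fast. -/
theorem stmt_19 :
    ∃ c : ℝ, 0 < c ∧ ∃ ρ : ℝ, 0 < ρ ∧ ρ < 1 ∧ ∀ n : ℕ, 1 ≤ n →
      (Nat.card {p : (Fin n → Fin n) × (Fin n → Fin n) × (Fin n → Fin n) //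
          trank (p.2.2 ∘ p.2.1 ∘ p.1) = trank p.2.1} : ℝ)
        ≤ c * (n : ℝ) ^ 5 * ρ ^ n * (n : ℝ) ^ (3 * n) := by
  classical
  refine ⟨3, by norm_num, myrho, myrho_pos, myrho_lt_one, ?_⟩
  intro n hn
  set M := Fin n → Fin n with hM
  have hMcard : Fintype.card (Fin n → Fin n) = n ^ n := by simp [Fintype.card_fun]
  set Pred : M × M × M → Prop := fun p => trank (p.2.2 ∘ p.2.1 ∘ p.1) = trank p.2.1 with hPred
  set pA : M × M × M → Prop := fun p => 4 * trank p.2.1 ≤ n with hpA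
  set pB : M × M × M → Prop := fun p =>
    n < 4 * (univ.image (p.2.1 ∘ p.1)).card ∧ Set.InjOn p.2.2 ↑(univ.image (p.2.1 ∘ p.1)) with hpB
  -- step 1 : subset
  have hsub : (univ : Finset (M × M × M)).filter Pred ⊆
      ((univ : Finset (M × M × M)).filter pA) ∪ ((univ : Finset (M × M × M)).filter pB) := by
    intro p hp
    simp only [mem_filter, mem_univ, true_and, mem_union] at hp ⊢
    obtain ⟨x, y, z⟩ := p
    simp only [hPred, hpA, hpB] at *
    have h0 : trank (z ∘ y ∘ x) = ((univ.image (y ∘ x)).image z).card := by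
      rw [trank, Finset.image_image]
    have h2 : (univ.image (y ∘ x)).card ≤ trank y := by
      rw [← Finset.image_image]
      exact card_le_card (Finset.image_subset_image (subset_univ _))
    have h3 : ((univ.image (y ∘ x)).image z).card ≤ (univ.image (y ∘ x)).card :=
      Finset.card_image_le
    rw [h0] at hp
    have h4 : (univ.image (y ∘ x)).card = trank y := by omega
    have h5 : ((univ.image (y ∘ x)).image z).card = (univ.image (y ∘ x)).card := by omega
    have hinj : Set.InjOn z ↑(univ.image (y ∘ x)) := Finset.injOn_of_card_image_eq h5
    by_cases hc : 4 * trank y ≤ n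
    · exact Or.inl hc
    · exact Or.inr ⟨by omega, hinj⟩
  -- step 2 : A count
  have hAcount : ((univ : Finset (M × M × M)).filter pA).card ≤
      n ^ n * (2 ^ n * (n / 4) ^ n) * n ^ n := by
    have h1 : ((univ : Finset (M × M × M)).filter pA).card
        = Fintype.card {p : M × M × M // pA p} := (Fintype.card_subtype _).symm
    rw [h1]
    have hinj : Function.Injective (fun p : {p : M × M × M // pA p} =>
        (p.1.1, (⟨p.1.2.1, by have := p.2; simpa [hpA] using by omega⟩ :
          {y : M // trank y ≤ n / 4}), p.1.2.2)) := by
      intro a b h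
      simp only [Prod.mk.injEq, Subtype.mk.injEq] at h
      apply Subtype.ext
      exact Prod.ext h.1 (Prod.ext h.2.1 h.2.2)
    calc Fintype.card {p : M × M × M // pA p}
        ≤ Fintype.card (M × {y : M // trank y ≤ n / 4} × M) :=
          Fintype.card_le_of_injective _ hinj
      _ ≤ n ^ n * (2 ^ n * (n / 4) ^ n) * n ^ n := by
          rw [Fintype.card_prod, Fintype.card_prod]
          have hY : Fintype.card {y : M // trank y ≤ n / 4} ≤ 2 ^ n * (n / 4) ^ n := by
            rw [Fintype.card_subtype]
            exact my_card_smallrank n (n / 4)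
          calc Fintype.card M * (Fintype.card {y : M // trank y ≤ n / 4} * Fintype.card M)
              ≤ Fintype.card M * ((2 ^ n * (n / 4) ^ n) * Fintype.card M) :=
                Nat.mul_le_mul_left _ (Nat.mul_le_mul_right _ hY)
            _ = n ^ n * (2 ^ n * (n / 4) ^ n) * n ^ n := by rw [hMcard]; ring
  -- step 3 : B count, fiberwise over (x,y)
  have hBcount : (((univ : Finset (M × M × M)).filter pB).card : ℝ) ≤
      ((n:ℝ) ^ n * (n:ℝ) ^ n) * (2 * myrho ^ n * (n:ℝ) ^ n) := by
    have hfib : ((univ : Finset (M × M × M)).filter pB).card =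
        ∑ q ∈ (univ : Finset (M × M)),
          (((univ : Finset (M × M × M)).filter pB).filter
            (fun p => (p.1, p.2.1) = q)).card :=
      Finset.card_eq_sum_card_fiberwise (fun p _ => mem_univ _)
    have hfiber : ∀ q : M × M,
        ((((univ : Finset (M × M × M)).filter pB).filter (fun p => (p.1, p.2.1) = q)).card : ℝ)
          ≤ 2 * myrho ^ n * (n:ℝ) ^ n := by
      intro q
      set S : Finset (Fin n) := univ.image (q.2 ∘ q.1) with hS
      have step1 : (((univ : Finset (M × M × M)).filter pB).filter
          (fun p => (p.1, p.2.1) = q)).card ≤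
          ((univ : Finset M).filter
            (fun z => n < 4 * S.card ∧ Set.InjOn z ↑S)).card := by
        apply Finset.card_le_card_of_injOn (fun p => p.2.2)
        · intro p hp
          simp only [mem_coe, mem_filter, mem_univ, true_and] at hp ⊢
          obtain ⟨hpB', hq⟩ := hp
          have e1 : p.1 = q.1 := congrArg Prod.fst hq
          have e2 : p.2.1 = q.2 := congrArg Prod.snd hq
          rw [hS, ← e1, ← e2]
          exact hpB'
        · intro p hp p' hp' hzz
          simp only [coe_filter, Set.mem_setOf_eq, mem_filter] at hp hp'
          have hq := hp.2
          have hq' := hp'.2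
          have e1 : p.1 = p'.1 := by
            have := congrArg Prod.fst hq
            have := congrArg Prod.fst hq'
            simp_all
          have e2 : p.2.1 = p'.2.1 := by
            have := congrArg Prod.snd hq
            have := congrArg Prod.snd hq'
            simp_all
          exact Prod.ext e1 (Prod.ext e2 hzz)
      by_cases hc : n < 4 * S.card
      · have hr : S.card ≤ n := le_trans (card_le_univ S) (by simp)
        have step2 : ((univ : Finset M).filter
            (fun z => n < 4 * S.card ∧ Set.InjOn z ↑S)).card ≤
            Fintype.card {z : M // Set.InjOn z ↑S} := by
          rw [Fintype.card_subtype]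
          apply card_le_card
          intro z hz
          simp only [mem_filter, mem_univ, true_and] at hz ⊢
          exact hz.2
        have step3 := my_card_injOn n S
        have hcast : ((n.descFactorial S.card * n ^ (n - S.card) : ℕ) : ℝ)
            = (n.descFactorial S.card : ℝ) * (n:ℝ) ^ (n - S.card) := by push_cast; ring
        have step4 : (n.descFactorial S.card : ℝ) * (n:ℝ) ^ (n - S.card) ≤
            (7/8 : ℝ) ^ (S.card - (n+7)/8) * (n:ℝ) ^ n := by
          have hd := my_descFact_le n S.card hc
          have hnn : (0:ℝ) ≤ (n:ℝ) ^ (n - S.card) := by positivity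
          calc (n.descFactorial S.card : ℝ) * (n:ℝ) ^ (n - S.card)
              ≤ ((7/8 : ℝ) ^ (S.card - (n+7)/8) * (n:ℝ) ^ S.card) * (n:ℝ) ^ (n - S.card) :=
                mul_le_mul_of_nonneg_right hd hnn
            _ = (7/8 : ℝ) ^ (S.card - (n+7)/8) * (n:ℝ) ^ (S.card + (n - S.card)) := by
                rw [pow_add]; ring
            _ = (7/8 : ℝ) ^ (S.card - (n+7)/8) * (n:ℝ) ^ n := by
                rw [Nat.add_sub_cancel' hr]
        have step5 : (7/8 : ℝ) ^ (S.card - (n+7)/8) * (n:ℝ) ^ n ≤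
            2 * myrho ^ n * (n:ℝ) ^ n := by
          have h78 := my_pow78 n (S.card - (n+7)/8) (by omega)
          have hnn : (0:ℝ) ≤ (n:ℝ) ^ n := by positivity
          calc (7/8 : ℝ) ^ (S.card - (n+7)/8) * (n:ℝ) ^ n
              ≤ (2 * myrho ^ n) * (n:ℝ) ^ n := mul_le_mul_of_nonneg_right h78 hnn
            _ = 2 * myrho ^ n * (n:ℝ) ^ n := by ring
        calc ((((univ : Finset (M × M × M)).filter pB).filter
              (fun p => (p.1, p.2.1) = q)).card : ℝ)
            ≤ (Fintype.card {z : M // Set.InjOn z ↑S} : ℝ) := by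
              exact_mod_cast le_trans step1 step2
          _ ≤ ((n.descFactorial S.card * n ^ (n - S.card) : ℕ) : ℝ) := by exact_mod_cast step3
          _ ≤ 2 * myrho ^ n * (n:ℝ) ^ n := by rw [hcast]; exact le_trans step4 step5
      · have hzero : ((univ : Finset M).filter
            (fun z => n < 4 * S.card ∧ Set.InjOn z ↑S)).card = 0 := by
          rw [Finset.card_eq_zero, Finset.filter_eq_empty_iff]
          intro z _
          exact fun hh => hc hh.1
        have : (((univ : Finset (M × M × M)).filter pB).filter
            (fun p => (p.1, p.2.1) = q)).card = 0 := by omega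
        rw [this]
        have : (0:ℝ) ≤ 2 * myrho ^ n * (n:ℝ) ^ n := by
          have := myrho_pos
          positivity
        simpa using this
    have hMM : ((univ : Finset (M × M)).card : ℝ) = (n:ℝ) ^ n * (n:ℝ) ^ n := by
      rw [card_univ, Fintype.card_prod, hMcard]
      push_cast; ring
    calc (((univ : Finset (M × M × M)).filter pB).card : ℝ)
        = ∑ q ∈ (univ : Finset (M × M)),
            ((((univ : Finset (M × M × M)).filter pB).filter
              (fun p => (p.1, p.2.1) = q)).card : ℝ) := by
          rw [hfib]; push_cast; ring
      _ ≤ ∑ q ∈ (univ : Finset (M × M)), (2 * myrho ^ n * (n:ℝ) ^ n) :=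
          Finset.sum_le_sum (fun q _ => hfiber q)
      _ = ((univ : Finset (M × M)).card : ℝ) * (2 * myrho ^ n * (n:ℝ) ^ n) := by
          rw [sum_const, nsmul_eq_mul]
      _ = ((n:ℝ) ^ n * (n:ℝ) ^ n) * (2 * myrho ^ n * (n:ℝ) ^ n) := by rw [hMM]
  -- step 4 : assemble
  have hNat : (Nat.card {p : M × M × M // Pred p} : ℝ) =
      (((univ : Finset (M × M × M)).filter Pred).card : ℝ) := by
    rw [Nat.card_eq_fintype_card, Fintype.card_subtype]
  have hsplit : ((univ : Finset (M × M × M)).filter Pred).card ≤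
      ((univ : Finset (M × M × M)).filter pA).card +
      ((univ : Finset (M × M × M)).filter pB).card :=
    le_trans (card_le_card hsub) (card_union_le _ _)
  have hApart : (((univ : Finset (M × M × M)).filter pA).card : ℝ) ≤
      myrho ^ n * (n:ℝ) ^ (3 * n) := by
    have h1 : (((univ : Finset (M × M × M)).filter pA).card : ℝ) ≤
        ((n ^ n * (2 ^ n * (n / 4) ^ n) * n ^ n : ℕ) : ℝ) := by exact_mod_cast hAcount
    refine le_trans h1 ?_
    push_cast
    have h2 : ((n / 4 : ℕ) : ℝ) ≤ (n:ℝ) / 4 := Nat.cast_div_le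
    have h3 : ((n / 4 : ℕ) : ℝ) ^ n ≤ ((n:ℝ) / 4) ^ n :=
      pow_le_pow_left₀ (by positivity) h2 n
    have h4 : (2:ℝ) ^ n * ((n:ℝ) / 4) ^ n = (1/2:ℝ) ^ n * (n:ℝ) ^ n := by
      rw [← mul_pow, ← mul_pow]; congr 1; ring
    have h5 : (1/2:ℝ) ^ n ≤ myrho ^ n := pow_le_pow_left₀ (by norm_num) half_le_myrho n
    have h6 : (n:ℝ) ^ (3 * n) = (n:ℝ) ^ n * (n:ℝ) ^ n * (n:ℝ) ^ n := by
      rw [show 3 * n = n + n + n by ring, pow_add, pow_add]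
    have hnn : (0:ℝ) ≤ (n:ℝ) ^ n := by positivity
    calc (n:ℝ) ^ n * ((2:ℝ) ^ n * ((n / 4 : ℕ) : ℝ) ^ n) * (n:ℝ) ^ n
        ≤ (n:ℝ) ^ n * ((2:ℝ) ^ n * ((n:ℝ) / 4) ^ n) * (n:ℝ) ^ n := by
          have : (2:ℝ) ^ n * ((n / 4 : ℕ) : ℝ) ^ n ≤ (2:ℝ) ^ n * ((n:ℝ) / 4) ^ n :=
            mul_le_mul_of_nonneg_left h3 (by positivity)
          exact mul_le_mul_of_nonneg_right (mul_le_mul_of_nonneg_left this hnn) hnn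
      _ = (1/2:ℝ) ^ n * ((n:ℝ) ^ n * (n:ℝ) ^ n * (n:ℝ) ^ n) := by rw [h4]; ring
      _ ≤ myrho ^ n * ((n:ℝ) ^ n * (n:ℝ) ^ n * (n:ℝ) ^ n) :=
          mul_le_mul_of_nonneg_right h5 (by positivity)
      _ = myrho ^ n * (n:ℝ) ^ (3 * n) := by rw [h6]
  have hBpart : (((univ : Finset (M × M × M)).filter pB).card : ℝ) ≤
      2 * myrho ^ n * (n:ℝ) ^ (3 * n) := by
    refine le_trans hBcount ?_
    have h6 : (n:ℝ) ^ (3 * n) = (n:ℝ) ^ n * (n:ℝ) ^ n * (n:ℝ) ^ n := by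
      rw [show 3 * n = n + n + n by ring, pow_add, pow_add]
    rw [h6]; ring_nf; exact le_refl _
  have hfinal : (Nat.card {p : M × M × M // Pred p} : ℝ) ≤
      3 * myrho ^ n * (n:ℝ) ^ (3 * n) := by
    rw [hNat]
    have : (((univ : Finset (M × M × M)).filter Pred).card : ℝ) ≤
        (((univ : Finset (M × M × M)).filter pA).card : ℝ) +
        (((univ : Finset (M × M × M)).filter pB).card : ℝ) := by exact_mod_cast hsplit
    refine le_trans this ?_
    calc _ ≤ myrho ^ n * (n:ℝ) ^ (3 * n) + 2 * myrho ^ n * (n:ℝ) ^ (3 * n) :=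
          add_le_add hApart hBpart
      _ = 3 * myrho ^ n * (n:ℝ) ^ (3 * n) := by ring
  refine le_trans hfinal ?_
  have h7 : (1:ℝ) ≤ (n:ℝ) ^ 5 := one_le_pow₀ (by exact_mod_cast hn)
  have h8 : (0:ℝ) ≤ 3 * myrho ^ n * (n:ℝ) ^ (3 * n) := by
    have := myrho_pos
    positivity
  nlinarith [h8, h7]
end
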